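/- arXiv:1603.03653 — 4 statements merged into one kernel-verified Lean document; each statement's English description precedes it below -/
import Mathlib

section
/- The number of plane trees with l edges and k leaves equals the Narayana number N(l,k) = (1/l) * C(l,k) * C(l,k-1). -/
/-- A plane tree: a root together with a linearly ordered (possibly empty) list of subtrees. -/
inductive PlaneTree where
  | node : List PlaneTree → PlaneTree

namespace PlaneTree

/-- Number of edges of a plane tree. -/
def edges : PlaneTree → ℕ
  | node cs => cs.length + (cs.attach.map (fun c => edges c.1)).sum
  decreasing_by
    have := List.sizeOf_lt_of_mem c.2
    simp only [PlaneTree.node.sizeOf_spec]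
    omega

/-- Number of vertices with no children (counting the root if childless). -/
def childlessCount : PlaneTree → ℕ
  | node [] => 1
  | node (c :: cs) => ((c :: cs).attach.map (fun d => childlessCount d.1)).sum
  decreasing_by
    have := List.sizeOf_lt_of_mem d.2
    simp only [PlaneTree.node.sizeOf_spec]
    omega

/-- Number of leaves: non-root vertices with no children. -/
def leaves : PlaneTree → ℕ
  | node cs => (cs.attach.map (fun c => childlessCount c.1)).sum

end PlaneTree

namespace NarayanaAux

open PlaneTree

/-- Strong induction principle for plane trees. -/
theorem tree_ind (P : PlaneTree → Prop)
    (h : ∀ cs : List PlaneTree, (∀ c ∈ cs, P c) → P (.node cs)) : ∀ t, P t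
  | .node cs => h cs (fun c hc => tree_ind P h c)
  decreasing_by
    have := List.sizeOf_lt_of_mem hc
    simp only [PlaneTree.node.sizeOf_spec]
    omega

/-- Łukasiewicz encoding of a plane tree. -/
def encode : PlaneTree → List ℕ
  | .node cs => cs.length :: (cs.attach.map (fun c => encode c.1)).flatten
  decreasing_by
    have := List.sizeOf_lt_of_mem c.2
    simp only [PlaneTree.node.sizeOf_spec]
    omega

/-- Łukasiewicz encoding of a forest. -/
def encodeF (cs : List PlaneTree) : List ℕ := (cs.map encode).flatten

lemma encode_node (cs : List PlaneTree) :
    encode (.node cs) = cs.length :: encodeF cs := by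
  rw [encode, encodeF, List.attach_map_val]

lemma edges_node (cs : List PlaneTree) :
    (PlaneTree.node cs).edges = cs.length + (cs.map edges).sum := by
  rw [PlaneTree.edges, List.attach_map_val]

lemma childless_nil : (PlaneTree.node []).childlessCount = 1 := by
  rw [PlaneTree.childlessCount]

lemma childless_cons (c : PlaneTree) (cs : List PlaneTree) :
    (PlaneTree.node (c :: cs)).childlessCount = ((c :: cs).map childlessCount).sum := by
  rw [PlaneTree.childlessCount, List.attach_map_val]

lemma leaves_node (cs : List PlaneTree) :
    (PlaneTree.node cs).leaves = (cs.map childlessCount).sum := by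
  rw [PlaneTree.leaves, List.attach_map_val]

lemma encodeF_nil : encodeF [] = [] := rfl

lemma encodeF_cons (c : PlaneTree) (cs : List PlaneTree) :
    encodeF (c :: cs) = encode c ++ encodeF cs := by
  simp [encodeF]

lemma encodeF_append (a b : List PlaneTree) :
    encodeF (a ++ b) = encodeF a ++ encodeF b := by
  simp [encodeF]

lemma sum_map_add_one (cs : List PlaneTree) (f : PlaneTree → ℕ) :
    (cs.map (fun c => f c + 1)).sum = (cs.map f).sum + cs.length := by
  induction cs with
  | nil => simp
  | cons c cs ih => simp [ih]; omega

lemma encode_length : ∀ t : PlaneTree, (encode t).length = t.edges + 1 := by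
  refine tree_ind _ ?_
  intro cs ih
  rw [encode_node, edges_node]
  simp only [List.length_cons, encodeF, List.length_flatten, List.map_map]
  have : (cs.map (List.length ∘ encode)) = cs.map (fun c => c.edges + 1) :=
    List.map_congr_left (fun c hc => by simp [ih c hc])
  rw [this, sum_map_add_one]
  omega

lemma encode_sum : ∀ t : PlaneTree, (encode t).sum = t.edges := by
  refine tree_ind _ ?_
  intro cs ih
  rw [encode_node, edges_node]
  simp only [List.sum_cons, encodeF, List.sum_flatten, List.map_map]
  have : (cs.map (List.sum ∘ encode)) = cs.map edges :=
    List.map_congr_left (fun c hc => by simp [ih c hc])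
  rw [this]

lemma encode_count : ∀ t : PlaneTree, (encode t).count 0 = t.childlessCount := by
  refine tree_ind _ ?_
  intro cs ih
  cases cs with
  | nil => simp [encode_node, encodeF, childless_nil]
  | cons c cs =>
    rw [encode_node, childless_cons]
    rw [List.count_cons]
    simp only [List.length_cons, encodeF, List.count_flatten, List.map_map]
    have : ((c :: cs).map (List.count 0 ∘ encode)) = (c :: cs).map childlessCount :=
      List.map_congr_left (fun d hd => by simp [ih d hd])
    rw [this]
    simp

lemma childless_eq_leaves {t : PlaneTree} (ht : 1 ≤ t.edges) :
    t.childlessCount = t.leaves := by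
  obtain ⟨cs⟩ := t
  cases cs with
  | nil => simp [edges_node] at ht
  | cons c cs => rw [childless_cons, leaves_node]

/-! ### Łukasiewicz words -/

/-- Sum of the first `j` entries. -/
def pre (w : List ℕ) (j : ℕ) : ℕ := (w.take j).sum

/-- `w` is the Łukasiewicz word of a forest of `m` trees. -/
def Good (m : ℕ) (w : List ℕ) : Prop :=
  w.sum + m = w.length ∧ ∀ j < w.length, j < pre w j + m

lemma good_nil : Good 0 [] := ⟨rfl, by simp⟩

lemma good_zero {w : List ℕ} (h : Good 0 w) : w = [] := by
  cases w with
  | nil => rfl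
  | cons a u => exact absurd (h.2 0 (by simp)) (by simp [pre])

lemma good_append {m m' : ℕ} {u v : List ℕ} (hu : Good m u) (hv : Good m' v) :
    Good (m + m') (u ++ v) := by
  obtain ⟨hu1, hu2⟩ := hu
  obtain ⟨hv1, hv2⟩ := hv
  constructor
  · simp only [List.sum_append, List.length_append]; omega
  · intro j hj
    rcases lt_or_ge j u.length with h | h
    · have h2 := hu2 j h
      have hp : pre (u ++ v) j = pre u j := by
        unfold pre
        rw [List.take_append, Nat.sub_eq_zero_of_le (le_of_lt h)]
        simp
      omega
    · have hv' : j - u.length < v.length := by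
        simp only [List.length_append] at hj; omega
      have h2 := hv2 (j - u.length) hv'
      have hp : pre (u ++ v) j = u.sum + pre v (j - u.length) := by
        unfold pre
        rw [List.take_append, List.take_of_length_le h]
        simp
      omega

lemma good_cons {d : ℕ} {u : List ℕ} (h : Good d u) : Good 1 (d :: u) := by
  obtain ⟨h1, h2⟩ := h
  constructor
  · simp only [List.sum_cons, List.length_cons]; omega
  · intro j hj
    cases j with
    | zero => simp [pre]
    | succ j' =>
      simp only [List.length_cons, Nat.succ_lt_succ_iff] at hj
      have h3 := h2 j' hj
      have hp : pre (d :: u) (j' + 1) = d + pre u j' := by simp [pre]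
      omega

lemma good_tail {m d : ℕ} {u : List ℕ} (h : Good m (d :: u)) : Good (m + d - 1) u := by
  obtain ⟨h1, h2⟩ := h
  have hm : 1 ≤ m := by
    have h0 := h2 0 (by simp)
    simp [pre] at h0; omega
  simp only [List.sum_cons, List.length_cons] at h1
  constructor
  · omega
  · intro j hj
    have h3 := h2 (j + 1) (by simp only [List.length_cons]; omega)
    have hp : pre (d :: u) (j + 1) = d + pre u j := by simp [pre]
    omega

lemma good_encodeF_of (cs : List PlaneTree) (h : ∀ c ∈ cs, Good 1 (encode c)) :
    Good cs.length (encodeF cs) := by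
  induction cs with
  | nil => exact good_nil
  | cons c cs ih =>
    rw [encodeF_cons]
    have := good_append (h c (by simp)) (ih (fun d hd => h d (by simp [hd])))
    simpa [Nat.add_comm] using this

lemma good_encode : ∀ t : PlaneTree, Good 1 (encode t) := by
  refine tree_ind _ ?_
  intro cs ih
  rw [encode_node]
  exact good_cons (good_encodeF_of cs ih)

lemma good_encodeF (cs : List PlaneTree) : Good cs.length (encodeF cs) :=
  good_encodeF_of cs (fun c _ => good_encode c)

/-- Parsing: every good word is the encoding of a forest. -/
lemma parse : ∀ (N : ℕ) (w : List ℕ), w.length ≤ N → ∀ m, Good m w →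
    ∃ cs : List PlaneTree, cs.length = m ∧ encodeF cs = w := by
  intro N
  induction N with
  | zero =>
    intro w hw m hg
    have : w = [] := List.length_eq_zero_iff.mp (Nat.le_zero.mp hw)
    subst this
    have : m = 0 := by have := hg.1; simpa using this
    exact ⟨[], by simp [this, encodeF_nil]⟩
  | succ N ih =>
    intro w hw m hg
    cases w with
    | nil =>
      have : m = 0 := by have := hg.1; simpa using this
      exact ⟨[], by simp [this, encodeF_nil]⟩
    | cons d u =>
      have hm : 1 ≤ m := by
        have h0 := hg.2 0 (by simp)
        simp [pre] at h0; omega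
      have hgu : Good (m + d - 1) u := good_tail hg
      obtain ⟨cs, hlen, henc⟩ := ih u (by
        simp only [List.length_cons] at hw; omega) _ hgu
      have hd : d ≤ cs.length := by omega
      refine ⟨PlaneTree.node (cs.take d) :: cs.drop d, ?_, ?_⟩
      · simp only [List.length_cons, List.length_drop]; omega
      · rw [encodeF_cons, encode_node]
        have ht : (cs.take d).length = d := by
          rw [List.length_take]; omega
        rw [ht]
        have : encodeF (cs.take d) ++ encodeF (cs.drop d) = encodeF cs := by
          rw [← encodeF_append, List.take_append_drop]
        simp [this, henc]

/-- Unique parsing of forests with remainder. -/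
lemma forest_inj (cs : List PlaneTree)
    (ih : ∀ c ∈ cs, ∀ (t' : PlaneTree) (r r' : List ℕ),
      encode c ++ r = encode t' ++ r' → c = t' ∧ r = r') :
    ∀ (cs' : List PlaneTree) (r r' : List ℕ), cs.length = cs'.length →
      encodeF cs ++ r = encodeF cs' ++ r' → cs = cs' ∧ r = r' := by
  induction cs with
  | nil =>
    intro cs' r r' hlen heq
    cases cs' with
    | nil => simpa [encodeF_nil] using heq
    | cons c' cs' => simp at hlen
  | cons c cs ihl =>
    intro cs' r r' hlen heq
    cases cs' with
    | nil => simp at hlen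
    | cons c' cs' =>
      rw [encodeF_cons, encodeF_cons] at heq
      rw [List.append_assoc, List.append_assoc] at heq
      obtain ⟨hc, hrest⟩ := ih c (by simp) c' _ _ heq
      obtain ⟨hcs, hr⟩ := ihl (fun d hd => ih d (by simp [hd])) cs' r r'
        (by simpa using hlen) hrest
      exact ⟨by rw [hc, hcs], hr⟩

lemma encode_inj_rem : ∀ (t t' : PlaneTree) (r r' : List ℕ),
    encode t ++ r = encode t' ++ r' → t = t' ∧ r = r' := by
  refine tree_ind _ ?_
  intro cs ih t' r r' heq
  obtain ⟨cs'⟩ := t'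
  rw [encode_node, encode_node] at heq
  simp only [List.cons_append, List.cons.injEq] at heq
  obtain ⟨hlen, heq⟩ := heq
  obtain ⟨hcs, hr⟩ := forest_inj cs ih cs' r r' hlen heq
  exact ⟨by rw [hcs], hr⟩

lemma encode_injective : Function.Injective encode := by
  intro t t' h
  exact (encode_inj_rem t t' [] [] (by simp [h])).1

/-! ### Rotation and the cycle lemma -/

/-- Integer height function of a word. -/
def H (w : List ℕ) (j : ℕ) : ℤ := (pre w j : ℤ) - j

lemma pre_zero (w : List ℕ) : pre w 0 = 0 := by simp [pre]

lemma H_zero (w : List ℕ) : H w 0 = 0 := by simp [H, pre_zero]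

lemma pre_rotate_low (w : List ℕ) {r m : ℕ} (hr : r ≤ w.length) (hm : m ≤ w.length - r) :
    pre w r + pre (w.rotate r) m = pre w (r + m) := by
  rw [List.rotate_eq_drop_append_take hr]
  unfold pre
  rw [List.take_append]
  have h1 : m - (w.drop r).length = 0 := by
    simp only [List.length_drop]; omega
  rw [h1]
  simp only [List.take_zero, List.append_nil]
  rw [List.take_add]
  simp [List.sum_append]

lemma pre_rotate_high (w : List ℕ) {r m : ℕ} (hr : r ≤ w.length)
    (hm : w.length - r ≤ m) (hm2 : m ≤ w.length) :
    pre (w.rotate r) m + pre w r = w.sum + pre w (m - (w.length - r)) := by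
  rw [List.rotate_eq_drop_append_take hr]
  unfold pre
  rw [List.take_append]
  rw [List.take_of_length_le (by simp only [List.length_drop]; omega : (w.drop r).length ≤ m)]
  have h1 : (w.drop r).length = w.length - r := by simp
  rw [h1, List.take_take]
  have h2 : min (m - (w.length - r)) r = m - (w.length - r) := by omega
  rw [h2]
  simp only [List.sum_append]
  have h3 : (w.take r).sum + (w.drop r).sum = w.sum := by
    rw [← List.sum_append, List.take_append_drop]
  omega

lemma good_rotate_iff (w : List ℕ) (hs : w.sum + 1 = w.length) {r : ℕ} (hr : r < w.length) :
    Good 1 (w.rotate r) ↔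
      (∀ m, r ≤ m → m < w.length → H w r ≤ H w m) ∧ (∀ t, t < r → H w r + 1 ≤ H w t) := by
  have hlen : (w.rotate r).length = w.length := List.length_rotate w r
  have hsum : (w.rotate r).sum = w.sum := (List.rotate_perm w r).sum_eq
  constructor
  · rintro ⟨-, h2⟩
    constructor
    · intro m hrm hm
      have hj := h2 (m - r) (by omega)
      have hlow := pre_rotate_low w (le_of_lt hr) (by omega : m - r ≤ w.length - r)
      have hrm' : r + (m - r) = m := by omega
      rw [hrm'] at hlow
      simp only [H]
      omega
    · intro t ht
      have hj := h2 (w.length - r + t) (by omega)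
      have hhigh := pre_rotate_high w (le_of_lt hr)
        (by omega : w.length - r ≤ w.length - r + t) (by omega)
      have ht' : w.length - r + t - (w.length - r) = t := by omega
      rw [ht'] at hhigh
      simp only [H]
      omega
  · rintro ⟨hA, hB⟩
    refine ⟨by omega, ?_⟩
    intro j hj
    rw [hlen] at hj
    rcases le_or_gt j (w.length - r) with h | h
    · rcases lt_or_ge (r + j) w.length with h' | h'
      · have := hA (r + j) (by omega) h'
        have hlow := pre_rotate_low w (le_of_lt hr) h
        simp only [H] at this
        omega
      · -- j = w.length - r, r ≥ 1
        have hj' : j = w.length - r := by omega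
        have hr1 : 1 ≤ r := by omega
        have hlow := pre_rotate_low w (le_of_lt hr) h
        have hB0 := hB 0 (by omega)
        rw [H_zero] at hB0
        simp only [H] at hB0
        have hpl : pre w (r + j) = w.sum := by
          have : r + j = w.length := by omega
          rw [this]; simp [pre]
        omega
    · have hhigh := pre_rotate_high w (r := r) (m := j) (le_of_lt hr) (by omega) (by omega)
      have hBt := hB (j - (w.length - r)) (by omega)
      simp only [H] at hBt
      omega

/-- The cycle lemma: every word with `sum + 1 = length` has a unique rotation which is
the Łukasiewicz word of a tree. -/
lemma exists_unique_good_rotate (w : List ℕ) (hs : w.sum + 1 = w.length) :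
    ∃! r, r < w.length ∧ Good 1 (w.rotate r) := by
  classical
  have hn : 0 < w.length := by omega
  have hex : ∃ j, j < w.length ∧ ∀ m < w.length, H w j ≤ H w m := by
    obtain ⟨x, hx, hmin⟩ := Finset.exists_min_image (Finset.range w.length) (H w)
      ⟨0, by simpa using hn⟩
    exact ⟨x, by simpa using hx, fun m hm => hmin m (by simpa using hm)⟩
  obtain ⟨hrlt, hrmin⟩ := Nat.find_spec hex
  set r := Nat.find hex with hrdef
  refine ⟨r, ⟨hrlt, ?_⟩, ?_⟩
  · rw [good_rotate_iff w hs hrlt]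
    refine ⟨fun m _ hm => hrmin m hm, ?_⟩
    intro t ht
    have hnot := Nat.find_min hex ht
    push_neg at hnot
    have htlt : t < w.length := by omega
    obtain ⟨m, hm, hlt⟩ := hnot htlt
    have h1 := hrmin m hm
    have h2 : H w r < H w t := by
      by_contra hcon
      push_neg at hcon
      have := hrmin t htlt
      omega
    omega
  · rintro r' ⟨hr'lt, hg'⟩
    rw [good_rotate_iff w hs hr'lt] at hg'
    rcases lt_trichotomy r' r with h | h | h
    · exfalso
      have h1 : H w r' ≤ H w r := hg'.1 r (le_of_lt h) hrlt
      have hfind := Nat.find_min hex h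
      push_neg at hfind
      obtain ⟨m, hm, hlt⟩ := hfind hr'lt
      have := hrmin m hm
      omega
    · exact h
    · exfalso
      have h1 := hg'.2 r h
      have h2 := hrmin r' hr'lt
      omega

/-! ### Transfer from trees to words, and rotation counting -/

/-- Plane trees with `l` edges and `k` leaves. -/
abbrev TreeSub (l k : ℕ) := {t : PlaneTree // t.edges = l ∧ t.leaves = k}

/-- Łukasiewicz words of such trees. -/
abbrev VT (l k : ℕ) := {w : List ℕ // Good 1 w ∧ w.length = l + 1 ∧ w.count 0 = k}

/-- All words of length `l+1`, sum `l`, with `k` zero entries. -/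
abbrev ST (l k : ℕ) := {w : List ℕ // w.length = l + 1 ∧ w.sum = l ∧ w.count 0 = k}

lemma card_tree_eq_card_VT (l k : ℕ) (hl : 1 ≤ l) :
    Nat.card (TreeSub l k) = Nat.card (VT l k) := by
  apply Nat.card_congr
  refine Equiv.ofBijective (fun t : TreeSub l k =>
    (⟨encode t.1, good_encode t.1, by rw [encode_length, t.2.1], by
      rw [encode_count, childless_eq_leaves (show 1 ≤ t.1.edges by rw [t.2.1]; exact hl), t.2.2]⟩
      : VT l k)) ⟨?_, ?_⟩
  · intro t t' h
    have h' : encode t.1 = encode t'.1 := congrArg Subtype.val h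
    exact Subtype.ext (encode_injective h')
  · rintro ⟨w, hg, hlen, hcount⟩
    obtain ⟨cs, hcslen, henc⟩ := parse w.length w le_rfl 1 hg
    obtain ⟨c, rfl⟩ := List.length_eq_one_iff.mp hcslen
    have henc' : encode c = w := by simpa [encodeF_cons, encodeF_nil] using henc
    have hedge : c.edges = l := by
      have hl2 := encode_length c
      rw [henc', hlen] at hl2
      omega
    have hleav : c.leaves = k := by
      have hc := encode_count c
      rw [henc', hcount] at hc
      have := childless_eq_leaves (show 1 ≤ c.edges by omega)
      omega
    exact ⟨⟨c, hedge, hleav⟩, Subtype.ext henc'⟩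

lemma rotate_back {α : Type*} (w : List α) {r : ℕ} (hr : r ≤ w.length) :
    (w.rotate r).rotate (w.length - r) = w := by
  rw [List.rotate_rotate]
  have h : r + (w.length - r) = w.length := by omega
  rw [h, List.rotate_length]

lemma card_ST_eq (l k : ℕ) : Nat.card (ST l k) = (l + 1) * Nat.card (VT l k) := by
  have hbij : Function.Bijective (fun p : Fin (l + 1) × VT l k =>
      (⟨p.2.1.rotate p.1.1, by rw [List.length_rotate]; exact p.2.2.2.1, by
          rw [(List.rotate_perm _ _).sum_eq]
          have h1 := p.2.2.1.1
          have h2 := p.2.2.2.1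
          omega, by
          rw [(List.rotate_perm _ _).count_eq]; exact p.2.2.2.2⟩ : ST l k)) := by
    constructor
    · rintro ⟨r, v⟩ ⟨r', v'⟩ h
      have h' : v.1.rotate r.1 = v'.1.rotate r'.1 := congrArg Subtype.val h
      set w := v.1.rotate r.1 with hw
      have hvlen : v.1.length = l + 1 := v.2.2.1
      have hv'len : v'.1.length = l + 1 := v'.2.2.1
      have hwlen : w.length = l + 1 := by rw [hw, List.length_rotate]; exact hvlen
      have hwsum : w.sum + 1 = w.length := by
        rw [hw, (List.rotate_perm _ _).sum_eq, List.length_rotate]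
        exact v.2.1.1
      obtain ⟨s, -, huniq⟩ := exists_unique_good_rotate w hwsum
      -- index for v
      have key : ∀ (r : Fin (l + 1)) (v : VT l k), v.1.rotate r.1 = w →
          w.rotate (if r.1 = 0 then 0 else l + 1 - r.1) = v.1 ∧
            (if r.1 = 0 then 0 else l + 1 - r.1) < l + 1 := by
        rintro r v hrot
        refine ⟨?_, by split <;> omega⟩
        by_cases h0 : r.1 = 0
        · rw [if_pos h0, ← hrot, h0, List.rotate_zero, List.rotate_zero]
        · rw [if_neg h0, ← hrot]
          have hb := rotate_back v.1 (show r.1 ≤ v.1.length by rw [v.2.2.1]; exact le_of_lt r.2)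
          rw [v.2.2.1] at hb
          exact hb
      obtain ⟨hrb, hrblt⟩ := key r v rfl
      obtain ⟨hrb', hrblt'⟩ := key r' v' h'.symm
      have hgood : Good 1 (w.rotate (if r.1 = 0 then 0 else l + 1 - r.1)) := by
        rw [hrb]; exact v.2.1
      have hgood' : Good 1 (w.rotate (if r'.1 = 0 then 0 else l + 1 - r'.1)) := by
        rw [hrb']; exact v'.2.1
      have hs1 := huniq _ ⟨by rw [hwlen]; exact hrblt, hgood⟩
      have hs2 := huniq _ ⟨by rw [hwlen]; exact hrblt', hgood'⟩
      have hss : (if r.1 = 0 then 0 else l + 1 - r.1) = (if r'.1 = 0 then 0 else l + 1 - r'.1) := by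
        rw [hs1, hs2]
      have hrr : r.1 = r'.1 := by
        have hx := r.2
        have hx' := r'.2
        split_ifs at hss <;> omega
      have hvv : v.1 = v'.1 := by rw [← hrb, ← hrb', hss]
      exact Prod.ext (Fin.ext hrr) (Subtype.ext hvv)
    · rintro ⟨w, hwlen, hwsum, hwc⟩
      have hw1 : w.sum + 1 = w.length := by omega
      obtain ⟨s, ⟨hslt, hsg⟩, -⟩ := exists_unique_good_rotate w hw1
      refine ⟨(⟨if s = 0 then 0 else l + 1 - s, by split <;> omega⟩,
        ⟨w.rotate s, hsg, by rw [List.length_rotate]; exact hwlen, by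
          rw [(List.rotate_perm _ _).count_eq]; exact hwc⟩), ?_⟩
      apply Subtype.ext
      show (w.rotate s).rotate (if s = 0 then 0 else l + 1 - s) = w
      by_cases h0 : s = 0
      · rw [if_pos h0, h0, List.rotate_zero, List.rotate_zero]
      · rw [if_neg h0]
        have hb := rotate_back w (show s ≤ w.length by omega)
        rw [hwlen] at hb
        exact hb
  rw [← Nat.card_congr (Equiv.ofBijective _ hbij), Nat.card_prod, Nat.card_eq_fintype_card,
    Fintype.card_fin]

/-! ### Counting the words -/

/-- The set of zero positions of a tuple. -/
def zset {n : ℕ} (f : Fin n → ℕ) : Finset (Fin n) := Finset.univ.filter (fun i => f i = 0)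

/-- Tuple version of `ST`. -/
abbrev STt (l k : ℕ) := {f : Fin (l + 1) → ℕ // (∑ i, f i = l) ∧ (zset f).card = k}

lemma count_ofFn {n : ℕ} (f : Fin n → ℕ) (a : ℕ) :
    (List.ofFn f).count a = (Finset.univ.filter (fun i => f i = a)).card := by
  induction n with
  | zero => simp
  | succ n ih =>
    rw [List.ofFn_succ, List.count_cons, ih (fun i => f i.succ)]
    rw [Finset.card_filter, Finset.card_filter, Fin.sum_univ_succ]
    simp only [beq_iff_eq]
    rw [Nat.add_comm]

lemma card_ST_eq_card_STt (l k : ℕ) : Nat.card (ST l k) = Nat.card (STt l k) := by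
  symm
  apply Nat.card_congr
  refine Equiv.ofBijective (fun f : STt l k =>
    (⟨List.ofFn f.1, by simp, by rw [List.sum_ofFn]; exact f.2.1, by
      rw [count_ofFn]; exact f.2.2⟩ : ST l k)) ⟨?_, ?_⟩
  · intro f f' h
    have h' : List.ofFn f.1 = List.ofFn f'.1 := congrArg Subtype.val h
    exact Subtype.ext (List.ofFn_injective h')
  · rintro ⟨w, hlen, hsum, hc⟩
    have hof : List.ofFn (fun i => w.get (Fin.cast hlen.symm i)) = w := by
      apply List.ext_getElem
      · simp [hlen]
      · intro i h1 h2
        rw [List.getElem_ofFn]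
        rfl
    refine ⟨⟨fun i => w.get (Fin.cast hlen.symm i), ?_, ?_⟩, Subtype.ext (by simpa using hof)⟩
    · rw [← List.sum_ofFn (f := fun i => w.get (Fin.cast hlen.symm i)), hof]
      exact hsum
    · simp only [zset]
      rw [← count_ofFn, hof]
      exact hc

/-! ### Counting tuples by zero set -/

noncomputable def ez (l k : ℕ) (z : {z : Finset (Fin (l + 1)) // z.card = k}) :
    {x // x ∈ z.1ᶜ} ≃ Fin (l + 1 - k) :=
  Finset.equivFinOfCardEq (by rw [Finset.card_compl, z.2, Fintype.card_fin])

def phiFun {l k : ℕ} (z : Finset (Fin (l + 1))) (e : {x // x ∈ zᶜ} ≃ Fin (l + 1 - k))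
    (g : Fin (l + 1 - k) → ℕ) : Fin (l + 1) → ℕ :=
  fun i => if h : i ∈ z then 0 else g (e ⟨i, Finset.mem_compl.mpr h⟩) + 1

lemma phiFun_mem {l k : ℕ} (z : Finset (Fin (l + 1))) (e : {x // x ∈ zᶜ} ≃ Fin (l + 1 - k))
    (g : Fin (l + 1 - k) → ℕ) {i : Fin (l + 1)} (hi : i ∈ z) : phiFun z e g i = 0 :=
  dif_pos hi

lemma phiFun_not_mem {l k : ℕ} (z : Finset (Fin (l + 1))) (e : {x // x ∈ zᶜ} ≃ Fin (l + 1 - k))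
    (g : Fin (l + 1 - k) → ℕ) (i : {x // x ∈ zᶜ}) :
    phiFun z e g ↑i = g (e i) + 1 := by
  have h : ¬ ((i : Fin (l + 1)) ∈ z) := Finset.mem_compl.mp i.2
  simp only [phiFun]
  rw [dif_neg h]

lemma phiFun_zset {l k : ℕ} (z : Finset (Fin (l + 1))) (e : {x // x ∈ zᶜ} ≃ Fin (l + 1 - k))
    (g : Fin (l + 1 - k) → ℕ) : zset (phiFun z e g) = z := by
  ext i
  simp only [zset, Finset.mem_filter, Finset.mem_univ, true_and]
  constructor
  · intro h
    by_contra hi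
    simp only [phiFun] at h
    rw [dif_neg hi] at h
    omega
  · intro hi
    exact dif_pos hi

lemma sum_phiFun {l k : ℕ} (hk : 1 ≤ k) (hkl : k ≤ l) (z : Finset (Fin (l + 1))) (hz : z.card = k)
    (e : {x // x ∈ zᶜ} ≃ Fin (l + 1 - k)) (g : Fin (l + 1 - k) → ℕ) (hg : ∑ j, g j = k - 1) :
    ∑ i, phiFun z e g i = l := by
  classical
  rw [← Finset.sum_add_sum_compl z (phiFun z e g)]
  have h1 : ∑ i ∈ z, phiFun z e g i = 0 :=
    Finset.sum_eq_zero (fun i hi => phiFun_mem z e g hi)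
  have h2 : ∑ i ∈ zᶜ, phiFun z e g i = ∑ i : {x // x ∈ zᶜ}, phiFun z e g ↑i :=
    (Finset.sum_coe_sort zᶜ (phiFun z e g)).symm
  have h3 : ∑ i : {x // x ∈ zᶜ}, phiFun z e g ↑i = ∑ i : {x // x ∈ zᶜ}, (g (e i) + 1) :=
    Finset.sum_congr rfl (fun i _ => phiFun_not_mem z e g i)
  have h4 : ∑ i : {x // x ∈ zᶜ}, (g (e i) + 1) = ∑ j, (g j + 1) :=
    Equiv.sum_comp e (fun j => g j + 1)
  have h5 : ∑ j, (g j + 1) = (k - 1) + (l + 1 - k) := by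
    rw [Finset.sum_add_distrib, hg, Finset.sum_const, Finset.card_univ, Fintype.card_fin,
      smul_eq_mul, mul_one]
  rw [h1, h2, h3, h4, h5]
  omega

def gmap (l k : ℕ) (f : STt l k) : {z : Finset (Fin (l + 1)) // z.card = k} := ⟨zset f.1, f.2.2⟩

lemma fiber_bij (l k : ℕ) (hk : 1 ≤ k) (hkl : k ≤ l)
    (z : {z : Finset (Fin (l + 1)) // z.card = k}) :
    Function.Bijective (fun g : {g : Fin (l + 1 - k) → ℕ // ∑ j, g j = k - 1} =>
      (⟨⟨phiFun z.1 (ez l k z) g.1, sum_phiFun hk hkl z.1 z.2 (ez l k z) g.1 g.2, by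
          rw [phiFun_zset]; exact z.2⟩, Subtype.ext (phiFun_zset _ _ _)⟩ :
        {f : STt l k // gmap l k f = z})) := by
  constructor
  · intro g g' h
    have h' : phiFun z.1 (ez l k z) g.1 = phiFun z.1 (ez l k z) g'.1 :=
      congrArg (fun x => x.1.1) h
    apply Subtype.ext; funext j
    have hg := congrFun h' ↑((ez l k z).symm j)
    rw [phiFun_not_mem, phiFun_not_mem, Equiv.apply_symm_apply] at hg
    omega
  · rintro ⟨⟨f, hsum, hcard⟩, hfib⟩
    have hzf : zset f = z.1 := congrArg Subtype.val hfib
    have hf0 : ∀ i ∈ z.1, f i = 0 := by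
      intro i hi
      rw [← hzf] at hi
      simpa [zset] using hi
    have hf1 : ∀ i : {x // x ∈ z.1ᶜ}, 1 ≤ f ↑i := by
      intro i
      have hi := Finset.mem_compl.mp i.2
      have hi2 : ¬ ((i : Fin (l + 1)) ∈ zset f) := by rw [hzf]; exact hi
      simp only [zset, Finset.mem_filter, Finset.mem_univ, true_and] at hi2
      omega
    refine ⟨⟨fun j => f ↑((ez l k z).symm j) - 1, ?_⟩, ?_⟩
    · show (∑ j, (f ↑((ez l k z).symm j) - 1)) = k - 1
      have hsplit : ∑ i ∈ z.1, f i + ∑ i ∈ z.1ᶜ, f i = l := by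
        rw [Finset.sum_add_sum_compl]; exact hsum
      have hz0 : ∑ i ∈ z.1, f i = 0 := Finset.sum_eq_zero hf0
      have hcompl : ∑ i ∈ z.1ᶜ, f i = ∑ j, f ↑((ez l k z).symm j) := by
        rw [← Finset.sum_coe_sort z.1ᶜ f]
        exact (Equiv.sum_comp (ez l k z).symm (fun i : {x // x ∈ z.1ᶜ} => f ↑i)).symm
      have hstep : ∑ j, (f ↑((ez l k z).symm j) - 1 + 1) = ∑ j, f ↑((ez l k z).symm j) :=
        Finset.sum_congr rfl (fun j _ => Nat.sub_add_cancel (hf1 _))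
      rw [Finset.sum_add_distrib, Finset.sum_const, Finset.card_univ, Fintype.card_fin,
        smul_eq_mul, mul_one] at hstep
      omega
    · apply Subtype.ext; apply Subtype.ext
      show phiFun z.1 (ez l k z) _ = f
      funext i
      by_cases hi : i ∈ z.1
      · rw [phiFun_mem _ _ _ hi, hf0 i hi]
      · have hic : i ∈ z.1ᶜ := Finset.mem_compl.mpr hi
        calc phiFun z.1 (ez l k z) (fun j => f ↑((ez l k z).symm j) - 1) i
            = (fun j => f ↑((ez l k z).symm j) - 1) ((ez l k z) ⟨i, hic⟩) + 1 :=
              phiFun_not_mem z.1 (ez l k z) _ ⟨i, hic⟩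
          _ = f i := by
              simp only [Equiv.symm_apply_apply]
              exact Nat.sub_add_cancel (hf1 ⟨i, hic⟩)

/-! ### Stars and bars via `Sym` -/

def compEquivSym (m s : ℕ) : {g : Fin m → ℕ // ∑ j, g j = s} ≃ Sym (Fin m) s where
  toFun g := ⟨∑ i : Fin m, Multiset.replicate (g.1 i) i, by
    have hcs : Multiset.card (∑ i : Fin m, Multiset.replicate (g.1 i) i)
        = ∑ i : Fin m, Multiset.card (Multiset.replicate (g.1 i) i) :=
      Multiset.card_sum _ _
    rw [hcs]
    simp [g.2]⟩
  invFun μ := ⟨fun i => Multiset.count i μ.1, by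
    have h1 : ∑ i ∈ μ.1.toFinset, μ.1.count i = Multiset.card μ.1 :=
      Multiset.toFinset_sum_count_eq μ.1
    have h2 : ∑ i : Fin m, μ.1.count i = ∑ i ∈ μ.1.toFinset, μ.1.count i := by
      symm
      apply Finset.sum_subset (Finset.subset_univ _)
      intro x _ hx
      exact Multiset.count_eq_zero_of_notMem (by simpa using hx)
    rw [h2, h1, μ.2]⟩
  left_inv g := Subtype.ext (funext fun i => by
    simp [Multiset.count_sum', Multiset.count_replicate])
  right_inv μ := Subtype.ext (by
    refine Multiset.ext.mpr (fun a => ?_)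
    simp [Multiset.count_sum', Multiset.count_replicate])

lemma card_comp (m s : ℕ) :
    Nat.card {g : Fin m → ℕ // ∑ j, g j = s} = (m + s - 1).choose s := by
  rw [Nat.card_congr (compEquivSym m s), Nat.card_eq_fintype_card,
    Sym.card_sym_fin_eq_multichoose, Nat.multichoose_eq]

lemma card_STt (l k : ℕ) (hk : 1 ≤ k) (hkl : k ≤ l) :
    Nat.card (STt l k) = (l + 1).choose k * (l - 1).choose (k - 1) := by
  classical
  have e1 : STt l k ≃ ({z : Finset (Fin (l + 1)) // z.card = k} ×
      {g : Fin (l + 1 - k) → ℕ // ∑ j, g j = k - 1}) :=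
    (Equiv.sigmaFiberEquiv (gmap l k)).symm.trans
      ((Equiv.sigmaCongrRight
        (fun z => (Equiv.ofBijective _ (fiber_bij l k hk hkl z)).symm)).trans
        (Equiv.sigmaEquivProd _ _))
  rw [Nat.card_congr e1, Nat.card_prod, card_comp]
  have h1 : Nat.card {z : Finset (Fin (l + 1)) // z.card = k} = (l + 1).choose k := by
    rw [Nat.card_eq_fintype_card, Fintype.card_finset_len, Fintype.card_fin]
  have h2 : l + 1 - k + (k - 1) - 1 = l - 1 := by omega
  rw [h1, h2]

/-! ### The binomial identity -/

lemma key_arith (l k : ℕ) (hk : 1 ≤ k) (hkl : k ≤ l) :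
    l * ((l + 1).choose k * (l - 1).choose (k - 1)) =
      (l + 1) * (l.choose k * l.choose (k - 1)) := by
  obtain ⟨j, rfl⟩ : ∃ j, k = j + 1 := ⟨k - 1, by omega⟩
  obtain ⟨m, rfl⟩ : ∃ m, l = m + 1 := ⟨l - 1, by omega⟩
  obtain ⟨d, rfl⟩ : ∃ d, m = j + d := ⟨m - j, by omega⟩
  simp only [Nat.add_sub_cancel]
  apply Nat.cast_injective (R := ℚ)
  push_cast
  rw [Nat.cast_choose ℚ (show j + 1 ≤ j + d + 1 + 1 by omega),
    Nat.cast_choose ℚ (show j ≤ j + d by omega),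
    Nat.cast_choose ℚ (show j + 1 ≤ j + d + 1 by omega),
    Nat.cast_choose ℚ (show j ≤ j + d + 1 by omega)]
  rw [show j + d + 1 + 1 - (j + 1) = d + 1 by omega,
    show j + d - j = d by omega,
    show j + d + 1 - (j + 1) = d by omega,
    show j + d + 1 - j = d + 1 by omega]
  rw [show (j + d + 1 + 1).factorial = (j + d + 1 + 1) * (j + d + 1).factorial from
      Nat.factorial_succ _,
    show (j + d + 1).factorial = (j + d + 1) * (j + d).factorial from Nat.factorial_succ _,
    show (d + 1).factorial = (d + 1) * d.factorial from Nat.factorial_succ _,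
    show (j + 1).factorial = (j + 1) * j.factorial from Nat.factorial_succ _]
  have h1 : (d.factorial : ℚ) ≠ 0 := Nat.cast_ne_zero.mpr d.factorial_ne_zero
  have h2 : (j.factorial : ℚ) ≠ 0 := Nat.cast_ne_zero.mpr j.factorial_ne_zero
  have h3 : ((j + d).factorial : ℚ) ≠ 0 := Nat.cast_ne_zero.mpr (j + d).factorial_ne_zero
  have h4 : ((d : ℚ) + 1) ≠ 0 := by positivity
  have h5 : ((j : ℚ) + 1) ≠ 0 := by positivity
  push_cast
  field_simp

end NarayanaAux

/-- The number of plane trees with `l` edges and `k` leaves equals the Narayana number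
`N(l,k) = (1/l) · C(l,k) · C(l,k-1)`. -/
theorem planeTree_count_narayana (l k : ℕ) (hk : 1 ≤ k) (hkl : k ≤ l) :
    (Nat.card {t : PlaneTree // t.edges = l ∧ t.leaves = k} : ℚ) =
      (1 / (l : ℚ)) * (l.choose k) * (l.choose (k - 1)) := by
  have hl : 1 ≤ l := le_trans hk hkl
  have hVT : (l + 1) * Nat.card (NarayanaAux.VT l k) =
      (l + 1).choose k * (l - 1).choose (k - 1) := by
    rw [← NarayanaAux.card_ST_eq, NarayanaAux.card_ST_eq_card_STt,
      NarayanaAux.card_STt l k hk hkl]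
  have htree : Nat.card {t : PlaneTree // t.edges = l ∧ t.leaves = k} =
      Nat.card (NarayanaAux.VT l k) := NarayanaAux.card_tree_eq_card_VT l k hl
  set N := Nat.card {t : PlaneTree // t.edges = l ∧ t.leaves = k} with hN
  have hmain : l * N = l.choose k * l.choose (k - 1) := by
    apply Nat.eq_of_mul_eq_mul_left (show 0 < l + 1 by omega)
    calc (l + 1) * (l * N) = l * ((l + 1) * Nat.card (NarayanaAux.VT l k)) := by
          rw [← htree]; ring
      _ = l * ((l + 1).choose k * (l - 1).choose (k - 1)) := by rw [hVT]
      _ = (l + 1) * (l.choose k * l.choose (k - 1)) := NarayanaAux.key_arith l k hk hkl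
  have hq : ((l : ℚ) * N) = (l.choose k : ℚ) * (l.choose (k - 1) : ℚ) := by
    exact_mod_cast congrArg (fun x : ℕ => (x : ℚ)) hmain
  have hl0 : (l : ℚ) ≠ 0 := Nat.cast_ne_zero.mpr (by omega)
  field_simp
  linear_combination hq
end

section
/- The number of noncrossing perfect matchings on 2l points arranged on a line (arcs drawn in the upper half-plane, no two arcs crossing) having exactly k arcs of the form (i,i+1) equals the Narayana number N(l,k) = (1/l) * C(l,k) * C(l,k-1). -/
/-- `M` is a noncrossing perfect matching on the points `1,…,2l` arranged on a line:
every arc `(i,j)` has `1 ≤ i < j ≤ 2l`, every point lies in exactly one arc, and no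
two arcs cross. -/
def IsNoncrossingPerfectMatching (l : ℕ) (M : Finset (ℕ × ℕ)) : Prop :=
  (∀ p ∈ M, 1 ≤ p.1 ∧ p.1 < p.2 ∧ p.2 ≤ 2 * l) ∧
  (∀ v : ℕ, 1 ≤ v → v ≤ 2 * l → ∃! p, p ∈ M ∧ (p.1 = v ∨ p.2 = v)) ∧
  (∀ p ∈ M, ∀ q ∈ M, ¬ (p.1 < q.1 ∧ q.1 < p.2 ∧ p.2 < q.2))


/-- Binomial coefficient with integer arguments, `0` outside the usual range. -/
def ch (n r : ℤ) : ℚ :=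
  if 0 ≤ r ∧ r ≤ n then ((n.toNat.choose r.toNat : ℕ) : ℚ) else 0

lemma ch_neg_right {n r : ℤ} (h : r < 0) : ch n r = 0 := by
  rw [ch, if_neg]; omega

lemma ch_neg_left {n r : ℤ} (h : n < 0) : ch n r = 0 := by
  rw [ch, if_neg]; omega

lemma ch_zero_left (r : ℤ) : ch 0 r = if r = 0 then 1 else 0 := by
  rcases eq_or_ne r 0 with h | h
  · subst h; rw [ch, if_pos (by omega)]; simp
  · rw [if_neg h, ch, if_neg (by omega)]

lemma ch_pascal {n : ℤ} (hn : 1 ≤ n) (r : ℤ) :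
    ch n r = ch (n - 1) (r - 1) + ch (n - 1) r := by
  rcases lt_trichotomy r 0 with h | h | h
  · rw [ch_neg_right h, ch_neg_right (by omega), ch_neg_right h]; ring
  · subst h
    rw [ch, if_pos (by omega), ch_neg_right (by norm_num), ch, if_pos (by omega)]
    simp
  · rcases le_or_gt r n with hr | hr
    · rw [ch, if_pos (by omega), ch, if_pos (by omega)]
      have h1 : n.toNat = (n - 1).toNat + 1 := by omega
      have h2 : r.toNat = (r - 1).toNat + 1 := by omega
      rcases le_or_gt r (n - 1) with hr2 | hr2
      · rw [ch, if_pos (by omega), h1, h2, Nat.choose_succ_succ]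
        push_cast; ring
      · rw [ch, if_neg (by omega), h1, h2, Nat.choose_succ_succ]
        have : (n - 1).toNat.choose r.toNat = 0 :=
          Nat.choose_eq_zero_of_lt (by omega)
        rw [h2] at this
        rw [this]
        push_cast; ring
    · rw [ch, if_neg (by omega), ch, if_neg (by omega), ch, if_neg (by omega)]; ring

lemma ch_eq_choose {n r : ℕ} (h : r ≤ n) : ch n r = (n.choose r : ℚ) := by
  rw [ch, if_pos (by constructor <;> omega)]
  simp

/-- Closed form for the refined ballot counts. -/
def G (u d k : ℕ) (e : Bool) : ℚ :=
  if u = 0 ∧ d = 0 then (if k = 0 ∧ e = false then 1 else 0)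
  else if e then
    ch ((u : ℤ) - 1) ((k : ℤ) - 1) * ch d ((k : ℤ) - 1)
      - ch u ((k : ℤ) - 1) * ch ((d : ℤ) - 1) ((k : ℤ) - 1)
  else
    ch ((u : ℤ) - 1) ((k : ℤ) - 1) * ch d k - ch u ((k : ℤ) - 1) * ch ((d : ℤ) - 1) k

lemma G_true_ud (u k : ℕ) (hu : 1 ≤ u) : G u u k true = 0 := by
  rw [G, if_neg (by omega), if_pos rfl]; ring

lemma G_true_k0 (u d : ℕ) (h : ¬(u = 0 ∧ d = 0)) : G u d 0 true = 0 := by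
  rw [G, if_neg h, if_pos rfl]
  simp only [Nat.cast_zero, zero_sub]
  simp only [ch_neg_right (show (-1 : ℤ) < 0 by norm_num)]
  ring

lemma G_false_d0 (u k : ℕ) (hu : 1 ≤ u) : G u 0 k false = 0 := by
  rw [G, if_neg (by omega)]
  simp only [Bool.false_eq_true, if_false, Nat.cast_zero, zero_sub]
  rw [ch_neg_left (show (-1 : ℤ) < 0 by norm_num)]
  rcases Nat.eq_zero_or_pos k with hk | hk
  · subst hk
    simp only [Nat.cast_zero, zero_sub]
    rw [ch_neg_right (show (-1 : ℤ) < 0 by norm_num)]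
    ring
  · rw [ch_zero_left, if_neg (by omega)]; ring

lemma GE1 (u d k : ℕ) (h : d < u) (hk : 1 ≤ k) :
    G u d k true = G (u - 1) d k true + G (u - 1) d (k - 1) false := by
  rcases eq_or_lt_of_le (Nat.one_le_iff_ne_zero.mpr (by omega : u ≠ 0)) with hu1 | hu2
  · -- u = 1, d = 0
    have hu : u = 1 := hu1.symm
    have hd : d = 0 := by omega
    subst hu; subst hd
    rw [G, if_neg (by omega), if_pos rfl]
    rw [G, if_pos ⟨rfl, rfl⟩, if_neg (by simp), G, if_pos ⟨rfl, rfl⟩]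
    simp only [Nat.cast_one, Nat.cast_zero, sub_self, zero_sub]
    rw [ch_zero_left, ch_neg_left (show (-1 : ℤ) < 0 by norm_num)]
    rcases eq_or_ne k 1 with hk1 | hk1
    · subst hk1
      norm_num
    · rw [if_neg (by omega : ¬((k : ℤ) - 1 = 0)),
        if_neg (by simp only [and_true]; omega : ¬(k - 1 = 0 ∧ True))]
      ring
  · -- u ≥ 2
    have hu0 : ¬(u = 0 ∧ d = 0) := by omega
    have hu0' : ¬(u - 1 = 0 ∧ d = 0) := by omega
    rw [G, if_neg hu0, if_pos rfl, G, if_neg hu0', if_pos rfl, G, if_neg hu0']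
    simp only [Bool.false_eq_true, if_false]
    have c1 : ((u - 1 : ℕ) : ℤ) = (u : ℤ) - 1 := by omega
    have c2 : ((k - 1 : ℕ) : ℤ) = (k : ℤ) - 1 := by omega
    rw [c1, c2]
    have p1 : ch ((u : ℤ) - 1) ((k : ℤ) - 1)
        = ch ((u : ℤ) - 1 - 1) ((k : ℤ) - 1 - 1) + ch ((u : ℤ) - 1 - 1) ((k : ℤ) - 1) :=
      ch_pascal (by omega) _
    have p2 : ch (u : ℤ) ((k : ℤ) - 1)
        = ch ((u : ℤ) - 1) ((k : ℤ) - 1 - 1) + ch ((u : ℤ) - 1) ((k : ℤ) - 1) :=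
      ch_pascal (by omega) _
    linear_combination (ch (d : ℤ) ((k : ℤ) - 1)) * p1 - (ch ((d : ℤ) - 1) ((k : ℤ) - 1)) * p2

lemma GE2 (u d k : ℕ) (hd : 1 ≤ d) (hdu : d ≤ u) :
    G u d k false = G u (d - 1) k true + G u (d - 1) k false := by
  have hu : 1 ≤ u := le_trans hd hdu
  have h0 : ¬(u = 0 ∧ d = 0) := by omega
  have h0' : ¬(u = 0 ∧ d - 1 = 0) := by omega
  rw [G, if_neg h0, G, if_neg h0', if_pos rfl, G, if_neg h0']
  simp only [Bool.false_eq_true, if_false]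
  have c1 : ((d - 1 : ℕ) : ℤ) = (d : ℤ) - 1 := by omega
  rw [c1]
  rcases eq_or_lt_of_le hd with hd1 | hd2
  · -- d = 1
    have hd' : d = 1 := hd1.symm
    subst hd'
    simp only [Nat.cast_one, sub_self]
    have r1 : ch (1 : ℤ) (k : ℤ) = ch 0 ((k : ℤ) - 1) + ch 0 (k : ℤ) :=
      ch_pascal (by norm_num) _
    have z1 : ch (u : ℤ) ((k : ℤ) - 1) * ch 0 (k : ℤ) = 0 := by
      rcases Nat.eq_zero_or_pos k with hk | hk
      · subst hk
        simp only [Nat.cast_zero, zero_sub]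
        rw [ch_neg_right (show (-1 : ℤ) < 0 by norm_num)]; ring
      · rw [ch_zero_left, if_neg (by omega : ¬((k : ℤ) = 0))]; ring
    have z2 : ch (u : ℤ) ((k : ℤ) - 1) * ch (0 - 1 : ℤ) ((k : ℤ) - 1) = 0 := by
      rw [ch_neg_left (show (0 - 1 : ℤ) < 0 by norm_num)]; ring
    have z3 : ch (u : ℤ) ((k : ℤ) - 1) * ch (0 - 1 : ℤ) (k : ℤ) = 0 := by
      rw [ch_neg_left (show (0 - 1 : ℤ) < 0 by norm_num)]; ring
    linear_combination (ch ((u : ℤ) - 1) ((k : ℤ) - 1)) * r1 - z1 + z2 + z3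
  · -- d ≥ 2
    have q1 : ch (d : ℤ) (k : ℤ)
        = ch ((d : ℤ) - 1) ((k : ℤ) - 1) + ch ((d : ℤ) - 1) (k : ℤ) :=
      ch_pascal (by omega) _
    have q2 : ch ((d : ℤ) - 1) (k : ℤ)
        = ch ((d : ℤ) - 1 - 1) ((k : ℤ) - 1) + ch ((d : ℤ) - 1 - 1) (k : ℤ) :=
      ch_pascal (by omega) _
    linear_combination (ch ((u : ℤ) - 1) ((k : ℤ) - 1)) * q1
      - (ch (u : ℤ) ((k : ℤ) - 1)) * q2

open Finset

/-- Peaks of a set of "up-step" positions. -/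
def pk (O : Finset ℕ) : Finset ℕ := O.filter (fun i => i + 1 ∉ O)

/-- Dyck-prefix sets. -/
def W (u d k : ℕ) (e : Bool) : Finset (Finset ℕ) :=
  (Finset.Icc 1 (u + d)).powerset.filter (fun O => O.card = u ∧
    (∀ s ≤ u + d, s ≤ 2 * (O ∩ Finset.Icc 1 s).card) ∧
    (pk O).card = k ∧ (u + d ∈ O ↔ e = true))

lemma mem_W {u d k : ℕ} {e : Bool} {O : Finset ℕ} :
    O ∈ W u d k e ↔ O ⊆ Finset.Icc 1 (u + d) ∧ O.card = u ∧
      (∀ s ≤ u + d, s ≤ 2 * (O ∩ Finset.Icc 1 s).card) ∧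
      (pk O).card = k ∧ (u + d ∈ O ↔ e = true) := by
  simp only [W, mem_filter, mem_powerset]

lemma W_zero (k : ℕ) (e : Bool) : W 0 0 k e = if k = 0 ∧ e = false then {∅} else ∅ := by
  have hIcc : Finset.Icc 1 (0 + 0) = ∅ := by decide
  ext O
  rw [mem_W]
  constructor
  · rintro ⟨hsub, hcard, _, hpk, he⟩
    have hO : O = ∅ := subset_empty.mp (by rwa [hIcc] at hsub)
    subst hO
    have hk : k = 0 := by simpa [pk] using hpk.symm
    have he' : e = false := by simpa using he
    rw [if_pos ⟨hk, he'⟩]; simp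
  · intro hO
    by_cases hc : k = 0 ∧ e = false
    · rw [if_pos hc] at hO
      rw [mem_singleton] at hO
      subst hO
      exact ⟨empty_subset _, by simp, by intro s hs; omega, by simp [pk, hc.1],
        by simp [hc.2]⟩
    · rw [if_neg hc] at hO; exact absurd hO (notMem_empty _)

lemma W_disj (u d k1 k2 : ℕ) : Disjoint (W u d k1 true) (W u d k2 false) := by
  rw [Finset.disjoint_left]
  intro O h1 h2
  have e1 := (mem_W.mp h1).2.2.2.2
  have e2 := (mem_W.mp h2).2.2.2.2
  simp at e1 e2
  exact e2 e1

lemma W_true_k0 (u d : ℕ) (h : 1 ≤ u + d) : W u d 0 true = ∅ := by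
  rw [eq_empty_iff_forall_notMem]
  intro O hO
  obtain ⟨hsub, _, _, hpk, he⟩ := mem_W.mp hO
  have htO : u + d ∈ O := by simpa using he
  have : u + d ∈ pk O := by
    rw [pk, mem_filter]
    refine ⟨htO, fun hc => ?_⟩
    have := mem_Icc.mp (hsub hc); omega
  rw [card_eq_zero] at hpk
  rw [hpk] at this
  exact notMem_empty _ this

lemma W_true_ud (u k : ℕ) (hu : 1 ≤ u) : W u u k true = ∅ := by
  rw [eq_empty_iff_forall_notMem]
  intro O hO
  obtain ⟨hsub, hcard, hbal, _, he⟩ := mem_W.mp hO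
  have htO : u + u ∈ O := by simpa using he
  have hinter : O ∩ Finset.Icc 1 (u + u - 1) = O.erase (u + u) := by
    ext x
    simp only [mem_inter, mem_Icc, mem_erase]
    constructor
    · rintro ⟨hx, h1, h2⟩; exact ⟨by omega, hx⟩
    · rintro ⟨hne, hx⟩
      have := mem_Icc.mp (hsub hx)
      exact ⟨hx, by omega, by omega⟩
  have hb := hbal (u + u - 1) (by omega)
  rw [hinter, card_erase_of_mem htO, hcard] at hb
  omega

lemma W_false_d0 (u k : ℕ) (hu : 1 ≤ u) : W u 0 k false = ∅ := by
  rw [eq_empty_iff_forall_notMem]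
  intro O hO
  obtain ⟨hsub, hcard, _, _, he⟩ := mem_W.mp hO
  have : O = Finset.Icc 1 (u + 0) :=
    eq_of_subset_of_card_le hsub (by rw [hcard]; simp [Nat.card_Icc])
  have : u + 0 ∈ O := by rw [this]; simp; omega
  exact absurd (he.mp this) (by simp)

lemma W_false_eq_union (u d k : ℕ) (hd : 1 ≤ d) (hdu : d ≤ u) :
    W u d k false = W u (d - 1) k true ∪ W u (d - 1) k false := by
  have ht : u + (d - 1) = u + d - 1 := by omega
  ext O
  rw [mem_union, mem_W, mem_W, mem_W, ht]
  constructor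
  · rintro ⟨hsub, hcard, hbal, hpk, he⟩
    have hne : u + d ∉ O := by simpa using he
    have hsub' : O ⊆ Finset.Icc 1 (u + d - 1) := by
      intro x hx
      have h1 := mem_Icc.mp (hsub hx)
      rw [mem_Icc]
      refine ⟨h1.1, ?_⟩
      rcases eq_or_ne x (u + d) with h | h
      · exact absurd (h ▸ hx) hne
      · omega
    have hbal' : ∀ s ≤ u + d - 1, s ≤ 2 * (O ∩ Finset.Icc 1 s).card :=
      fun s hs => hbal s (by omega)
    by_cases hl : u + d - 1 ∈ O
    · exact Or.inl ⟨hsub', hcard, hbal', hpk, by simp [hl]⟩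
    · exact Or.inr ⟨hsub', hcard, hbal', hpk, by simp [hl]⟩
  · intro h
    have key : O ⊆ Finset.Icc 1 (u + d - 1) → O.card = u →
        (∀ s ≤ u + d - 1, s ≤ 2 * (O ∩ Finset.Icc 1 s).card) →
        O ⊆ Finset.Icc 1 (u + d) ∧ O.card = u ∧
          (∀ s ≤ u + d, s ≤ 2 * (O ∩ Finset.Icc 1 s).card) ∧ (u + d ∈ O ↔ False) := by
      intro hsub hcard hbal
      have hsub2 : O ⊆ Finset.Icc 1 (u + d) :=
        hsub.trans (Finset.Icc_subset_Icc le_rfl (by omega))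
      refine ⟨hsub2, hcard, ?_, ?_⟩
      · intro s hs
        rcases eq_or_ne s (u + d) with heq | hne
        · subst heq
          have hOint : O ∩ Finset.Icc 1 (u + d) = O := inter_eq_left.mpr hsub2
          rw [hOint, hcard]; omega
        · exact hbal s (by omega)
      · constructor
        · intro hmem
          have := mem_Icc.mp (hsub hmem); omega
        · exact False.elim
    rcases h with ⟨hsub, hcard, hbal, hpk, _⟩ | ⟨hsub, hcard, hbal, hpk, _⟩ <;>
      obtain ⟨h1, h2, h3, h4⟩ := key hsub hcard hbal
    · exact ⟨h1, h2, h3, hpk, by simpa using h4⟩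
    · exact ⟨h1, h2, h3, hpk, by simpa using h4⟩

lemma pk_insert_top {t : ℕ} (ht : 1 ≤ t) {O : Finset ℕ} (hO : O ⊆ Finset.Icc 1 (t - 1)) :
    pk (insert t O) = insert t ((pk O).erase (t - 1)) := by
  have hmem : ∀ x ∈ O, 1 ≤ x ∧ x ≤ t - 1 := fun x hx => mem_Icc.mp (hO hx)
  ext i
  simp only [pk, mem_filter, mem_insert, mem_erase]
  constructor
  · rintro ⟨hi | hi, hni⟩
    · exact Or.inl hi
    · right
      have hit := (hmem i hi).2
      refine ⟨fun h => hni (Or.inl (by omega)), hi, fun h => hni (Or.inr h)⟩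
  · rintro (hi | ⟨hne, hi, hni⟩)
    · subst hi
      refine ⟨Or.inl rfl, ?_⟩
      rintro (h | h)
      · omega
      · exact absurd (hmem _ h).2 (by omega)
    · refine ⟨Or.inr hi, ?_⟩
      rintro (h | h)
      · exact hne (by omega)
      · exact hni h

lemma pk_insert_top_card {t : ℕ} (ht : 1 ≤ t) {O : Finset ℕ}
    (hO : O ⊆ Finset.Icc 1 (t - 1)) :
    (pk (insert t O)).card = if t - 1 ∈ O then (pk O).card else (pk O).card + 1 := by
  have hpkO : pk O ⊆ O := filter_subset _ _
  have htn : t ∉ (pk O).erase (t - 1) := by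
    intro h
    have := mem_Icc.mp (hO (hpkO (mem_of_mem_erase h))); omega
  rw [pk_insert_top ht hO, card_insert_of_notMem htn]
  by_cases h : t - 1 ∈ O
  · rw [if_pos h]
    have hpk : t - 1 ∈ pk O := by
      rw [pk, mem_filter]
      refine ⟨h, fun hc => ?_⟩
      have := mem_Icc.mp (hO hc); omega
    rw [card_erase_of_mem hpk]
    have : 1 ≤ (pk O).card := card_pos.mpr ⟨_, hpk⟩
    omega
  · rw [if_neg h, erase_eq_of_notMem (fun hc => h (hpkO hc))]

lemma W_true_card (u d k : ℕ) (hd : d < u) (hk : 1 ≤ k) :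
    (W u d k true).card = (W (u - 1) d k true).card + (W (u - 1) d (k - 1) false).card := by
  have ht : 1 ≤ u + d := by omega
  have ht' : u - 1 + d = u + d - 1 := by omega
  rw [← card_union_of_disjoint (W_disj (u - 1) d k (k - 1))]
  apply card_bij (fun O _ => O.erase (u + d))
  · -- maps to target
    intro O hO
    obtain ⟨hsub, hcard, hbal, hpk, he⟩ := mem_W.mp hO
    have htO : u + d ∈ O := by simpa using he
    have hsub' : O.erase (u + d) ⊆ Finset.Icc 1 (u + d - 1) := by
      intro x hx
      rw [mem_erase] at hx
      have := mem_Icc.mp (hsub hx.2)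
      rw [mem_Icc]
      exact ⟨this.1, by omega⟩
    have hcard' : (O.erase (u + d)).card = u - 1 := by
      rw [card_erase_of_mem htO, hcard]
    have hbal' : ∀ s ≤ u + d - 1, s ≤ 2 * ((O.erase (u + d)) ∩ Finset.Icc 1 s).card := by
      intro s hs
      have heq : (O.erase (u + d)) ∩ Finset.Icc 1 s = O ∩ Finset.Icc 1 s := by
        ext x
        simp only [mem_inter, mem_erase, mem_Icc]
        constructor
        · rintro ⟨⟨_, h1⟩, h2⟩; exact ⟨h1, h2⟩
        · rintro ⟨h1, h2⟩; exact ⟨⟨by omega, h1⟩, h2⟩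
      rw [heq]
      exact hbal s (by omega)
    have hOeq : O = insert (u + d) (O.erase (u + d)) := (insert_erase htO).symm
    have hpk' := pk_insert_top_card ht hsub'
    rw [← hOeq, hpk] at hpk'
    rw [mem_union]
    by_cases hl : u + d - 1 ∈ O.erase (u + d)
    · left
      rw [mem_W, ht']
      rw [if_pos hl] at hpk'
      exact ⟨hsub', hcard', hbal', hpk'.symm, by simp [hl]⟩
    · right
      rw [mem_W, ht']
      rw [if_neg hl] at hpk'
      exact ⟨hsub', hcard', hbal', by omega, by simp [hl]⟩
  · -- injective
    intro O1 h1 O2 h2 heq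
    have m1 : u + d ∈ O1 := by simpa using (mem_W.mp h1).2.2.2.2
    have m2 : u + d ∈ O2 := by simpa using (mem_W.mp h2).2.2.2.2
    rw [← insert_erase m1, ← insert_erase m2, heq]
  · -- surjective
    intro O' hO'
    have hcom : O' ⊆ Finset.Icc 1 (u + d - 1) → O'.card = u - 1 →
        (∀ s ≤ u + d - 1, s ≤ 2 * (O' ∩ Finset.Icc 1 s).card) →
        (u + d ∉ O') ∧ insert (u + d) O' ⊆ Finset.Icc 1 (u + d) ∧
          (insert (u + d) O').card = u ∧
          (∀ s ≤ u + d, s ≤ 2 * ((insert (u + d) O') ∩ Finset.Icc 1 s).card) ∧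
          (u + d ∈ insert (u + d) O' ↔ True) := by
      intro hsub hcard hbal
      have hnot : u + d ∉ O' := by
        intro h; have := mem_Icc.mp (hsub h); omega
      have hsubI : insert (u + d) O' ⊆ Finset.Icc 1 (u + d) := by
        rw [insert_subset_iff]
        exact ⟨mem_Icc.mpr ⟨by omega, le_rfl⟩,
          hsub.trans (Finset.Icc_subset_Icc le_rfl (by omega))⟩
      refine ⟨hnot, hsubI, ?_, ?_, by simp⟩
      · rw [card_insert_of_notMem hnot, hcard]; omega
      · intro s hs
        rcases eq_or_ne s (u + d) with heq | hne
        · subst heq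
          have hIeq : (insert (u + d) O') ∩ Finset.Icc 1 (u + d) = insert (u + d) O' :=
            inter_eq_left.mpr hsubI
          rw [hIeq, card_insert_of_notMem hnot, hcard]
          omega
        · have heq : (insert (u + d) O') ∩ Finset.Icc 1 s = O' ∩ Finset.Icc 1 s := by
            ext x
            simp only [mem_inter, mem_insert, mem_Icc]
            constructor
            · rintro ⟨h1 | h1, h2⟩
              · omega
              · exact ⟨h1, h2⟩
            · rintro ⟨h1, h2⟩; exact ⟨Or.inr h1, h2⟩
          rw [heq]
          exact hbal s (by omega)
    rcases mem_union.mp hO' with h | h <;> obtain ⟨hsub, hcard, hbal, hpk, he⟩ :=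
      (by rw [mem_W, ht'] at h; exact h :
        O' ⊆ Finset.Icc 1 (u + d - 1) ∧ O'.card = u - 1 ∧
        (∀ s ≤ u + d - 1, s ≤ 2 * (O' ∩ Finset.Icc 1 s).card) ∧ _)
    · obtain ⟨hnot, h1, h2, h3, h4⟩ := hcom hsub hcard hbal
      refine ⟨insert (u + d) O', ?_, erase_insert hnot⟩
      rw [mem_W]
      have hl : u + d - 1 ∈ O' := by simpa using he
      have hpkc := pk_insert_top_card ht hsub
      rw [if_pos hl, hpk] at hpkc
      exact ⟨h1, h2, h3, hpkc, by simpa using h4⟩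
    · obtain ⟨hnot, h1, h2, h3, h4⟩ := hcom hsub hcard hbal
      refine ⟨insert (u + d) O', ?_, erase_insert hnot⟩
      rw [mem_W]
      have hl : u + d - 1 ∉ O' := by simpa using he
      have hpkc := pk_insert_top_card ht hsub
      rw [if_neg hl, hpk] at hpkc
      refine ⟨h1, h2, h3, by omega, by simpa using h4⟩

theorem W_card_eq : ∀ t u d k : ℕ, ∀ e : Bool, u + d = t → d ≤ u →
    ((W u d k e).card : ℚ) = G u d k e := by
  intro t
  induction t using Nat.strong_induction_on with
  | _ t IH =>
    intro u d k e htud hdu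
    rcases Nat.eq_zero_or_pos t with ht0 | ht1
    · have hu : u = 0 := by omega
      have hd : d = 0 := by omega
      subst hu; subst hd
      rw [W_zero]
      by_cases hc : k = 0 ∧ e = false
      · rw [if_pos hc, G, if_pos (⟨rfl, rfl⟩ : (0 : ℕ) = 0 ∧ (0 : ℕ) = 0), if_pos hc]
        simp
      · rw [if_neg hc, G, if_pos (⟨rfl, rfl⟩ : (0 : ℕ) = 0 ∧ (0 : ℕ) = 0), if_neg hc]
        simp
    · cases e with
      | true =>
        rcases Nat.eq_zero_or_pos k with hk0 | hk1
        · subst hk0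
          rw [W_true_k0 u d (by omega), G_true_k0 u d (by omega)]; simp
        · rcases eq_or_lt_of_le hdu with hud | hud
          · have hu1 : 1 ≤ d := by omega
            subst hud
            rw [W_true_ud d k hu1, G_true_ud d k hu1]; simp
          · rw [W_true_card u d k hud hk1]
            push_cast
            rw [IH (t - 1) (by omega) (u - 1) d k true (by omega) (by omega),
              IH (t - 1) (by omega) (u - 1) d (k - 1) false (by omega) (by omega)]
            exact (GE1 u d k hud hk1).symm
      | false =>
        rcases Nat.eq_zero_or_pos d with hd0 | hd1
        · subst hd0
          rw [W_false_d0 u k (by omega), G_false_d0 u k (by omega)]; simp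
        · rw [W_false_eq_union u d k hd1 hdu,
            card_union_of_disjoint (W_disj u (d - 1) k k)]
          push_cast
          rw [IH (t - 1) (by omega) u (d - 1) k true (by omega) (by omega),
            IH (t - 1) (by omega) u (d - 1) k false (by omega) (by omega)]
          exact (GE2 u d k hd1 hdu).symm




def openers (M : Finset (ℕ × ℕ)) : Finset ℕ := M.image Prod.fst
def closers (M : Finset (ℕ × ℕ)) : Finset ℕ := M.image Prod.snd

/-- A noncrossing perfect matching on the support set `S`. -/
def MatchOn (S : Finset ℕ) (M : Finset (ℕ × ℕ)) : Prop :=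
  (∀ p ∈ M, p.1 < p.2 ∧ p.1 ∈ S ∧ p.2 ∈ S) ∧
  (∀ v ∈ S, ∃! p, p ∈ M ∧ (p.1 = v ∨ p.2 = v)) ∧
  (∀ p ∈ M, ∀ q ∈ M, ¬(p.1 < q.1 ∧ q.1 < p.2 ∧ p.2 < q.2))

namespace MatchOn

variable {S : Finset ℕ} {M : Finset (ℕ × ℕ)}

lemma fst_inj (h : MatchOn S M) {p q : ℕ × ℕ} (hp : p ∈ M) (hq : q ∈ M)
    (e : p.1 = q.1) : p = q := by
  obtain ⟨r, _, hun⟩ := h.2.1 p.1 (h.1 p hp).2.1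
  rw [hun p ⟨hp, Or.inl rfl⟩, hun q ⟨hq, Or.inl e.symm⟩]

lemma snd_inj (h : MatchOn S M) {p q : ℕ × ℕ} (hp : p ∈ M) (hq : q ∈ M)
    (e : p.2 = q.2) : p = q := by
  obtain ⟨r, _, hun⟩ := h.2.1 p.2 (h.1 p hp).2.2
  rw [hun p ⟨hp, Or.inr rfl⟩, hun q ⟨hq, Or.inr e.symm⟩]

lemma fst_ne_snd (h : MatchOn S M) {p q : ℕ × ℕ} (hp : p ∈ M) (hq : q ∈ M) :
    p.1 ≠ q.2 := by
  intro e
  obtain ⟨r, _, hun⟩ := h.2.1 p.1 (h.1 p hp).2.1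
  have e1 := hun p ⟨hp, Or.inl rfl⟩
  have e2 := hun q ⟨hq, Or.inr e.symm⟩
  have : p = q := by rw [e1, e2]
  have hlt := (h.1 p hp).1
  rw [this] at hlt e
  omega

lemma openers_union (h : MatchOn S M) : openers M ∪ closers M = S := by
  ext v
  simp only [mem_union, openers, closers, mem_image]
  constructor
  · rintro (⟨p, hp, rfl⟩ | ⟨p, hp, rfl⟩)
    · exact (h.1 p hp).2.1
    · exact (h.1 p hp).2.2
  · intro hv
    obtain ⟨p, ⟨hp, hor⟩, -⟩ := h.2.1 v hv
    rcases hor with e | e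
    · exact Or.inl ⟨p, hp, e⟩
    · exact Or.inr ⟨p, hp, e⟩

lemma disj (h : MatchOn S M) : Disjoint (openers M) (closers M) := by
  rw [disjoint_left]
  intro v h1 h2
  simp only [openers, closers, mem_image] at h1 h2
  obtain ⟨p, hp, e1⟩ := h1
  obtain ⟨q, hq, e2⟩ := h2
  exact h.fst_ne_snd hp hq (e1.trans e2.symm)

lemma card_openers (h : MatchOn S M) : (openers M).card = M.card :=
  card_image_of_injOn (fun p hp q hq e => h.fst_inj hp hq e)

lemma card_closers (h : MatchOn S M) : (closers M).card = M.card :=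
  card_image_of_injOn (fun p hp q hq e => h.snd_inj hp hq e)

lemma card_S (h : MatchOn S M) : S.card = 2 * M.card := by
  rw [← h.openers_union, card_union_of_disjoint h.disj, h.card_openers, h.card_closers]
  ring

lemma closers_eq_sdiff (h : MatchOn S M) : closers M = S \ openers M := by
  rw [← h.openers_union, union_sdiff_cancel_left h.disj]

lemma ballot (h : MatchOn S M) (v : ℕ) :
    (closers M ∩ Finset.Iic v).card ≤ (openers M ∩ Finset.Iic v).card := by
  have h1 : closers M ∩ Finset.Iic v = (M.filter (fun p => p.2 ≤ v)).image Prod.snd := by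
    ext x
    simp only [mem_inter, closers, mem_image, mem_filter, mem_Iic]
    constructor
    · rintro ⟨⟨p, hp, rfl⟩, hx⟩; exact ⟨p, ⟨hp, hx⟩, rfl⟩
    · rintro ⟨p, ⟨hp, hv'⟩, rfl⟩; exact ⟨⟨p, hp, rfl⟩, hv'⟩
  have h2 : (M.filter (fun p => p.2 ≤ v)).image Prod.fst ⊆ openers M ∩ Finset.Iic v := by
    intro x hx
    simp only [mem_image, mem_filter] at hx
    obtain ⟨p, ⟨hp, hv'⟩, rfl⟩ := hx
    simp only [mem_inter, openers, mem_image, mem_Iic]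
    exact ⟨⟨p, hp, rfl⟩, by have := (h.1 p hp).1; omega⟩
  calc (closers M ∩ Finset.Iic v).card
      = ((M.filter (fun p => p.2 ≤ v)).image Prod.snd).card := by rw [h1]
    _ = (M.filter (fun p => p.2 ≤ v)).card :=
        card_image_of_injOn (fun p hp q hq e =>
          h.snd_inj (mem_filter.mp hp).1 (mem_filter.mp hq).1 e)
    _ = ((M.filter (fun p => p.2 ≤ v)).image Prod.fst).card :=
        (card_image_of_injOn (fun p hp q hq e =>
          h.fst_inj (mem_filter.mp hp).1 (mem_filter.mp hq).1 e)).symm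
    _ ≤ (openers M ∩ Finset.Iic v).card := card_le_card h2

end MatchOn

lemma one_arc_iff {n : ℕ} {M : Finset (ℕ × ℕ)} (h : MatchOn (Finset.Icc 1 n) M)
    {i : ℕ} : (i, i + 1) ∈ M ↔ i ∈ openers M ∧ i + 1 ∉ openers M := by
  constructor
  · intro hm
    constructor
    · exact mem_image_of_mem Prod.fst hm
    · intro hc
      have hcl : i + 1 ∈ closers M := mem_image_of_mem Prod.snd hm
      exact disjoint_left.mp h.disj hc hcl
  · rintro ⟨ho, hno⟩
    simp only [openers, mem_image] at ho
    obtain ⟨p, hp, e⟩ := ho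
    have hlt := (h.1 p hp).1
    have hp2 := mem_Icc.mp (h.1 p hp).2.2
    have hiS : i + 1 ∈ Finset.Icc 1 n := mem_Icc.mpr ⟨by omega, by omega⟩
    have hiC : i + 1 ∈ closers M := by
      have hin : i + 1 ∈ openers M ∪ closers M := by rw [h.openers_union]; exact hiS
      rcases mem_union.mp hin with hc | hc
      · exact absurd hc hno
      · exact hc
    simp only [closers, mem_image] at hiC
    obtain ⟨q, hq, eq2⟩ := hiC
    rcases eq_or_ne q.1 i with e1 | e1
    · have : q = (i, i + 1) := by
        rcases q with ⟨a, b⟩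
        simp only at e1 eq2
        rw [e1, eq2]
      rw [← this]; exact hq
    · exfalso
      have hq1 : q.1 < q.2 := (h.1 q hq).1
      have hq1i : q.1 < i := by omega
      have hp2' : p.2 ≠ i + 1 := by
        intro e2
        have : p = q := h.snd_inj hp hq (by rw [e2, eq2])
        rw [this] at e
        exact e1 e
      exact h.2.2 q hq p hp ⟨by omega, by omega, by omega⟩

lemma one_arc_card {n : ℕ} {M : Finset (ℕ × ℕ)} (h : MatchOn (Finset.Icc 1 n) M) :
    (M.filter (fun p => p.2 = p.1 + 1)).card = (pk (openers M)).card := by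
  apply card_bij (fun p _ => p.1)
  · intro p hp
    rw [mem_filter] at hp
    obtain ⟨hpm, e⟩ := hp
    have hpe : (p.1, p.1 + 1) = p := by
      rcases p with ⟨a, b⟩
      simp only at e ⊢
      rw [e]
    have := (one_arc_iff h).mp (by rw [hpe]; exact hpm)
    rw [pk, mem_filter]
    exact ⟨this.1, this.2⟩
  · intro p hp q hq e
    rw [mem_filter] at hp hq
    exact h.fst_inj hp.1 hq.1 e
  · intro i hi
    rw [pk, mem_filter] at hi
    have := (one_arc_iff h).mpr ⟨hi.1, hi.2⟩
    exact ⟨(i, i + 1), mem_filter.mpr ⟨this, rfl⟩, rfl⟩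

lemma min_closer_arc {S : Finset ℕ} {M : Finset (ℕ × ℕ)} (h : MatchOn S M) {c o : ℕ}
    (hcC : c ∈ closers M) (hcmin : ∀ x ∈ closers M, c ≤ x)
    (hoS : o ∈ S) (hoc : o < c) (homax : ∀ x ∈ S, x < c → x ≤ o) : (o, c) ∈ M := by
  obtain ⟨p, hp, e⟩ : ∃ p ∈ M, p.2 = c := by
    simpa only [closers, mem_image] using hcC
  have hp1S : p.1 ∈ S := (h.1 p hp).2.1
  have hp1c : p.1 < c := by have := (h.1 p hp).1; omega
  have hp1o : p.1 ≤ o := homax _ hp1S hp1c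
  rcases eq_or_lt_of_le hp1o with heq | hlt
  · have : p = (o, c) := by
      rcases p with ⟨a, b⟩
      simp only at heq e
      rw [heq, e]
    rw [← this]; exact hp
  · exfalso
    have hoO : o ∈ openers M := by
      have hin : o ∈ openers M ∪ closers M := by rw [h.openers_union]; exact hoS
      rcases mem_union.mp hin with h1 | h1
      · exact h1
      · exact absurd (hcmin _ h1) (by omega)
    obtain ⟨q, hq, eq1⟩ : ∃ q ∈ M, q.1 = o := by
      simpa only [openers, mem_image] using hoO
    have hltq : q.1 < q.2 := (h.1 q hq).1
    have hq2S : q.2 ∈ S := (h.1 q hq).2.2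
    have hq2 : q.2 > c := by
      rcases lt_trichotomy q.2 c with hh | hh | hh
      · exact absurd (homax _ hq2S hh) (by omega)
      · have : q = p := h.snd_inj hq hp (by rw [hh, e])
        rw [this] at eq1
        omega
      · exact hh
    exact h.2.2 p hp q hq ⟨by omega, by omega, by omega⟩

lemma matchOn_erase {S : Finset ℕ} {M : Finset (ℕ × ℕ)} {o c : ℕ}
    (h : MatchOn S M) (hm : (o, c) ∈ M) :
    MatchOn ((S.erase o).erase c) (M.erase (o, c)) := by
  refine ⟨?_, ?_, ?_⟩
  · intro p hp
    rw [mem_erase] at hp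
    obtain ⟨hne, hpM⟩ := hp
    obtain ⟨hlt, hs1, hs2⟩ := h.1 p hpM
    refine ⟨hlt, ?_, ?_⟩ <;> rw [mem_erase, mem_erase]
    · refine ⟨fun e => h.fst_ne_snd hpM hm e, fun e => hne (h.fst_inj hpM hm e), hs1⟩
    · refine ⟨fun e => hne (h.snd_inj hpM hm e), fun e => (h.fst_ne_snd hm hpM) e.symm, hs2⟩
  · intro v hv
    rw [mem_erase, mem_erase] at hv
    obtain ⟨hvc, hvo, hvS⟩ := hv
    obtain ⟨p, ⟨hp, hor⟩, hun⟩ := h.2.1 v hvS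
    have hpne : p ≠ (o, c) := by
      rintro rfl
      rcases hor with e | e
      · exact hvo e.symm
      · exact hvc e.symm
    refine ⟨p, ⟨mem_erase.mpr ⟨hpne, hp⟩, hor⟩, ?_⟩
    rintro q ⟨hq, hor2⟩
    exact hun q ⟨(mem_erase.mp hq).2, hor2⟩
  · intro p hp q hq
    exact h.2.2 p (mem_erase.mp hp).2 q (mem_erase.mp hq).2

lemma openers_erase {S : Finset ℕ} {M : Finset (ℕ × ℕ)} {o c : ℕ}
    (h : MatchOn S M) (hm : (o, c) ∈ M) :
    openers (M.erase (o, c)) = (openers M).erase o := by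
  ext x
  simp only [openers, mem_image, mem_erase]
  constructor
  · rintro ⟨p, hp, rfl⟩
    exact ⟨fun e => hp.1 (h.fst_inj hp.2 hm e), ⟨p, hp.2, rfl⟩⟩
  · rintro ⟨hne, p, hp, rfl⟩
    exact ⟨p, ⟨fun e => hne (by rw [e]), hp⟩, rfl⟩

theorem matchOn_unique : ∀ n (S : Finset ℕ) (M M' : Finset (ℕ × ℕ)), S.card = n →
    MatchOn S M → MatchOn S M' → openers M = openers M' → M = M' := by
  intro n
  induction n using Nat.strong_induction_on with
  | _ n IH =>
    intro S M M' hcard h h' hO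
    have hC : closers M = closers M' := by
      rw [h.closers_eq_sdiff, h'.closers_eq_sdiff, hO]
    rcases eq_or_ne S ∅ with rfl | hSne
    · have hM : M = ∅ := by
        rw [eq_empty_iff_forall_notMem]
        intro p hp
        exact notMem_empty _ (h.1 p hp).2.1
      have hM' : M' = ∅ := by
        rw [eq_empty_iff_forall_notMem]
        intro p hp
        exact notMem_empty _ (h'.1 p hp).2.1
      rw [hM, hM']
    · have hSpos : 0 < S.card := card_pos.mpr (nonempty_iff_ne_empty.mpr hSne)
      have hMpos : 0 < M.card := by have := h.card_S; omega
      have hCne : (closers M).Nonempty := by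
        obtain ⟨p, hp⟩ := card_pos.mp hMpos
        exact ⟨p.2, mem_image_of_mem _ hp⟩
      set c := (closers M).min' hCne with hcdef
      have hcC : c ∈ closers M := min'_mem _ _
      have hcmin : ∀ x ∈ closers M, c ≤ x := fun x hx => min'_le _ _ hx
      have hcS : c ∈ S := by
        rw [← h.openers_union]; exact mem_union_right _ hcC
      have hfne : (S.filter (· < c)).Nonempty := by
        obtain ⟨p, hp, e⟩ : ∃ p ∈ M, p.2 = c := by
          simpa only [closers, mem_image] using hcC
        exact ⟨p.1, mem_filter.mpr ⟨(h.1 p hp).2.1, by have := (h.1 p hp).1; omega⟩⟩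
      set o := (S.filter (· < c)).max' hfne with hodef
      have hmax : o ∈ S.filter (· < c) := by rw [hodef]; exact max'_mem _ _
      have hoS : o ∈ S := (mem_filter.mp hmax).1
      have hoc : o < c := (mem_filter.mp hmax).2
      have homax : ∀ x ∈ S, x < c → x ≤ o := by
        intro x hx hlt
        rw [hodef]
        exact le_max' (S.filter (· < c)) x (mem_filter.mpr ⟨hx, hlt⟩)
      have harc : (o, c) ∈ M := min_closer_arc h hcC hcmin hoS hoc homax
      have harc' : (o, c) ∈ M' :=
        min_closer_arc h' (hC ▸ hcC) (fun x hx => hcmin x (hC ▸ hx)) hoS hoc homax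
      have hcS2 : c ∈ S.erase o := mem_erase.mpr ⟨by omega, hcS⟩
      have hS' : ((S.erase o).erase c).card = n - 2 := by
        rw [card_erase_of_mem hcS2, card_erase_of_mem hoS, hcard]
        omega
      have hn2 : n - 2 < n := by omega
      have heq := IH (n - 2) hn2 _ _ _ hS' (matchOn_erase h harc) (matchOn_erase h' harc')
        (by rw [openers_erase h harc, openers_erase h' harc', hO])
      rw [← insert_erase harc, ← insert_erase harc', heq]

theorem matchOn_exists : ∀ n (S O : Finset ℕ), S.card = n → O ⊆ S →
    2 * O.card = S.card →
    (∀ v, (S ∩ Finset.Iic v).card ≤ 2 * (O ∩ Finset.Iic v).card) →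
    ∃ M, MatchOn S M ∧ openers M = O := by
  intro n
  induction n using Nat.strong_induction_on with
  | _ n IH =>
    intro S O hcard hOS hcard2 hbal
    rcases eq_or_ne S ∅ with rfl | hSne
    · refine ⟨∅, ⟨?_, ?_, ?_⟩, ?_⟩
      · intro p hp; exact absurd hp (notMem_empty _)
      · intro v hv; exact absurd hv (notMem_empty _)
      · intro p hp; exact absurd hp (notMem_empty _)
      · rw [subset_empty.mp hOS]; rfl
    · have hSpos : 0 < S.card := card_pos.mpr (nonempty_iff_ne_empty.mpr hSne)
      have hOpos : 0 < O.card := by omega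
      have hCcard : (S \ O).card = O.card := by rw [card_sdiff_of_subset hOS]; omega
      have hCne : (S \ O).Nonempty := card_pos.mp (by omega)
      set c := (S \ O).min' hCne with hcdef
      have hcmem : c ∈ S \ O := min'_mem _ _
      have hcS : c ∈ S := (mem_sdiff.mp hcmem).1
      have hcO : c ∉ O := (mem_sdiff.mp hcmem).2
      have hbelow : ∀ x ∈ S, x < c → x ∈ O := by
        intro x hx hlt
        by_contra hxO
        exact absurd (min'_le _ _ (mem_sdiff.mpr ⟨hx, hxO⟩)) (by omega)
      have hfne : (S.filter (· < c)).Nonempty := by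
        by_contra hemp
        rw [not_nonempty_iff_eq_empty] at hemp
        have h1 : O ∩ Finset.Iic c = ∅ := by
          rw [eq_empty_iff_forall_notMem]
          intro x hx
          rw [mem_inter, mem_Iic] at hx
          have hxS : x ∈ S := hOS hx.1
          have hxc : x < c := lt_of_le_of_ne hx.2 (fun e => hcO (e ▸ hx.1))
          exact (eq_empty_iff_forall_notMem.mp hemp) x (mem_filter.mpr ⟨hxS, hxc⟩)
        have h2 := hbal c
        rw [h1] at h2
        simp only [card_empty, mul_zero, Nat.le_zero] at h2
        have hcin : c ∈ S ∩ Finset.Iic c := mem_inter.mpr ⟨hcS, mem_Iic.mpr le_rfl⟩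
        have := card_pos.mpr ⟨c, hcin⟩
        omega
      set o := (S.filter (· < c)).max' hfne with hodef
      have hmax : o ∈ S.filter (· < c) := by rw [hodef]; exact max'_mem _ _
      have hoS : o ∈ S := (mem_filter.mp hmax).1
      have hoc : o < c := (mem_filter.mp hmax).2
      have homax : ∀ x ∈ S, x < c → x ≤ o := by
        intro x hx hlt
        rw [hodef]
        exact le_max' (S.filter (· < c)) x (mem_filter.mpr ⟨hx, hlt⟩)
      have hoO : o ∈ O := hbelow o hoS hoc
      have hcS2 : c ∈ S.erase o := mem_erase.mpr ⟨by omega, hcS⟩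
      have hOS' : O.erase o ⊆ (S.erase o).erase c := by
        intro x hx
        rw [mem_erase] at hx
        rw [mem_erase, mem_erase]
        exact ⟨fun e => hcO (e ▸ hx.2), hx.1, hOS hx.2⟩
      have hS'card : ((S.erase o).erase c).card = n - 2 := by
        rw [card_erase_of_mem hcS2, card_erase_of_mem hoS, hcard]
        omega
      have hO'card : 2 * (O.erase o).card = ((S.erase o).erase c).card := by
        rw [card_erase_of_mem hoO, hS'card]
        omega
      have hbal' : ∀ v, (((S.erase o).erase c) ∩ Finset.Iic v).card ≤
          2 * ((O.erase o) ∩ Finset.Iic v).card := by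
        intro v
        have hS'v : ((S.erase o).erase c) ∩ Finset.Iic v
            = ((S ∩ Finset.Iic v).erase o).erase c := by
          ext x
          simp only [mem_inter, mem_erase, mem_Iic]
          tauto
        have hO'v : (O.erase o) ∩ Finset.Iic v = (O ∩ Finset.Iic v).erase o := by
          ext x
          simp only [mem_inter, mem_erase, mem_Iic]
          tauto
        rcases lt_or_ge v o with hvo | hvo
        · have n1 : o ∉ S ∩ Finset.Iic v := by
            intro hcon
            have := mem_Iic.mp (mem_inter.mp hcon).2
            omega
          have n2 : c ∉ (S ∩ Finset.Iic v).erase o := by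
            intro hcon
            have := mem_Iic.mp (mem_inter.mp (mem_of_mem_erase hcon)).2
            omega
          have n3 : o ∉ O ∩ Finset.Iic v := by
            intro hcon
            have := mem_Iic.mp (mem_inter.mp hcon).2
            omega
          rw [hS'v, hO'v, erase_eq_of_notMem n2, erase_eq_of_notMem n1,
            erase_eq_of_notMem n3]
          exact hbal v
        · rcases lt_or_ge v c with hvc | hvc
          · have hOSv : S ∩ Finset.Iic v = O ∩ Finset.Iic v := by
              ext x
              rw [mem_inter, mem_inter, mem_Iic]
              constructor
              · rintro ⟨hx, hxv⟩; exact ⟨hbelow x hx (by omega), hxv⟩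
              · rintro ⟨hx, hxv⟩; exact ⟨hOS hx, hxv⟩
            have hoin : o ∈ O ∩ Finset.Iic v := mem_inter.mpr ⟨hoO, mem_Iic.mpr hvo⟩
            rw [hS'v, hO'v, hOSv, erase_eq_of_notMem
              (fun hcon => hcO (mem_inter.mp (mem_of_mem_erase hcon)).1)]
            have h1 : 1 ≤ (O ∩ Finset.Iic v).card := card_pos.mpr ⟨o, hoin⟩
            rw [card_erase_of_mem hoin]
            omega
          · rw [hS'v, hO'v]
            have hoS2 : o ∈ S ∩ Finset.Iic v :=
              mem_inter.mpr ⟨hoS, mem_Iic.mpr (by omega)⟩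
            have hcS3 : c ∈ (S ∩ Finset.Iic v).erase o :=
              mem_erase.mpr ⟨by omega, mem_inter.mpr ⟨hcS, mem_Iic.mpr hvc⟩⟩
            have hoO2 : o ∈ O ∩ Finset.Iic v :=
              mem_inter.mpr ⟨hoO, mem_Iic.mpr (by omega)⟩
            rw [card_erase_of_mem hcS3, card_erase_of_mem hoS2, card_erase_of_mem hoO2]
            have h2 := hbal v
            have h3 : 1 ≤ (O ∩ Finset.Iic v).card := card_pos.mpr ⟨o, hoO2⟩
            omega
      obtain ⟨M', hM', hOM'⟩ := IH (n - 2) (by omega) _ _ hS'card hOS' hO'card hbal'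
      have hS'mem : ∀ x ∈ (S.erase o).erase c, x ≠ o ∧ x ≠ c ∧ x ∈ S := by
        intro x hx
        rw [mem_erase, mem_erase] at hx
        exact ⟨hx.2.1, hx.1, hx.2.2⟩
      have hnob : ∀ x ∈ (S.erase o).erase c, ¬(o < x ∧ x < c) := by
        rintro x hx ⟨h1, h2⟩
        exact absurd (homax x (hS'mem x hx).2.2 h2) (by omega)
      refine ⟨insert (o, c) M', ⟨?_, ?_, ?_⟩, ?_⟩
      · intro p hp
        rcases mem_insert.mp hp with rfl | hp'
        · exact ⟨hoc, hoS, hcS⟩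
        · obtain ⟨hlt, hs1, hs2⟩ := hM'.1 p hp'
          exact ⟨hlt, (hS'mem _ hs1).2.2, (hS'mem _ hs2).2.2⟩
      · intro v hv
        by_cases hvo : v = o
        · subst hvo
          refine ⟨(o, c), ⟨mem_insert_self _ _, Or.inl rfl⟩, ?_⟩
          rintro q ⟨hq, hor⟩
          rcases mem_insert.mp hq with rfl | hq'
          · rfl
          · exfalso
            obtain ⟨-, hs1, hs2⟩ := hM'.1 q hq'
            rcases hor with e | e
            · exact (hS'mem _ hs1).1 e
            · exact (hS'mem _ hs2).1 e
        · by_cases hvc : v = c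
          · subst hvc
            refine ⟨(o, c), ⟨mem_insert_self _ _, Or.inr rfl⟩, ?_⟩
            rintro q ⟨hq, hor⟩
            rcases mem_insert.mp hq with rfl | hq'
            · rfl
            · exfalso
              obtain ⟨-, hs1, hs2⟩ := hM'.1 q hq'
              rcases hor with e | e
              · exact (hS'mem _ hs1).2.1 e
              · exact (hS'mem _ hs2).2.1 e
          · have hvS' : v ∈ (S.erase o).erase c :=
              mem_erase.mpr ⟨hvc, mem_erase.mpr ⟨hvo, hv⟩⟩
            obtain ⟨p, ⟨hp, hor⟩, hun⟩ := hM'.2.1 v hvS'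
            refine ⟨p, ⟨mem_insert_of_mem hp, hor⟩, ?_⟩
            rintro q ⟨hq, hor2⟩
            rcases mem_insert.mp hq with rfl | hq'
            · exfalso
              rcases hor2 with e | e
              · exact hvo e.symm
              · exact hvc e.symm
            · exact hun q ⟨hq', hor2⟩
      · intro p hp q hq
        rcases mem_insert.mp hp with rfl | hp' <;> rcases mem_insert.mp hq with rfl | hq'
        · rintro ⟨h1, -, -⟩
          simp only at h1
          omega
        · rintro ⟨h1, h2, -⟩
          simp only at h1 h2
          exact hnob q.1 ((hM'.1 q hq').2.1) ⟨h1, h2⟩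
        · rintro ⟨-, h2, h3⟩
          simp only at h2 h3
          exact hnob p.2 ((hM'.1 p hp').2.2) ⟨h2, h3⟩
        · exact hM'.2.2 p hp' q hq'
      · have himg : openers (insert (o, c) M') = insert o (openers M') := by
          simp only [openers, image_insert]
        rw [himg, hOM']
        exact insert_erase hoO

lemma ch_cast (n r : ℕ) : ch (n : ℤ) (r : ℤ) = (n.choose r : ℚ) := by
  rcases le_or_gt r n with h | h
  · exact ch_eq_choose h
  · rw [ch, if_neg (by omega), Nat.choose_eq_zero_of_lt h]
    simp

lemma isNCPM_iff_matchOn (l : ℕ) (M : Finset (ℕ × ℕ)) :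
    IsNoncrossingPerfectMatching l M ↔ MatchOn (Finset.Icc 1 (2 * l)) M := by
  constructor
  · rintro ⟨h1, h2, h3⟩
    refine ⟨?_, ?_, h3⟩
    · intro p hp
      obtain ⟨a, b, c⟩ := h1 p hp
      exact ⟨b, mem_Icc.mpr ⟨a, by omega⟩, mem_Icc.mpr ⟨by omega, c⟩⟩
    · intro v hv
      rw [mem_Icc] at hv
      exact h2 v hv.1 hv.2
  · rintro ⟨h1, h2, h3⟩
    refine ⟨?_, ?_, h3⟩
    · intro p hp
      obtain ⟨a, b, c⟩ := h1 p hp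
      rw [mem_Icc] at b c
      exact ⟨b.1, a, c.2⟩
    · intro v hv1 hv2
      exact h2 v (mem_Icc.mpr ⟨hv1, hv2⟩)

lemma matching_mem_W {l k : ℕ} {M : Finset (ℕ × ℕ)}
    (h : MatchOn (Finset.Icc 1 (2 * l)) M)
    (hk : (M.filter (fun p => p.2 = p.1 + 1)).card = k) :
    openers M ∈ W l l k false := by
  have hll : l + l = 2 * l := by ring
  have hMcard : M.card = l := by
    have := h.card_S
    rw [Nat.card_Icc] at this
    omega
  rw [mem_W, hll]
  refine ⟨?_, ?_, ?_, ?_, ?_⟩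
  · intro x hx
    simp only [openers, mem_image] at hx
    obtain ⟨p, hp, rfl⟩ := hx
    exact (h.1 p hp).2.1
  · rw [h.card_openers, hMcard]
  · intro s hs
    have h1 : openers M ∩ Finset.Icc 1 s = openers M ∩ Finset.Iic s := by
      ext x
      simp only [mem_inter, mem_Icc, mem_Iic]
      constructor
      · rintro ⟨hx, _, h2⟩; exact ⟨hx, h2⟩
      · rintro ⟨hx, h2⟩
        refine ⟨hx, ?_, h2⟩
        simp only [openers, mem_image] at hx
        obtain ⟨p, hp, rfl⟩ := hx
        exact (mem_Icc.mp (h.1 p hp).2.1).1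
    have h2 : (openers M ∩ Finset.Iic s) ∪ (closers M ∩ Finset.Iic s)
        = Finset.Icc 1 (2 * l) ∩ Finset.Iic s := by
      rw [← union_inter_distrib_right, h.openers_union]
    have h3 : Finset.Icc 1 (2 * l) ∩ Finset.Iic s = Finset.Icc 1 s := by
      ext x
      simp only [mem_inter, mem_Icc, mem_Iic]
      omega
    have h4 : Disjoint (openers M ∩ Finset.Iic s) (closers M ∩ Finset.Iic s) :=
      h.disj.mono inter_subset_left inter_subset_left
    have h5 : (openers M ∩ Finset.Iic s).card + (closers M ∩ Finset.Iic s).card = s := by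
      rw [← card_union_of_disjoint h4, h2, h3, Nat.card_Icc]
      omega
    have h6 := h.ballot s
    rw [h1]
    omega
  · rw [← one_arc_card h, hk]
  · have hnot : 2 * l ∉ openers M := by
      intro hx
      simp only [openers, mem_image] at hx
      obtain ⟨p, hp, e⟩ := hx
      have h1 := (h.1 p hp).1
      have h2 := mem_Icc.mp (h.1 p hp).2.2
      omega
    simpa using hnot

theorem matching_card_eq_W (l k : ℕ) :
    Nat.card {M : Finset (ℕ × ℕ) // IsNoncrossingPerfectMatching l M ∧
      (M.filter (fun p => p.2 = p.1 + 1)).card = k} = (W l l k false).card := by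
  rw [← Nat.card_eq_finsetCard]
  apply Nat.card_eq_of_bijective (fun M => ⟨openers M.1,
    matching_mem_W ((isNCPM_iff_matchOn l M.1).mp M.2.1) M.2.2⟩)
  constructor
  · rintro ⟨M1, hM1⟩ ⟨M2, hM2⟩ he
    have h1 := (isNCPM_iff_matchOn l M1).mp hM1.1
    have h2 := (isNCPM_iff_matchOn l M2).mp hM2.1
    have heq : openers M1 = openers M2 := congrArg Subtype.val he
    exact Subtype.ext (matchOn_unique ((Finset.Icc 1 (2 * l)).card) _ _ _ rfl h1 h2 heq)
  · rintro ⟨O, hO⟩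
    rw [mem_W] at hO
    obtain ⟨hsub, hcard, hbal, hpk, hlast⟩ := hO
    have hll : l + l = 2 * l := by ring
    rw [hll] at hsub hbal
    have hbal2 : ∀ v, ((Finset.Icc 1 (2 * l)) ∩ Finset.Iic v).card
        ≤ 2 * (O ∩ Finset.Iic v).card := by
      intro v
      rcases le_or_gt v (2 * l) with hv | hv
      · have e1 : Finset.Icc 1 (2 * l) ∩ Finset.Iic v = Finset.Icc 1 v := by
          ext x
          simp only [mem_inter, mem_Icc, mem_Iic]
          omega
        have e2 : O ∩ Finset.Iic v = O ∩ Finset.Icc 1 v := by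
          ext x
          simp only [mem_inter, mem_Icc, mem_Iic]
          constructor
          · rintro ⟨hx, h2⟩; exact ⟨hx, (mem_Icc.mp (hsub hx)).1, h2⟩
          · rintro ⟨hx, _, h2⟩; exact ⟨hx, h2⟩
        rw [e1, e2, Nat.card_Icc]
        have := hbal v (by omega)
        omega
      · have e1 : Finset.Icc 1 (2 * l) ∩ Finset.Iic v = Finset.Icc 1 (2 * l) :=
          inter_eq_left.mpr (fun x hx => mem_Iic.mpr (by have := mem_Icc.mp hx; omega))
        have e2 : O ∩ Finset.Iic v = O :=
          inter_eq_left.mpr (fun x hx => mem_Iic.mpr (by have := mem_Icc.mp (hsub hx); omega))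
        rw [e1, e2, Nat.card_Icc, hcard]
        omega
    obtain ⟨M, hM, hOM⟩ := matchOn_exists ((Finset.Icc 1 (2 * l)).card)
      (Finset.Icc 1 (2 * l)) O rfl hsub (by rw [hcard, Nat.card_Icc]; omega) hbal2
    refine ⟨⟨M, (isNCPM_iff_matchOn l M).mpr hM, ?_⟩, ?_⟩
    · rw [one_arc_card hM, hOM]
      exact hpk
    · exact Subtype.ext hOM

/-- The number of noncrossing perfect matchings on `2l` points with exactly `k` arcs of the
form `(i,i+1)` equals the Narayana number `N(l,k) = (1/l)·C(l,k)·C(l,k-1)`. -/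
theorem noncrossing_matching_one_arcs_narayana (l k : ℕ) (hk : 1 ≤ k) (hkl : k ≤ l) :
    (Nat.card {M : Finset (ℕ × ℕ) // IsNoncrossingPerfectMatching l M ∧
        (M.filter (fun p => p.2 = p.1 + 1)).card = k} : ℚ) =
      (1 / (l : ℚ)) * (l.choose k) * (l.choose (k - 1)) := by
  have hl : 1 ≤ l := le_trans hk hkl
  rw [matching_card_eq_W l k, W_card_eq (l + l) l l k false rfl le_rfl]
  rw [G, if_neg (by omega)]
  simp only [Bool.false_eq_true, if_false]
  have c1 : ((l : ℤ) - 1) = ((l - 1 : ℕ) : ℤ) := by omega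
  have c2 : ((k : ℤ) - 1) = ((k - 1 : ℕ) : ℤ) := by omega
  rw [c1, c2, ch_cast, ch_cast, ch_cast, ch_cast]
  have e1 : l - 1 + 1 = l := by omega
  have e2 : k - 1 + 1 = k := by omega
  have iA : l * ((l - 1).choose (k - 1)) = l.choose k * k := by
    have h0 := Nat.add_one_mul_choose_eq (l - 1) (k - 1)
    rw [e1, e2] at h0
    exact h0
  have iB : l * ((l - 1).choose k) = l.choose k * (l - k) := by
    have h1 := Nat.add_one_mul_choose_eq (l - 1) k
    rw [e1] at h1
    exact h1.trans (Nat.choose_succ_right_eq l k)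
  have iC : l.choose k * k = l.choose (k - 1) * (l - (k - 1)) := by
    have h2 := Nat.choose_succ_right_eq l (k - 1)
    rw [e2] at h2
    exact h2
  have qA : (l : ℚ) * ((l - 1).choose (k - 1)) = (l.choose k : ℚ) * k := by
    exact_mod_cast iA
  have qB : (l : ℚ) * ((l - 1).choose k) = (l.choose k : ℚ) * ((l : ℚ) - k) := by
    have := congrArg (Nat.cast : ℕ → ℚ) iB
    push_cast [Nat.cast_sub hkl] at this
    exact this
  have qC : (l.choose k : ℚ) * k = (l.choose (k - 1) : ℚ) * ((l : ℚ) - k + 1) := by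
    have := congrArg (Nat.cast : ℕ → ℚ) iC
    push_cast [Nat.cast_sub (show k - 1 ≤ l by omega), Nat.cast_sub hk] at this
    rw [this]
    ring
  have hl0 : (l : ℚ) ≠ 0 := Nat.cast_ne_zero.mpr (by omega)
  have key : (l : ℚ) * (((l - 1).choose (k - 1) : ℚ) * (l.choose k)
      - (l.choose (k - 1) : ℚ) * ((l - 1).choose k))
      = (l.choose k : ℚ) * (l.choose (k - 1)) := by
    linear_combination ((l.choose k : ℚ)) * qA - ((l.choose (k - 1) : ℚ)) * qB
      + ((l.choose k : ℚ)) * qC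
  field_simp
  linear_combination key
end

section
/- For λ = 2, the number of RNA secondary structures on n vertices with exactly l ≥ 1 arcs and minimum arc-length 2 equals (1/l) * C(n-l, l+1) * C(n-l-1, l-1). -/
/-- `M` is an RNA secondary structure on vertices `1,…,n` with minimum arc-length 2:
every arc `(i,j)` satisfies `1 ≤ i`, `j ≤ n` and `j - i ≥ 2`; no two arcs share a vertex;
and no two arcs cross. -/
def IsSecStr2 (n : ℕ) (M : Finset (ℕ × ℕ)) : Prop :=
  (∀ p ∈ M, 1 ≤ p.1 ∧ p.1 + 2 ≤ p.2 ∧ p.2 ≤ n) ∧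
  (∀ p ∈ M, ∀ q ∈ M, p ≠ q → p.1 ≠ q.1 ∧ p.1 ≠ q.2 ∧ p.2 ≠ q.1 ∧ p.2 ≠ q.2) ∧
  (∀ p ∈ M, ∀ q ∈ M, ¬ (p.1 < q.1 ∧ q.1 < p.2 ∧ p.2 < q.2))

open Finset

namespace SecStrAux

def Aq (a b g : ℕ) : ℚ :=
  ((b+g).choose g : ℚ) * ((a+g+1).choose (g+1)) - ((b+g).choose (g+1) : ℚ) * ((a+g+1).choose g)

def Bq (a b g : ℕ) : ℚ :=
  ((b+g).choose g : ℚ) * ((a+g).choose g) -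
    ((b+g).choose (g+1) : ℚ) * (if g = 0 then 0 else ((a+g).choose (g-1) : ℚ))

lemma Bq_succ (a b g : ℕ) :
    Bq a b (g+1) = ((b+g+1).choose (g+1) : ℚ) * ((a+g+1).choose (g+1)) -
      ((b+g+1).choose (g+2) : ℚ) * ((a+g+1).choose g) := by
  simp only [Bq, show b+(g+1) = b+g+1 by omega, show a+(g+1) = a+g+1 by omega,
    show g+1+1 = g+2 by omega, show g+1-1 = g by omega, if_neg (by omega : ¬ g+1 = 0)]

lemma Bq_zero (a b : ℕ) : Bq a b 0 = 1 := by simp [Bq]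

lemma Aq_zero (a b : ℕ) : Aq a b 0 = (a+1 : ℚ) - b := by simp [Aq]

lemma pasQ (x y : ℕ) : (((x+1).choose (y+1) : ℕ) : ℚ) = (x.choose y : ℚ) + (x.choose (y+1) : ℚ) := by
  rw [Nat.choose_succ_succ]; push_cast; ring

lemma idA1 (a b g : ℕ) :
    Aq (a+1) (b+1) (g+1) = Aq (a+1) (b+1) g + Aq a (b+1) (g+1) + Bq (a+1) b (g+1) := by
  have e1 : (((b+g+2).choose (g+1) : ℕ) : ℚ) = (b+g+1).choose g + (b+g+1).choose (g+1) := by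
    rw [show b+g+2 = (b+g+1)+1 by omega]; exact pasQ _ _
  have e2 : (((b+g+2).choose (g+2) : ℕ) : ℚ) = (b+g+1).choose (g+1) + (b+g+1).choose (g+2) := by
    rw [show b+g+2 = (b+g+1)+1 by omega, show g+2 = (g+1)+1 by omega]; exact pasQ _ _
  have e3 : (((a+g+3).choose (g+2) : ℕ) : ℚ) = (a+g+2).choose (g+1) + (a+g+2).choose (g+2) := by
    rw [show a+g+3 = (a+g+2)+1 by omega, show g+2 = (g+1)+1 by omega]; exact pasQ _ _
  have e4 : (((a+g+3).choose (g+1) : ℕ) : ℚ) = (a+g+2).choose g + (a+g+2).choose (g+1) := by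
    rw [show a+g+3 = (a+g+2)+1 by omega]; exact pasQ _ _
  simp only [Aq, Bq_succ,
    show b+1+(g+1) = b+g+2 by omega, show a+1+(g+1)+1 = a+g+3 by omega,
    show g+1+1 = g+2 by omega, show b+1+g = b+g+1 by omega, show a+1+g+1 = a+g+2 by omega,
    show a+(g+1)+1 = a+g+2 by omega, show b+(g+1) = b+g+1 by omega,
    show a+1+g+2 = a+g+3 by omega, show a+1+(g+1) = a+g+2 by omega,
    e1, e2, e3, e4]
  ring

lemma idA2 (a g : ℕ) :
    Aq (a+1) 0 (g+1) = Aq (a+1) 0 g + Aq a 0 (g+1) := by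
  have e3 : (((a+g+3).choose (g+2) : ℕ) : ℚ) = (a+g+2).choose (g+1) + (a+g+2).choose (g+2) := by
    rw [show a+g+3 = (a+g+2)+1 by omega, show g+2 = (g+1)+1 by omega]; exact pasQ _ _
  simp only [Aq, Nat.zero_add, Nat.choose_self, Nat.choose_succ_self, Nat.cast_zero,
    Nat.cast_one, zero_mul, sub_zero, one_mul,
    show (0:ℕ)+(g+1) = g+1 by omega, show (0:ℕ)+g = g by omega,
    show a+1+(g+1)+1 = a+g+3 by omega, show g+1+1 = g+2 by omega,
    show a+1+g+1 = a+g+2 by omega, show a+(g+1)+1 = a+g+2 by omega]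
  exact e3

lemma idA3 (g : ℕ) : Aq 0 0 (g+1) = Aq 0 0 g := by
  simp [Aq, Nat.choose_succ_self]

lemma idB1 (a b g : ℕ) :
    Bq a (b+1) (g+1) = Aq a (b+1) g + Bq a b (g+1) := by
  have e1 : (((b+g+2).choose (g+1) : ℕ) : ℚ) = (b+g+1).choose g + (b+g+1).choose (g+1) := by
    rw [show b+g+2 = (b+g+1)+1 by omega]; exact pasQ _ _
  have e2 : (((b+g+2).choose (g+2) : ℕ) : ℚ) = (b+g+1).choose (g+1) + (b+g+1).choose (g+2) := by
    rw [show b+g+2 = (b+g+1)+1 by omega, show g+2 = (g+1)+1 by omega]; exact pasQ _ _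
  simp only [Bq_succ, Aq,
    show b+1+g+1 = b+g+2 by omega, show b+1+g = b+g+1 by omega,
    e1, e2]
  ring

lemma idB2 (a g : ℕ) : Bq a 0 (g+1) = Aq a 0 g := by
  simp only [Bq_succ, Aq, Nat.zero_add, show (0:ℕ)+g+1 = g+1 by omega, show (0:ℕ)+g = g by omega,
    Nat.choose_self, Nat.choose_succ_self]


end SecStrAux

namespace SecStrAux

lemma FI (k g : ℕ) :
    Aq (k+1) (k+1) g = (1/(k+1:ℚ)) * ((k+g+2).choose (k+2)) * ((k+g+1).choose k) := by
  have fne : ∀ m : ℕ, ((m.factorial : ℚ)) ≠ 0 := fun m =>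
    Nat.cast_ne_zero.mpr (Nat.factorial_ne_zero m)
  rw [Aq]
  simp only [show k+1+g = k+g+1 by omega, show k+1+g+1 = k+g+2 by omega]
  rw [Nat.cast_choose ℚ (show g ≤ k+g+1 by omega),
      Nat.cast_choose ℚ (show g+1 ≤ k+g+2 by omega),
      Nat.cast_choose ℚ (show g+1 ≤ k+g+1 by omega),
      Nat.cast_choose ℚ (show g ≤ k+g+2 by omega),
      Nat.cast_choose ℚ (show k+2 ≤ k+g+2 by omega),
      Nat.cast_choose ℚ (show k ≤ k+g+1 by omega)]
  simp only [show k+g+1-g = k+1 by omega, show k+g+2-(g+1) = k+1 by omega,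
    show k+g+1-(g+1) = k by omega, show k+g+2-g = k+2 by omega,
    show k+g+2-(k+2) = g by omega, show k+g+1-k = g+1 by omega]
  rw [Nat.factorial_succ (k+g+1),
      Nat.factorial_succ (k+1),
      Nat.factorial_succ k,
      Nat.factorial_succ g]
  push_cast
  field_simp
  ring

end SecStrAux

namespace SecStrAux

def Pred (n a b : ℕ) (t : Bool) (L R : Finset ℕ) : Prop :=
  L ⊆ Finset.Icc 1 n ∧ R ⊆ Finset.Icc 1 n ∧ Disjoint L R ∧ L.card = a ∧ R.card = b ∧
  (∀ x : ℕ, (R.filter (· ≤ x)).card ≤ (L.filter (· ≤ x)).card) ∧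
  (∀ i ∈ L, i + 1 ∉ R) ∧ (t = true → n ∉ L)

open Classical in
noncomputable def bp (n a b : ℕ) (t : Bool) : Finset (Finset ℕ × Finset ℕ) :=
  ((Finset.Icc 1 n).powerset ×ˢ (Finset.Icc 1 n).powerset).filter
    (fun p => Pred n a b t p.1 p.2)

lemma mem_bp {n a b : ℕ} {t : Bool} {p : Finset ℕ × Finset ℕ} :
    p ∈ bp n a b t ↔ Pred n a b t p.1 p.2 := by
  classical
  constructor
  · intro h; exact (Finset.mem_filter.mp h).2
  · intro h
    refine Finset.mem_filter.mpr ⟨?_, h⟩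
    exact Finset.mem_product.mpr ⟨Finset.mem_powerset.mpr h.1, Finset.mem_powerset.mpr h.2.1⟩

lemma bp_empty_ab {n a b : ℕ} {t : Bool} (h : a < b) : bp n a b t = ∅ := by
  refine Finset.eq_empty_iff_forall_notMem.mpr (fun p hp => ?_)
  obtain ⟨h1, h2, h3, h4, h5, h6, h7, h8⟩ := mem_bp.mp hp
  have hRfull : p.2.filter (· ≤ n) = p.2 :=
    Finset.filter_eq_self.mpr (fun x hx => (Finset.mem_Icc.mp (h2 hx)).2)
  have := h6 n
  rw [hRfull] at this
  have hle : (p.1.filter (· ≤ n)).card ≤ a := h4 ▸ Finset.card_filter_le _ _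
  omega

lemma bp_empty_lt {n a b : ℕ} {t : Bool} (h : n < a + b) : bp n a b t = ∅ := by
  refine Finset.eq_empty_iff_forall_notMem.mpr (fun p hp => ?_)
  obtain ⟨h1, h2, h3, h4, h5, h6, h7, h8⟩ := mem_bp.mp hp
  have hc : (p.1 ∪ p.2).card = a + b := by
    rw [Finset.card_union_of_disjoint h3, h4, h5]
  have hsub : p.1 ∪ p.2 ⊆ Finset.Icc 1 n := Finset.union_subset h1 h2
  have := Finset.card_le_card hsub
  rw [hc, Nat.card_Icc] at this
  omega

lemma bp_f0_pos {a b : ℕ} {t : Bool} (hb : 1 ≤ b) : bp (a+b) a b t = ∅ := by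
  refine Finset.eq_empty_iff_forall_notMem.mpr (fun p hp => ?_)
  obtain ⟨h1, h2, h3, h4, h5, h6, h7, h8⟩ := mem_bp.mp hp
  have hR : p.2.Nonempty := Finset.card_pos.mp (by omega)
  set j := p.2.min' hR with hj
  have hjR : j ∈ p.2 := p.2.min'_mem hR
  have hjIcc := Finset.mem_Icc.mp (h2 hjR)
  -- L ∪ R = Icc 1 (a+b)
  have hc : (p.1 ∪ p.2).card = a + b := by
    rw [Finset.card_union_of_disjoint h3, h4, h5]
  have huniv : p.1 ∪ p.2 = Finset.Icc 1 (a+b) := by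
    apply Finset.eq_of_subset_of_card_le (Finset.union_subset h1 h2)
    rw [hc, Nat.card_Icc]; omega
  by_cases hj1 : j = 1
  · have := h6 1
    have hfR : 1 ≤ (p.2.filter (· ≤ 1)).card := by
      refine Finset.card_pos.mpr ⟨1, Finset.mem_filter.mpr ⟨hj1 ▸ hjR, le_refl 1⟩⟩
    have hfL : p.1.filter (· ≤ 1) = ∅ := by
      refine Finset.eq_empty_iff_forall_notMem.mpr (fun x hx => ?_)
      obtain ⟨hxL, hx1⟩ := Finset.mem_filter.mp hx
      have := (Finset.mem_Icc.mp (h1 hxL)).1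
      have hx1' : x = 1 := by omega
      subst hx1'
      exact (Finset.disjoint_left.mp h3 hxL) (hj1 ▸ hjR)
    rw [hfL, Finset.card_empty] at this
    omega
  · have hjm : j - 1 ∈ Finset.Icc 1 (a+b) := Finset.mem_Icc.mpr (by omega)
    rw [← huniv] at hjm
    rcases Finset.mem_union.mp hjm with hL | hRm
    · refine h7 _ hL ?_
      have hq : j - 1 + 1 = j := by omega
      rw [hq]; exact hjR
    · have := p.2.min'_le _ hRm
      omega

lemma bp_f0_b0_false {a : ℕ} : bp a a 0 false = {(Finset.Icc 1 a, ∅)} := by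
  ext p
  simp only [Finset.mem_singleton]
  constructor
  · intro hp
    obtain ⟨h1, h2, h3, h4, h5, h6, h7, h8⟩ := mem_bp.mp hp
    have hR : p.2 = ∅ := Finset.card_eq_zero.mp h5
    have hL : p.1 = Finset.Icc 1 a := by
      apply Finset.eq_of_subset_of_card_le h1
      rw [h4, Nat.card_Icc]; omega
    exact Prod.ext hL hR
  · intro hp
    subst hp
    refine mem_bp.mpr ⟨le_refl _, by simp, by simp, by rw [Nat.card_Icc]; omega, by simp,
      fun x => by simp, fun i _ => by simp, by simp⟩

lemma bp_f0_b0_true {a : ℕ} (ha : 1 ≤ a) : bp a a 0 true = ∅ := by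
  refine Finset.eq_empty_iff_forall_notMem.mpr (fun p hp => ?_)
  obtain ⟨h1, h2, h3, h4, h5, h6, h7, h8⟩ := mem_bp.mp hp
  have hL : p.1 = Finset.Icc 1 a := by
    apply Finset.eq_of_subset_of_card_le h1
    rw [h4, Nat.card_Icc]; omega
  exact h8 rfl (hL ▸ Finset.mem_Icc.mpr (by omega))

lemma bp_zero {a b : ℕ} {t : Bool} (ha : a = 0) (hb : b = 0) : bp 0 a b t = {(∅, ∅)} := by
  subst ha; subst hb
  ext p
  simp only [Finset.mem_singleton]
  constructor
  · intro hp
    obtain ⟨h1, h2, h3, h4, h5, h6, h7, h8⟩ := mem_bp.mp hp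
    exact Prod.ext (Finset.card_eq_zero.mp h4) (Finset.card_eq_zero.mp h5)
  · intro hp
    subst hp
    refine mem_bp.mpr ⟨by simp, by simp, by simp, by simp, by simp,
      fun x => by simp, fun i hi => by simp at hi, fun _ => by simp⟩

end SecStrAux

namespace SecStrAux

lemma notmem_of_subset_Icc {s : Finset ℕ} {n x : ℕ} (h : s ⊆ Finset.Icc 1 n) (hx : n < x) :
    x ∉ s := fun hm => by have := (Finset.mem_Icc.mp (h hm)).2; omega

lemma subset_Icc_succ {s : Finset ℕ} {n : ℕ} (h : s ⊆ Finset.Icc 1 n) :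
    s ⊆ Finset.Icc 1 (n+1) := h.trans (Finset.Icc_subset_Icc_right (by omega))

lemma subset_Icc_of_notmem {s : Finset ℕ} {n : ℕ} (h : s ⊆ Finset.Icc 1 (n+1))
    (hn : n+1 ∉ s) : s ⊆ Finset.Icc 1 n := by
  intro x hx
  have := Finset.mem_Icc.mp (h hx)
  have : x ≠ n+1 := fun he => hn (he ▸ hx)
  exact Finset.mem_Icc.mpr ⟨(Finset.mem_Icc.mp (h hx)).1, by
    have := (Finset.mem_Icc.mp (h hx)).2; omega⟩

/-- count of a filter `≤ x` after erasing an element `> x` is unchanged -/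
lemma filter_le_erase_high {s : Finset ℕ} {v x : ℕ} (hvx : ¬ v ≤ x) :
    (s.erase v).filter (· ≤ x) = s.filter (· ≤ x) := by
  rw [Finset.filter_erase]
  exact Finset.erase_eq_of_notMem (fun hm => hvx (Finset.mem_filter.mp hm).2)

lemma filter_le_all {s : Finset ℕ} {n x : ℕ} (h : s ⊆ Finset.Icc 1 n) (hnx : n ≤ x) :
    s.filter (· ≤ x) = s := by
  refine Finset.filter_eq_self.mpr (fun y hy => ?_)
  have := (Finset.mem_Icc.mp (h hy)).2
  omega

lemma cardF (n a b : ℕ) (t : Bool) :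
    ((bp (n+1) a b t).filter (fun p => n+1 ∉ p.1 ∧ n+1 ∉ p.2)).card = (bp n a b false).card := by
  classical
  apply Finset.card_nbij' (i := id) (j := id)
  · intro p hp
    obtain ⟨hpm, hp1, hp2⟩ : p ∈ bp (n+1) a b t ∧ n+1 ∉ p.1 ∧ n+1 ∉ p.2 := by
      have := Finset.mem_filter.mp hp; exact ⟨this.1, this.2.1, this.2.2⟩
    obtain ⟨h1,h2,h3,h4,h5,h6,h7,h8⟩ := mem_bp.mp hpm
    exact mem_bp.mpr ⟨subset_Icc_of_notmem h1 hp1, subset_Icc_of_notmem h2 hp2,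
      h3, h4, h5, h6, h7, fun h => absurd h (by simp)⟩
  · intro q hq
    obtain ⟨h1,h2,h3,h4,h5,h6,h7,h8⟩ := mem_bp.mp hq
    refine Finset.mem_filter.mpr ⟨mem_bp.mpr ⟨subset_Icc_succ h1, subset_Icc_succ h2,
      h3, h4, h5, h6, h7, fun _ => notmem_of_subset_Icc h1 (by omega)⟩,
      notmem_of_subset_Icc h1 (by omega), notmem_of_subset_Icc h2 (by omega)⟩
  · intro p _; rfl
  · intro q _; rfl

lemma cardL_true (n a b : ℕ) :
    (bp (n+1) a b true).filter (fun p => n+1 ∈ p.1) = ∅ := by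
  refine Finset.eq_empty_iff_forall_notMem.mpr (fun p hp => ?_)
  obtain ⟨hpm, hp1⟩ := Finset.mem_filter.mp hp
  exact (mem_bp.mp hpm).2.2.2.2.2.2.2 rfl hp1

lemma cardL_zero (n b : ℕ) (t : Bool) :
    (bp (n+1) 0 b t).filter (fun p => n+1 ∈ p.1) = ∅ := by
  refine Finset.eq_empty_iff_forall_notMem.mpr (fun p hp => ?_)
  obtain ⟨hpm, hp1⟩ := Finset.mem_filter.mp hp
  obtain ⟨h1,h2,h3,h4,h5,h6,h7,h8⟩ := mem_bp.mp hpm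
  rw [Finset.card_eq_zero.mp h4] at hp1
  simp at hp1

lemma cardR_zero (n a : ℕ) (t : Bool) :
    (bp (n+1) a 0 t).filter (fun p => n+1 ∈ p.2) = ∅ := by
  refine Finset.eq_empty_iff_forall_notMem.mpr (fun p hp => ?_)
  obtain ⟨hpm, hp1⟩ := Finset.mem_filter.mp hp
  obtain ⟨h1,h2,h3,h4,h5,h6,h7,h8⟩ := mem_bp.mp hpm
  rw [Finset.card_eq_zero.mp h5] at hp1
  exact absurd hp1 (Finset.notMem_empty _)

lemma cardL_false (n a b : ℕ) :
    ((bp (n+1) (a+1) b false).filter (fun p => n+1 ∈ p.1)).card = (bp n a b false).card := by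
  classical
  apply Finset.card_nbij' (i := fun p => (p.1.erase (n+1), p.2))
    (j := fun q => (insert (n+1) q.1, q.2))
  · intro p hp
    obtain ⟨hpm, hp1⟩ := Finset.mem_filter.mp hp
    obtain ⟨h1,h2,h3,h4,h5,h6,h7,h8⟩ := mem_bp.mp hpm
    have hnR : n+1 ∉ p.2 := Finset.disjoint_left.mp h3 hp1
    have hRn : p.2 ⊆ Finset.Icc 1 n := subset_Icc_of_notmem h2 hnR
    refine mem_bp.mpr ⟨?_, hRn, Finset.disjoint_of_subset_left (Finset.erase_subset _ _) h3,
      by rw [Finset.card_erase_of_mem hp1, h4]; omega, h5, ?_, ?_, fun h => absurd h (by simp)⟩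
    · exact subset_Icc_of_notmem (fun x hx => h1 (Finset.mem_of_mem_erase hx))
        (Finset.notMem_erase _ _)
    · intro x
      by_cases hx : n+1 ≤ x
      · have hR : p.2.filter (· ≤ x) = p.2 := filter_le_all hRn (by omega)
        have hL : (p.1.erase (n+1)).filter (· ≤ x) = p.1.erase (n+1) :=
          filter_le_all (subset_Icc_of_notmem (fun y hy => h1 (Finset.mem_of_mem_erase hy))
            (Finset.notMem_erase _ _)) (by omega)
        rw [hR, hL, h5, Finset.card_erase_of_mem hp1, h4]
        -- b ≤ a: from ballot at n
        have hbal := h6 n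
        have hRf : p.2.filter (· ≤ n) = p.2 := filter_le_all hRn (le_refl n)
        have hLf : p.1.filter (· ≤ n) = p.1.erase (n+1) := by
          ext y
          simp only [Finset.mem_filter, Finset.mem_erase]
          constructor
          · rintro ⟨hy, hyn⟩; exact ⟨by omega, hy⟩
          · rintro ⟨hy, hyn⟩
            refine ⟨hyn, ?_⟩
            have := (Finset.mem_Icc.mp (h1 hyn)).2
            omega
        rw [hRf, hLf, Finset.card_erase_of_mem hp1, h4] at hbal
        rw [h5] at hbal
        omega
      · rw [filter_le_erase_high hx]
        exact h6 x
    · intro i hi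
      exact h7 i (Finset.mem_of_mem_erase hi)
  · intro q hq
    obtain ⟨h1,h2,h3,h4,h5,h6,h7,h8⟩ := mem_bp.mp hq
    have hnL : n+1 ∉ q.1 := notmem_of_subset_Icc h1 (by omega)
    have hnR : n+1 ∉ q.2 := notmem_of_subset_Icc h2 (by omega)
    refine Finset.mem_filter.mpr ⟨mem_bp.mpr ⟨?_, subset_Icc_succ h2, ?_, ?_, h5, ?_, ?_,
      fun h => absurd h (by simp)⟩, Finset.mem_insert_self _ _⟩
    · exact Finset.insert_subset (Finset.mem_Icc.mpr (by omega)) (subset_Icc_succ h1)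
    · exact Finset.disjoint_insert_left.mpr ⟨hnR, h3⟩
    · rw [Finset.card_insert_of_notMem hnL, h4]
    · intro x
      dsimp only
      rw [Finset.filter_insert]
      by_cases hx : n+1 ≤ x
      · rw [if_pos hx]
        have := h6 x
        have hcard : (insert (n+1) (q.1.filter (· ≤ x))).card = (q.1.filter (· ≤ x)).card + 1 :=
          Finset.card_insert_of_notMem (fun hm => hnL (Finset.mem_filter.mp hm).1)
        rw [hcard]
        omega
      · rw [if_neg hx]
        exact h6 x
    · intro i hi
      rcases Finset.mem_insert.mp hi with he | hm
      · subst he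
        exact notmem_of_subset_Icc h2 (by omega)
      · exact h7 i hm
  · intro p hp
    obtain ⟨hpm, hp1⟩ := Finset.mem_filter.mp hp
    exact Prod.ext (Finset.insert_erase hp1) rfl
  · intro q hq
    obtain ⟨h1,h2,h3,h4,h5,h6,h7,h8⟩ := mem_bp.mp hq
    have hnL : n+1 ∉ q.1 := notmem_of_subset_Icc h1 (by omega)
    exact Prod.ext (Finset.erase_insert hnL) rfl

end SecStrAux

namespace SecStrAux

lemma cardR (n a b : ℕ) (t : Bool) (hba : b + 1 ≤ a) :
    ((bp (n+1) a (b+1) t).filter (fun p => n+1 ∈ p.2)).card = (bp n a b true).card := by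
  classical
  apply Finset.card_nbij' (i := fun p => (p.1, p.2.erase (n+1)))
    (j := fun q => (q.1, insert (n+1) q.2))
  · intro p hp
    obtain ⟨hpm, hp1⟩ := Finset.mem_filter.mp hp
    obtain ⟨h1,h2,h3,h4,h5,h6,h7,h8⟩ := mem_bp.mp hpm
    have hnL : n+1 ∉ p.1 := fun hm => Finset.disjoint_left.mp h3 hm hp1
    have hLn : p.1 ⊆ Finset.Icc 1 n := subset_Icc_of_notmem h1 hnL
    refine mem_bp.mpr ⟨hLn, ?_, Finset.disjoint_of_subset_right (Finset.erase_subset _ _) h3,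
      h4, by rw [Finset.card_erase_of_mem hp1, h5]; omega, ?_, ?_, ?_⟩
    · exact subset_Icc_of_notmem (fun x hx => h2 (Finset.mem_of_mem_erase hx))
        (Finset.notMem_erase _ _)
    · intro x
      by_cases hx : n+1 ≤ x
      · have hR : (p.2.erase (n+1)).filter (· ≤ x) = p.2.erase (n+1) :=
          filter_le_all (subset_Icc_of_notmem (fun y hy => h2 (Finset.mem_of_mem_erase hy))
            (Finset.notMem_erase _ _)) (by omega)
        have hL : p.1.filter (· ≤ x) = p.1 := filter_le_all hLn (by omega)
        rw [hR, hL, h4, Finset.card_erase_of_mem hp1, h5]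
        omega
      · rw [filter_le_erase_high hx]
        exact h6 x
    · intro i hi
      exact fun hm => h7 i hi (Finset.mem_of_mem_erase hm)
    · intro _ hn
      exact absurd hp1 (h7 n hn)
  · intro q hq
    obtain ⟨h1,h2,h3,h4,h5,h6,h7,h8⟩ := mem_bp.mp hq
    have hnL : n+1 ∉ q.1 := notmem_of_subset_Icc h1 (by omega)
    have hnR : n+1 ∉ q.2 := notmem_of_subset_Icc h2 (by omega)
    refine Finset.mem_filter.mpr ⟨mem_bp.mpr ⟨subset_Icc_succ h1, ?_, ?_, h4, ?_, ?_, ?_,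
      fun _ => hnL⟩, Finset.mem_insert_self _ _⟩
    · exact Finset.insert_subset (Finset.mem_Icc.mpr (by omega)) (subset_Icc_succ h2)
    · exact Finset.disjoint_insert_right.mpr ⟨hnL, h3⟩
    · rw [Finset.card_insert_of_notMem hnR, h5]
    · intro x
      dsimp only
      rw [Finset.filter_insert]
      by_cases hx : n+1 ≤ x
      · rw [if_pos hx]
        have hcard : (insert (n+1) (q.2.filter (· ≤ x))).card = (q.2.filter (· ≤ x)).card + 1 :=
          Finset.card_insert_of_notMem (fun hm => hnR (Finset.mem_filter.mp hm).1)
        rw [hcard]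
        have hR : q.2.filter (· ≤ x) = q.2 := filter_le_all h2 (by omega)
        have hL : q.1.filter (· ≤ x) = q.1 := filter_le_all h1 (by omega)
        rw [hR, hL, h4, h5]
        omega
      · rw [if_neg hx]
        exact h6 x
    · intro i hi
      intro hm
      rcases Finset.mem_insert.mp hm with he | hmm
      · have : i = n := by omega
        subst this
        exact h8 rfl hi
      · exact h7 i hi hmm
  · intro p hp
    obtain ⟨hpm, hp1⟩ := Finset.mem_filter.mp hp
    exact Prod.ext rfl (Finset.insert_erase hp1)
  · intro q hq
    obtain ⟨h1,h2,h3,h4,h5,h6,h7,h8⟩ := mem_bp.mp hq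
    have hnR : n+1 ∉ q.2 := notmem_of_subset_Icc h2 (by omega)
    exact Prod.ext rfl (Finset.erase_insert hnR)

lemma bp_split (n a b : ℕ) (t : Bool) :
    (bp (n+1) a b t).card
      = ((bp (n+1) a b t).filter (fun p => n+1 ∉ p.1 ∧ n+1 ∉ p.2)).card
        + ((bp (n+1) a b t).filter (fun p => n+1 ∈ p.1)).card
        + ((bp (n+1) a b t).filter (fun p => n+1 ∈ p.2)).card := by
  classical
  have h1 := Finset.card_filter_add_card_filter_not
    (s := bp (n+1) a b t) (fun p => n+1 ∈ p.1)
  have h2 := Finset.card_filter_add_card_filter_not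
    (s := (bp (n+1) a b t).filter (fun p => ¬ n+1 ∈ p.1)) (fun p => n+1 ∈ p.2)
  rw [Finset.filter_filter, Finset.filter_filter] at h2
  have e1 : (bp (n+1) a b t).filter (fun p => ¬ n+1 ∈ p.1 ∧ n+1 ∈ p.2)
      = (bp (n+1) a b t).filter (fun p => n+1 ∈ p.2) := by
    apply Finset.filter_congr
    intro p hp
    obtain ⟨h1',h2',h3',h4',h5',h6',h7',h8'⟩ := mem_bp.mp hp
    constructor
    · exact fun h => h.2
    · exact fun h => ⟨fun hm => Finset.disjoint_left.mp h3' hm h, h⟩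
  have e2 : (bp (n+1) a b t).filter (fun p => ¬ n+1 ∈ p.1 ∧ ¬ n+1 ∈ p.2)
      = (bp (n+1) a b t).filter (fun p => n+1 ∉ p.1 ∧ n+1 ∉ p.2) := rfl
  rw [e1, e2] at h2
  omega

end SecStrAux

namespace SecStrAux

lemma Aq_diag (a g : ℕ) : Aq a (a+1) g = 0 := by
  simp only [Aq, show a+1+g = a+g+1 by omega]
  ring

noncomputable def G (n a b : ℕ) (t : Bool) : ℚ :=
  if n < a + b then 0
  else if a < b then 0
  else if n = a + b then (if b = 0 ∧ (t = true → n = 0) then 1 else 0)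
  else if t then Bq a b (n - a - b - 1) else Aq a b (n - a - b - 1)

lemma G_lt {n a b : ℕ} {t : Bool} (h : n < a + b) : G n a b t = 0 := by
  rw [G, if_pos h]

lemma G_ab {n a b : ℕ} {t : Bool} (h : a < b) : G n a b t = 0 := by
  rw [G]
  by_cases h1 : n < a + b
  · rw [if_pos h1]
  · rw [if_neg h1, if_pos h]

lemma G_f0 {a b : ℕ} {t : Bool} : G (a+b) a b t = if b = 0 ∧ (t = true → a+b = 0) then 1 else 0 := by
  rw [G, if_neg (lt_irrefl _)]
  by_cases h : a < b
  · rw [if_pos h, if_neg (by omega)]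
  · rw [if_neg h, if_pos rfl]

lemma G_false {a b : ℕ} (g : ℕ) (hba : b ≤ a) : G (a+b+g+1) a b false = Aq a b g := by
  rw [G, if_neg (by omega), if_neg (by omega), if_neg (by omega), if_neg (by simp),
    show a+b+g+1-a-b-1 = g by omega]

lemma G_true {a b : ℕ} (g : ℕ) (hba : b ≤ a) : G (a+b+g+1) a b true = Bq a b g := by
  rw [G, if_neg (by omega), if_neg (by omega), if_neg (by omega), if_pos rfl,
    show a+b+g+1-a-b-1 = g by omega]

/-- the `G`-value of the left child, valid whether or not `b ≤ a'`. -/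
lemma G_false_child {a b g : ℕ} (hba : b ≤ a + 1) : G (a+b+g+1) a b false = Aq a b g := by
  by_cases h : b ≤ a
  · exact G_false g h
  · have hb : b = a + 1 := by omega
    subst hb
    rw [G_ab (by omega), Aq_diag]

lemma bp_card : ∀ n a b : ℕ, ∀ t : Bool, ((bp n a b t).card : ℚ) = G n a b t := by
  intro n
  induction n with
  | zero =>
    intro a b t
    by_cases h : a = 0 ∧ b = 0
    · obtain ⟨rfl, rfl⟩ := h
      rw [bp_zero rfl rfl]
      simp [G]
    · have hpos : 0 < a + b := by omega
      rw [bp_empty_lt hpos, G_lt hpos]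
      simp
  | succ n ih =>
    intro a b t
    by_cases hab : a < b
    · rw [bp_empty_ab hab, G_ab hab]; simp
    have hba : b ≤ a := by omega
    by_cases h1 : n + 1 < a + b
    · rw [bp_empty_lt h1, G_lt h1]; simp
    by_cases h2 : n + 1 = a + b
    · rcases Nat.eq_zero_or_pos b with hb | hb
      · subst hb
        have ha : a = n + 1 := by omega
        subst ha
        rcases t with _ | _
        · rw [show n+1 = (n+1)+0 from rfl] at *
          rw [bp_f0_b0_false, G_f0]
          simp
        · rw [show n+1 = (n+1)+0 from rfl] at *
          rw [bp_f0_b0_true (by omega), G_f0]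
          simp
      · rw [h2, bp_f0_pos hb, G_f0, if_neg (by omega)]
        simp
    -- main case
    have hg : ∃ g, n = a + b + g := ⟨n - a - b, by omega⟩
    obtain ⟨g, rfl⟩ := hg
    have hsplit := bp_split (a+b+g) a b t
    rcases t with _ | _
    · -- t = false
      have hF : (((bp (a+b+g+1) a b false).filter
          (fun p => a+b+g+1 ∉ p.1 ∧ a+b+g+1 ∉ p.2)).card : ℚ) = G (a+b+g) a b false := by
        rw [cardF (a+b+g) a b false]; exact ih a b false
      have hL : (((bp (a+b+g+1) a b false).filter (fun p => a+b+g+1 ∈ p.1)).card : ℚ)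
          = (if a = 0 then 0 else G (a+b+g) (a-1) b false) := by
        rcases a with _ | a'
        · rw [cardL_zero]; simp
        · rw [if_neg (by omega), cardL_false (a'+1+b+g) a' b]
          have : a' + 1 - 1 = a' := by omega
          rw [this]
          exact ih a' b false
      have hR : (((bp (a+b+g+1) a b false).filter (fun p => a+b+g+1 ∈ p.2)).card : ℚ)
          = (if b = 0 then 0 else G (a+b+g) a (b-1) true) := by
        rcases b with _ | b'
        · rw [cardR_zero]; simp
        · rw [if_neg (by omega), cardR (a+(b'+1)+g) a b' false (by omega)]
          have : b' + 1 - 1 = b' := by omega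
          rw [this]
          exact ih a b' true
      rw [G_false g hba]
      have hcast : ((bp (a+b+g+1) a b false).card : ℚ)
          = (((bp (a+b+g+1) a b false).filter
              (fun p => a+b+g+1 ∉ p.1 ∧ a+b+g+1 ∉ p.2)).card : ℚ)
            + (((bp (a+b+g+1) a b false).filter (fun p => a+b+g+1 ∈ p.1)).card : ℚ)
            + (((bp (a+b+g+1) a b false).filter (fun p => a+b+g+1 ∈ p.2)).card : ℚ) := by
        exact_mod_cast congrArg (Nat.cast : ℕ → ℚ) hsplit
      rw [hcast, hF, hL, hR]
      clear hF hL hR hsplit hcast ih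
      -- now pure algebra on G-values
      rcases a with _ | a'
      · have hb0 : b = 0 := by omega
        subst hb0
        simp only [if_pos rfl]
        rcases g with _ | g'
        · rw [show (0:ℕ)+0+0 = 0+0 from rfl, G_f0]
          simp [Aq_zero]
        · rw [show (0:ℕ)+0+(g'+1) = 0+0+g'+1 by omega, G_false g' (by omega), idA3]
          simp
      · rcases b with _ | b'
        · simp only [if_neg (Nat.succ_ne_zero a'), if_pos rfl]
          have hLval : G (a'+1+0+g) (a'+1-1) 0 false = Aq a' 0 g := by
            rw [show a'+1-1 = a' from rfl, show a'+1+0+g = a'+0+g+1 by omega]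
            exact G_false_child (by omega)
          rw [hLval]
          rcases g with _ | g'
          · rw [show a'+1+0+0 = (a'+1)+0 from rfl, G_f0]
            simp [Aq_zero]
            push_cast
            ring
          · rw [show a'+1+0+(g'+1) = (a'+1)+0+g'+1 by omega, G_false g' (by omega), idA2]
            simp
        · simp only [if_neg (Nat.succ_ne_zero a'), if_neg (Nat.succ_ne_zero b')]
          have hLval : G (a'+1+(b'+1)+g) (a'+1-1) (b'+1) false = Aq a' (b'+1) g := by
            rw [show a'+1-1 = a' from rfl, show a'+1+(b'+1)+g = a'+(b'+1)+g+1 by omega]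
            exact G_false_child (by omega)
          have hRval : G (a'+1+(b'+1)+g) (a'+1) ((b'+1)-1) true = Bq (a'+1) b' g := by
            rw [show (b'+1)-1 = b' from rfl, show a'+1+(b'+1)+g = (a'+1)+b'+g+1 by omega]
            exact G_true g (by omega)
          rw [hLval, hRval]
          rcases g with _ | g'
          · rw [show a'+1+(b'+1)+0 = (a'+1)+(b'+1) from rfl, G_f0]
            rw [if_neg (by omega)]
            rw [Aq_zero, Aq_zero, Bq_zero]
            push_cast
            ring
          · rw [show a'+1+(b'+1)+(g'+1) = (a'+1)+(b'+1)+g'+1 by omega, G_false g' (by omega)]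
            exact (idA1 a' b' g').symm
    · -- t = true
      have hF : (((bp (a+b+g+1) a b true).filter
          (fun p => a+b+g+1 ∉ p.1 ∧ a+b+g+1 ∉ p.2)).card : ℚ) = G (a+b+g) a b false := by
        rw [cardF (a+b+g) a b true]; exact ih a b false
      have hL : (((bp (a+b+g+1) a b true).filter (fun p => a+b+g+1 ∈ p.1)).card : ℚ) = 0 := by
        rw [cardL_true]; simp
      have hR : (((bp (a+b+g+1) a b true).filter (fun p => a+b+g+1 ∈ p.2)).card : ℚ)
          = (if b = 0 then 0 else G (a+b+g) a (b-1) true) := by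
        rcases b with _ | b'
        · rw [cardR_zero]; simp
        · rw [if_neg (by omega), cardR (a+(b'+1)+g) a b' true (by omega)]
          have : b' + 1 - 1 = b' := by omega
          rw [this]
          exact ih a b' true
      rw [G_true g hba]
      have hcast : ((bp (a+b+g+1) a b true).card : ℚ)
          = (((bp (a+b+g+1) a b true).filter
              (fun p => a+b+g+1 ∉ p.1 ∧ a+b+g+1 ∉ p.2)).card : ℚ)
            + (((bp (a+b+g+1) a b true).filter (fun p => a+b+g+1 ∈ p.1)).card : ℚ)
            + (((bp (a+b+g+1) a b true).filter (fun p => a+b+g+1 ∈ p.2)).card : ℚ) := by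
        exact_mod_cast congrArg (Nat.cast : ℕ → ℚ) hsplit
      rw [hcast, hF, hL, hR]
      clear hF hL hR hsplit hcast ih
      rcases b with _ | b'
      · simp only [if_pos rfl]
        rcases g with _ | g'
        · rw [show a+0+0 = a+0 from rfl, G_f0]
          simp [Bq_zero]
        · rw [show a+0+(g'+1) = a+0+g'+1 by omega, G_false g' (by omega), idB2]
          simp
      · simp only [if_neg (Nat.succ_ne_zero b')]
        have hRval : G (a+(b'+1)+g) a ((b'+1)-1) true = Bq a b' g := by
          rw [show (b'+1)-1 = b' from rfl, show a+(b'+1)+g = a+b'+g+1 by omega]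
          exact G_true g (by omega)
        rw [hRval]
        rcases g with _ | g'
        · rw [show a+(b'+1)+0 = a+(b'+1) from rfl, G_f0]
          rw [if_neg (by omega), Bq_zero, Bq_zero]
          simp
        · rw [show a+(b'+1)+(g'+1) = a+(b'+1)+g'+1 by omega, G_false g' (by omega)]
          rw [add_zero]; exact (idB1 a b' g').symm

end SecStrAux

namespace SecStrAux

def buildM : ℕ → Finset ℕ → Finset ℕ → Finset (ℕ × ℕ)
  | 0, _, _ => ∅
  | (k+1), L, R =>
    if hR : R.Nonempty then
      if hL : (L.filter (· < R.min' hR)).Nonempty then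
        insert ((L.filter (· < R.min' hR)).max' hL, R.min' hR)
          (buildM k (L.erase ((L.filter (· < R.min' hR)).max' hL)) (R.erase (R.min' hR)))
      else ∅
    else ∅

lemma buildM_succ (k : ℕ) (L R : Finset ℕ) (hR : R.Nonempty)
    (hL : (L.filter (· < R.min' hR)).Nonempty) :
    buildM (k+1) L R = insert ((L.filter (· < R.min' hR)).max' hL, R.min' hR)
      (buildM k (L.erase ((L.filter (· < R.min' hR)).max' hL)) (R.erase (R.min' hR))) := by
  rw [buildM, dif_pos hR, dif_pos hL]

/-- Invariant for the construction. -/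
def Inv (n : ℕ) (L R : Finset ℕ) : Prop :=
  L ⊆ Finset.Icc 1 n ∧ R ⊆ Finset.Icc 1 n ∧ Disjoint L R ∧ L.card = R.card ∧
  (∀ x : ℕ, (R.filter (· ≤ x)).card ≤ (L.filter (· ≤ x)).card) ∧
  (∀ i ∈ L, i + 1 ∉ R)

end SecStrAux

namespace SecStrAux

lemma filter_le_erase_high' {s : Finset ℕ} {v x : ℕ} (hvx : ¬ v ≤ x) :
    (s.erase v).filter (· ≤ x) = s.filter (· ≤ x) := by
  rw [Finset.filter_erase]
  exact Finset.erase_eq_of_notMem (fun hm => hvx (Finset.mem_filter.mp hm).2)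

lemma insert_builds (n : ℕ) (L R : Finset ℕ) (i j : ℕ) (M' : Finset (ℕ × ℕ))
    (h1 : L ⊆ Finset.Icc 1 n) (h2 : R ⊆ Finset.Icc 1 n) (h3 : Disjoint L R)
    (hiL : i ∈ L) (hjR : j ∈ R) (hgap : i + 2 ≤ j)
    (himax : ∀ x ∈ L, x < j → x ≤ i) (hjmin : ∀ r ∈ R, j ≤ r)
    (hS : IsSecStr2 n M') (hL' : M'.image Prod.fst = L.erase i)
    (hR' : M'.image Prod.snd = R.erase j) :
    IsSecStr2 n (insert (i, j) M') ∧ (insert (i, j) M').image Prod.fst = L ∧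
    (insert (i, j) M').image Prod.snd = R ∧ (insert (i, j) M').card = M'.card + 1 := by
  have hiIcc := Finset.mem_Icc.mp (h1 hiL)
  have hjIcc := Finset.mem_Icc.mp (h2 hjR)
  have hnotmem : (i, j) ∉ M' := by
    intro hm
    have : i ∈ M'.image Prod.fst := Finset.mem_image_of_mem Prod.fst hm
    rw [hL'] at this
    exact (Finset.notMem_erase _ _) this
  obtain ⟨s1, s2, s3⟩ := hS
  have hfstL : ∀ q ∈ M', q.1 ∈ L.erase i := by
    intro q hq; rw [← hL']; exact Finset.mem_image_of_mem Prod.fst hq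
  have hsndR : ∀ q ∈ M', q.2 ∈ R.erase j := by
    intro q hq; rw [← hR']; exact Finset.mem_image_of_mem Prod.snd hq
  refine ⟨⟨?_, ?_, ?_⟩, ?_, ?_, ?_⟩
  · intro p hp
    rcases Finset.mem_insert.mp hp with he | hm
    · subst he
      exact ⟨by omega, by omega, by omega⟩
    · exact s1 p hm
  · intro p hp q hq hne
    rcases Finset.mem_insert.mp hp with hep | hmp <;> rcases Finset.mem_insert.mp hq with heq | hmq
    · exact absurd (hep.trans heq.symm) hne
    · subst hep
      dsimp only
      have hq1 := hfstL q hmq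
      have hq2 := hsndR q hmq
      refine ⟨fun he => (Finset.ne_of_mem_erase hq1) he.symm, ?_, ?_,
        fun he => (Finset.ne_of_mem_erase hq2) he.symm⟩
      · intro he
        exact Finset.disjoint_left.mp h3 hiL (he ▸ Finset.mem_of_mem_erase hq2)
      · intro he
        exact Finset.disjoint_left.mp h3 (he ▸ Finset.mem_of_mem_erase hq1) hjR
    · subst heq
      dsimp only
      have hp1 := hfstL p hmp
      have hp2 := hsndR p hmp
      refine ⟨Finset.ne_of_mem_erase hp1, ?_, ?_, Finset.ne_of_mem_erase hp2⟩
      · intro he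
        exact Finset.disjoint_left.mp h3 (he ▸ Finset.mem_of_mem_erase hp1) hjR
      · intro he
        exact Finset.disjoint_left.mp h3 hiL (he ▸ Finset.mem_of_mem_erase hp2)
    · exact s2 p hmp q hmq hne
  · intro p hp q hq
    rcases Finset.mem_insert.mp hp with hep | hmp <;> rcases Finset.mem_insert.mp hq with heq | hmq
    · subst hep; subst heq
      rintro ⟨hlt, -, -⟩
      simp at hlt
    · subst hep
      rintro ⟨hc1, hc2, hc3⟩
      have hq1 := Finset.mem_of_mem_erase (hfstL q hmq)
      have := himax q.1 hq1 (by simpa using hc2)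
      simp at hc1
      omega
    · subst heq
      rintro ⟨hc1, hc2, hc3⟩
      have hp2 := Finset.mem_of_mem_erase (hsndR p hmp)
      have := hjmin p.2 hp2
      simp at hc3
      omega
    · exact s3 p hmp q hmq
  · rw [Finset.image_insert, hL']
    exact Finset.insert_erase hiL
  · rw [Finset.image_insert, hR']
    exact Finset.insert_erase hjR
  · exact Finset.card_insert_of_notMem hnotmem

lemma buildM_spec (n : ℕ) : ∀ (k : ℕ) (L R : Finset ℕ), Inv n L R → R.card = k →
    IsSecStr2 n (buildM k L R) ∧ (buildM k L R).image Prod.fst = L ∧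
    (buildM k L R).image Prod.snd = R ∧ (buildM k L R).card = k := by
  intro k
  induction k with
  | zero =>
    intro L R hInv hc
    obtain ⟨h1, h2, h3, h4, h5, h6⟩ := hInv
    have hR : R = ∅ := Finset.card_eq_zero.mp hc
    have hL : L = ∅ := Finset.card_eq_zero.mp (by omega)
    refine ⟨⟨fun p hp => absurd hp (Finset.notMem_empty _),
      fun p hp => absurd hp (Finset.notMem_empty _),
      fun p hp => absurd hp (Finset.notMem_empty _)⟩, ?_, ?_, rfl⟩
    · rw [buildM]; simp [hL]
    · rw [buildM]; simp [hR]
  | succ k ih =>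
    intro L R hInv hc
    obtain ⟨h1, h2, h3, h4, h5, h6⟩ := hInv
    have hR : R.Nonempty := Finset.card_pos.mp (by omega)
    set j := R.min' hR with hjdef
    have hjR : j ∈ R := R.min'_mem hR
    have hjmin : ∀ r ∈ R, j ≤ r := fun r hr => R.min'_le r hr
    have hjIcc := Finset.mem_Icc.mp (h2 hjR)
    -- the filter L ∩ [·, j) is nonempty
    have hLf : (L.filter (· < j)).Nonempty := by
      have hb := h5 j
      have hRj : 1 ≤ (R.filter (· ≤ j)).card :=
        Finset.card_pos.mpr ⟨j, Finset.mem_filter.mpr ⟨hjR, le_refl j⟩⟩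
      have hLj : (L.filter (· ≤ j)).Nonempty := Finset.card_pos.mp (by omega)
      obtain ⟨x, hx⟩ := hLj
      obtain ⟨hxL, hxj⟩ := Finset.mem_filter.mp hx
      have hxj' : x ≠ j := fun he => Finset.disjoint_left.mp h3 (he ▸ hxL) hjR
      exact ⟨x, Finset.mem_filter.mpr ⟨hxL, by omega⟩⟩
    set i := (L.filter (· < j)).max' hLf with hidef
    have hiLf : i ∈ L.filter (· < j) := (L.filter (· < j)).max'_mem hLf
    have hiL : i ∈ L := (Finset.mem_filter.mp hiLf).1
    have hij : i < j := (Finset.mem_filter.mp hiLf).2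
    have himax : ∀ x ∈ L, x < j → x ≤ i := fun x hx hxj =>
      (L.filter (· < j)).le_max' x (Finset.mem_filter.mpr ⟨hx, hxj⟩)
    have hiIcc := Finset.mem_Icc.mp (h1 hiL)
    have hii1 : i + 1 ≠ j := fun he => h6 i hiL (he ▸ hjR)
    have hgap : i + 2 ≤ j := by omega
    -- reduced invariant
    have hInv' : Inv n (L.erase i) (R.erase j) := by
      refine ⟨(Finset.erase_subset _ _).trans h1, (Finset.erase_subset _ _).trans h2,
        Finset.disjoint_of_subset_left (Finset.erase_subset _ _)
          (Finset.disjoint_of_subset_right (Finset.erase_subset _ _) h3),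
        by rw [Finset.card_erase_of_mem hiL, Finset.card_erase_of_mem hjR, h4], ?_, ?_⟩
      · intro x
        by_cases hx : x < j
        · have : (R.erase j).filter (· ≤ x) = ∅ := by
            refine Finset.eq_empty_iff_forall_notMem.mpr (fun y hy => ?_)
            obtain ⟨hy1, hy2⟩ := Finset.mem_filter.mp hy
            have := hjmin y (Finset.mem_of_mem_erase hy1)
            omega
          rw [this]
          simp
        · rw [Finset.filter_erase, Finset.filter_erase,
            Finset.card_erase_of_mem (Finset.mem_filter.mpr ⟨hjR, by omega⟩),
            Finset.card_erase_of_mem (Finset.mem_filter.mpr ⟨hiL, by omega⟩)]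
          exact Nat.sub_le_sub_right (h5 x) 1
      · intro y hy
        exact fun hm => h6 y (Finset.mem_of_mem_erase hy) (Finset.mem_of_mem_erase hm)
    obtain ⟨ihS, ihL, ihR, ihC⟩ := ih (L.erase i) (R.erase j) hInv'
      (by rw [Finset.card_erase_of_mem hjR, hc]; omega)
    rw [buildM_succ k L R hR hLf]
    have hres := insert_builds n L R i j (buildM k (L.erase i) (R.erase j))
      h1 h2 h3 hiL hjR hgap himax hjmin ihS ihL ihR
    refine ⟨hres.1, hres.2.1, hres.2.2.1, by rw [hres.2.2.2, ihC]⟩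

end SecStrAux

namespace SecStrAux

lemma secstr_subset {n : ℕ} {M M' : Finset (ℕ × ℕ)} (hsub : M' ⊆ M) (h : IsSecStr2 n M) :
    IsSecStr2 n M' :=
  ⟨fun p hp => h.1 p (hsub hp), fun p hp q hq => h.2.1 p (hsub hp) q (hsub hq),
   fun p hp q hq => h.2.2 p (hsub hp) q (hsub hq)⟩

lemma fst_injOn {n : ℕ} {M : Finset (ℕ × ℕ)} (h : IsSecStr2 n M) :
    ∀ p ∈ M, ∀ q ∈ M, p.1 = q.1 → p = q := by
  intro p hp q hq he
  by_contra hne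
  exact (h.2.1 p hp q hq hne).1 he

lemma snd_injOn {n : ℕ} {M : Finset (ℕ × ℕ)} (h : IsSecStr2 n M) :
    ∀ p ∈ M, ∀ q ∈ M, p.2 = q.2 → p = q := by
  intro p hp q hq he
  by_contra hne
  exact (h.2.1 p hp q hq hne).2.2.2 he

lemma image_fst_erase {n : ℕ} {M : Finset (ℕ × ℕ)} (h : IsSecStr2 n M) {p : ℕ × ℕ}
    (hp : p ∈ M) : (M.erase p).image Prod.fst = (M.image Prod.fst).erase p.1 := by
  ext x
  simp only [Finset.mem_image, Finset.mem_erase]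
  constructor
  · rintro ⟨q, hq, rfl⟩
    obtain ⟨hqne, hqM⟩ := hq
    exact ⟨fun he => hqne (fst_injOn h q hqM p hp he), q, hqM, rfl⟩
  · rintro ⟨hne, q, hq, rfl⟩
    exact ⟨q, ⟨fun he => hne (by rw [he]), hq⟩, rfl⟩

lemma image_snd_erase {n : ℕ} {M : Finset (ℕ × ℕ)} (h : IsSecStr2 n M) {p : ℕ × ℕ}
    (hp : p ∈ M) : (M.erase p).image Prod.snd = (M.image Prod.snd).erase p.2 := by
  ext x
  simp only [Finset.mem_image, Finset.mem_erase]
  constructor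
  · rintro ⟨q, hq, rfl⟩
    obtain ⟨hqne, hqM⟩ := hq
    exact ⟨fun he => hqne (snd_injOn h q hqM p hp he), q, hqM, rfl⟩
  · rintro ⟨hne, q, hq, rfl⟩
    exact ⟨q, ⟨fun he => hne (by rw [he]), hq⟩, rfl⟩

lemma build_eq (n : ℕ) : ∀ (k : ℕ) (M : Finset (ℕ × ℕ)), IsSecStr2 n M → M.card = k →
    buildM k (M.image Prod.fst) (M.image Prod.snd) = M := by
  intro k
  induction k with
  | zero =>
    intro M hM hc
    rw [Finset.card_eq_zero.mp hc]
    rw [buildM]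
  | succ k ih =>
    intro M hM hc
    have hMne : M.Nonempty := Finset.card_pos.mp (by omega)
    have hR : (M.image Prod.snd).Nonempty := hMne.image _
    set j := (M.image Prod.snd).min' hR with hjdef
    have hjR : j ∈ M.image Prod.snd := Finset.min'_mem _ hR
    obtain ⟨p, hpM, hpj⟩ := Finset.mem_image.mp hjR
    have hjmin : ∀ q ∈ M, j ≤ q.2 := fun q hq =>
      Finset.min'_le _ _ (Finset.mem_image_of_mem Prod.snd hq)
    have hbp := hM.1 p hpM
    have hp1mem : p.1 ∈ (M.image Prod.fst).filter (· < j) :=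
      Finset.mem_filter.mpr ⟨Finset.mem_image_of_mem Prod.fst hpM, by omega⟩
    have hLf : ((M.image Prod.fst).filter (· < j)).Nonempty := ⟨p.1, hp1mem⟩
    have hieq : ((M.image Prod.fst).filter (· < j)).max' hLf = p.1 := by
      apply le_antisymm
      · by_contra hlt
        push_neg at hlt
        set i := ((M.image Prod.fst).filter (· < j)).max' hLf with hidef
        have hif : i ∈ (M.image Prod.fst).filter (· < j) := Finset.max'_mem _ hLf
        obtain ⟨hiL, hij⟩ := Finset.mem_filter.mp hif
        obtain ⟨q, hqM, hqi⟩ := Finset.mem_image.mp hiL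
        have hqp : q ≠ p := by
          intro he
          rw [he] at hqi
          omega
        have hq2 : j < q.2 := by
          rcases lt_or_eq_of_le (hjmin q hqM) with h | h
          · exact h
          · exact absurd (snd_injOn hM q hqM p hpM (by omega)) hqp
        exact (hM.2.2 p hpM q hqM) ⟨by omega, by omega, by omega⟩
      · exact Finset.le_max' _ _ hp1mem
    rw [buildM_succ k _ _ hR hLf, hieq, ← hjdef]
    have hMe : IsSecStr2 n (M.erase p) := secstr_subset (Finset.erase_subset _ _) hM
    have e1 : (M.image Prod.fst).erase p.1 = (M.erase p).image Prod.fst :=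
      (image_fst_erase hM hpM).symm
    have e2 : (M.image Prod.snd).erase j = (M.erase p).image Prod.snd := by
      rw [← hpj]
      exact (image_snd_erase hM hpM).symm
    rw [e1, e2, ih (M.erase p) hMe (by rw [Finset.card_erase_of_mem hpM, hc]; omega)]
    rw [← hpj]
    rw [Prod.mk.eta]
    exact Finset.insert_erase hpM

end SecStrAux


namespace SecStrAux

lemma secstr_mem_bp {n l : ℕ} {M : Finset (ℕ × ℕ)} (hM : IsSecStr2 n M) (hc : M.card = l) :
    (M.image Prod.fst, M.image Prod.snd) ∈ bp n l l false := by
  have hfst : ∀ p ∈ M, ∀ q ∈ M, p.1 = q.1 → p = q := fst_injOn hM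
  have hsnd : ∀ p ∈ M, ∀ q ∈ M, p.2 = q.2 → p = q := snd_injOn hM
  refine mem_bp.mpr ⟨?_, ?_, ?_, ?_, ?_, ?_, ?_, fun h => absurd h (by simp)⟩
  · intro x hx
    obtain ⟨q, hq, rfl⟩ := Finset.mem_image.mp hx
    have := hM.1 q hq
    exact Finset.mem_Icc.mpr ⟨by omega, by omega⟩
  · intro x hx
    obtain ⟨q, hq, rfl⟩ := Finset.mem_image.mp hx
    have := hM.1 q hq
    exact Finset.mem_Icc.mpr ⟨by omega, by omega⟩
  · rw [Finset.disjoint_left]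
    intro x hx hx2
    obtain ⟨q, hq, rfl⟩ := Finset.mem_image.mp hx
    obtain ⟨r, hr, hre⟩ := Finset.mem_image.mp hx2
    have hbq := hM.1 q hq
    have hbr := hM.1 r hr
    by_cases he : q = r
    · subst he
      omega
    · exact (hM.2.1 q hq r hr he).2.1 hre.symm
  · exact (Finset.card_image_of_injOn (fun p hp q hq he => hfst p hp q hq he)).trans hc
  · exact (Finset.card_image_of_injOn (fun p hp q hq he => hsnd p hp q hq he)).trans hc
  · intro x
    have key1 : (M.image Prod.snd).filter (· ≤ x) = (M.filter (fun q => q.2 ≤ x)).image Prod.snd := by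
      ext y
      simp only [Finset.mem_filter, Finset.mem_image]
      constructor
      · rintro ⟨⟨q, hq, rfl⟩, hy⟩
        exact ⟨q, ⟨hq, hy⟩, rfl⟩
      · rintro ⟨q, ⟨hq, hy⟩, rfl⟩
        exact ⟨⟨q, hq, rfl⟩, hy⟩
    have key2 : (M.filter (fun q => q.2 ≤ x)).image Prod.fst ⊆ (M.image Prod.fst).filter (· ≤ x) := by
      intro y hy
      obtain ⟨q, hq, rfl⟩ := Finset.mem_image.mp hy
      obtain ⟨hqM, hq2⟩ := Finset.mem_filter.mp hq
      have := hM.1 q hqM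
      exact Finset.mem_filter.mpr ⟨Finset.mem_image_of_mem _ hqM, by omega⟩
    have c1 : ((M.filter (fun q => q.2 ≤ x)).image Prod.snd).card
        = (M.filter (fun q => q.2 ≤ x)).card :=
      Finset.card_image_of_injOn (fun p hp q hq he =>
        hsnd p (Finset.mem_of_mem_filter _ hp) q (Finset.mem_of_mem_filter _ hq) he)
    have c2 : ((M.filter (fun q => q.2 ≤ x)).image Prod.fst).card
        = (M.filter (fun q => q.2 ≤ x)).card :=
      Finset.card_image_of_injOn (fun p hp q hq he =>
        hfst p (Finset.mem_of_mem_filter _ hp) q (Finset.mem_of_mem_filter _ hq) he)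
    calc ((M.image Prod.snd).filter (· ≤ x)).card
        = (M.filter (fun q => q.2 ≤ x)).card := by rw [key1, c1]
      _ = ((M.filter (fun q => q.2 ≤ x)).image Prod.fst).card := c2.symm
      _ ≤ ((M.image Prod.fst).filter (· ≤ x)).card := Finset.card_le_card key2
  · intro i hiL hi1R
    obtain ⟨q, hq, hqe⟩ := Finset.mem_image.mp hiL
    obtain ⟨r, hr, hre⟩ := Finset.mem_image.mp hi1R
    have hbq := hM.1 q hq
    have hbr := hM.1 r hr
    exact (hM.2.2 r hr q hq) ⟨by omega, by omega, by omega⟩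

lemma secstr_card_eq (n l : ℕ) :
    Nat.card {M : Finset (ℕ × ℕ) // IsSecStr2 n M ∧ M.card = l} = (bp n l l false).card := by
  have e : {M : Finset (ℕ × ℕ) // IsSecStr2 n M ∧ M.card = l} ≃ {p // p ∈ bp n l l false} :=
    { toFun := fun M => ⟨(M.1.image Prod.fst, M.1.image Prod.snd), secstr_mem_bp M.2.1 M.2.2⟩
      invFun := fun p => ⟨buildM l p.1.1 p.1.2, by
        obtain ⟨h1, h2, h3, h4, h5, h6, h7, h8⟩ := mem_bp.mp p.2
        have hInv : Inv n p.1.1 p.1.2 := ⟨h1, h2, h3, by omega, h6, h7⟩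
        obtain ⟨hS, hL, hR, hc⟩ := buildM_spec n l p.1.1 p.1.2 hInv h5
        exact ⟨hS, hc⟩⟩
      left_inv := fun M => Subtype.ext (build_eq n l M.1 M.2.1 M.2.2)
      right_inv := fun p => by
        obtain ⟨h1, h2, h3, h4, h5, h6, h7, h8⟩ := mem_bp.mp p.2
        have hInv : Inv n p.1.1 p.1.2 := ⟨h1, h2, h3, by omega, h6, h7⟩
        obtain ⟨hS, hL, hR, hc⟩ := buildM_spec n l p.1.1 p.1.2 hInv h5
        exact Subtype.ext (Prod.ext hL hR) }
  rw [Nat.card_congr e]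
  exact Nat.card_eq_finsetCard _

end SecStrAux

/-- The number of RNA secondary structures on `n` vertices with exactly `l ≥ 1` arcs and
minimum arc-length 2 equals `(1/l)·C(n-l, l+1)·C(n-l-1, l-1)`. -/
theorem secStr_count_waterman (n l : ℕ) (hl : 1 ≤ l) :
    (Nat.card {M : Finset (ℕ × ℕ) // IsSecStr2 n M ∧ M.card = l} : ℚ) =
      (1 / (l : ℚ)) * ((n - l).choose (l + 1)) * ((n - l - 1).choose (l - 1)) := by
  rw [SecStrAux.secstr_card_eq n l, SecStrAux.bp_card n l l false]
  obtain ⟨k, rfl⟩ : ∃ k, l = k + 1 := ⟨l - 1, by omega⟩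
  by_cases h : 2 * (k + 1) + 1 ≤ n
  · obtain ⟨g, rfl⟩ : ∃ g, n = (k + 1) + (k + 1) + g + 1 := ⟨n - 2 * (k + 1) - 1, by omega⟩
    rw [SecStrAux.G_false g (le_refl _), SecStrAux.FI k g,
        show (k+1)+(k+1)+g+1 - (k+1) = k+g+2 by omega,
        show k+g+2 - 1 = k+g+1 by omega,
        show (k+1)+1 = k+2 by omega,
        show (k+1)-1 = k by omega]
    push_cast
    ring
  · have hz : (((n - (k+1)).choose ((k+1)+1) : ℕ) : ℚ) = 0 := by
      rw [Nat.choose_eq_zero_of_lt (by omega)]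
      simp
    rw [hz]
    have hG : SecStrAux.G n (k+1) (k+1) false = 0 := by
      rcases lt_or_eq_of_le (show n ≤ (k+1) + (k+1) by omega) with hlt | heq
      · exact SecStrAux.G_lt hlt
      · subst heq
        rw [SecStrAux.G_f0, if_neg (by omega)]
    rw [hG]
    ring
end

section
/- The generating function S(x,y) = Σ s(n,l) x^n y^l counting RNA secondary structures with minimum arc-length λ, minimum stack-length r, by length n and number of arcs l, satisfies the functional equation (x²y)^r · S(x,y)² − B(x,y) · S(x,y) + A(x,y) = 0, where A(x,y) = 1 − x²y + (x²y)^r and B(x,y) = (1−x)·A(x,y) + (x²y)^r · Σ_{i=0}^{λ−2} x^i. -/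
open PowerSeries

/-- `M` is an `r`-canonical RNA secondary structure on vertices `1,…,n` with minimum
arc-length `lam`: arcs `(i,j)` satisfy `1 ≤ i`, `j ≤ n`, `j - i ≥ lam`; arcs are pairwise
vertex-disjoint and noncrossing; and every maximal stack has length at least `r`
(i.e. if `(i-1,j+1)` is not an arc then `(i+t, j-t)` is an arc for all `t < r`). -/
def IsCanSecStr (n lam r : ℕ) (M : Finset (ℕ × ℕ)) : Prop :=
  (∀ p ∈ M, 1 ≤ p.1 ∧ p.1 + lam ≤ p.2 ∧ p.2 ≤ n) ∧
  (∀ p ∈ M, ∀ q ∈ M, p ≠ q → p.1 ≠ q.1 ∧ p.1 ≠ q.2 ∧ p.2 ≠ q.1 ∧ p.2 ≠ q.2) ∧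
  (∀ p ∈ M, ∀ q ∈ M, ¬ (p.1 < q.1 ∧ q.1 < p.2 ∧ p.2 < q.2)) ∧
  (∀ p ∈ M, (p.1 - 1, p.2 + 1) ∉ M → ∀ t < r, (p.1 + t, p.2 - t) ∈ M)

/-- The number of `r`-canonical secondary structures with minimum arc-length `lam`,
`n` vertices and `l` arcs. -/
noncomputable def sCount (lam r n l : ℕ) : ℕ :=
  Nat.card {M : Finset (ℕ × ℕ) // IsCanSecStr n lam r M ∧ M.card = l}

/-- The bivariate generating function `S(x,y) = Σ_{n,l} s(n,l) x^n y^l`, viewed as a formal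
power series in `x` with coefficients that are polynomials in `y`. -/
noncomputable def Sgf (lam r : ℕ) : PowerSeries (Polynomial ℚ) :=
  PowerSeries.mk fun n =>
    ∑ l ∈ Finset.range (n + 1), Polynomial.C ((sCount lam r n l : ℚ)) * Polynomial.X ^ l

/-- The monomial `x²y`. -/
noncomputable def xxy : PowerSeries (Polynomial ℚ) :=
  PowerSeries.X ^ 2 * PowerSeries.C (Polynomial.X : Polynomial ℚ)

/-- `A(x,y) = 1 - x²y + (x²y)^r`. -/
noncomputable def Agf (r : ℕ) : PowerSeries (Polynomial ℚ) := 1 - xxy + xxy ^ r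

/-- `B(x,y) = (1-x)·A(x,y) + (x²y)^r · Σ_{i=0}^{λ-2} x^i`. -/
noncomputable def Bgf (lam r : ℕ) : PowerSeries (Polynomial ℚ) :=
  (1 - PowerSeries.X) * Agf r + xxy ^ r * ∑ i ∈ Finset.range (lam - 1), PowerSeries.X ^ i

open Finset Polynomial
open scoped Classical

noncomputable section

/-- canonical structures on `n` vertices, as a `Finset`. -/
def SS (lam r n : ℕ) : Finset (Finset (ℕ × ℕ)) :=
  ((range (n+1) ×ˢ range (n+1)).powerset).filter (fun M => IsCanSecStr n lam r M)

def CCF (lam r n : ℕ) : Finset (Finset (ℕ × ℕ)) :=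
  (SS lam r n).filter (fun M => (1, n) ∈ M)

def EEF (lam r n : ℕ) : Finset (Finset (ℕ × ℕ)) :=
  (CCF lam r n).filter (fun M => (1 + r, n - r) ∉ M)

lemma mem_SS {lam r n : ℕ} {M : Finset (ℕ × ℕ)} :
    M ∈ SS lam r n ↔ IsCanSecStr n lam r M := by
  simp only [SS, mem_filter, mem_powerset, and_iff_right_iff_imp]
  intro h p hp
  have := h.1 p hp
  simp only [mem_product, mem_range]
  omega

def Tw (lam r n : ℕ) : Polynomial ℚ := ∑ M ∈ SS lam r n, Polynomial.X ^ M.card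
def Uw (lam r n : ℕ) : Polynomial ℚ := ∑ M ∈ CCF lam r n, Polynomial.X ^ M.card
def Vw (lam r n : ℕ) : Polynomial ℚ := ∑ M ∈ EEF lam r n, Polynomial.X ^ M.card

lemma card_le_of_isCan {lam r n : ℕ} {M : Finset (ℕ × ℕ)} (h : IsCanSecStr n lam r M) :
    M.card ≤ n := by
  have hinj : Set.InjOn Prod.fst (M : Set (ℕ × ℕ)) := by
    intro p hp q hq hpq
    by_contra hne
    exact (h.2.1 p hp q hq hne).1 hpq
  calc M.card = (M.image Prod.fst).card := (Finset.card_image_of_injOn hinj).symm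
    _ ≤ (Finset.Icc 1 n).card := by
        apply Finset.card_le_card
        intro a ha
        simp only [mem_image] at ha
        obtain ⟨p, hp, rfl⟩ := ha
        have := h.1 p hp
        simp only [Finset.mem_Icc]
        omega
    _ = n := by simp

lemma sCount_eq (lam r n l : ℕ) :
    sCount lam r n l = ((SS lam r n).filter (fun M => M.card = l)).card := by
  rw [sCount]
  rw [Nat.card_congr (Equiv.subtypeEquivRight (q := fun M => M ∈ (SS lam r n).filter (fun M => M.card = l)) ?_)]
  · rw [Nat.card_eq_fintype_card, Fintype.card_coe]
  · intro M
    simp [mem_filter, mem_SS]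

lemma coeff_Sgf (lam r n : ℕ) : (PowerSeries.coeff n) (Sgf lam r) = Tw lam r n := by
  rw [Sgf, PowerSeries.coeff_mk, Tw]
  rw [← Finset.sum_fiberwise_of_maps_to (g := Finset.card)
      (t := range (n+1)) (fun M hM => by
        simp only [mem_range]
        exact Nat.lt_succ_of_le (card_le_of_isCan (mem_SS.mp hM)))]
  refine Finset.sum_congr rfl fun l _ => ?_
  rw [sCount_eq, Finset.sum_congr rfl (fun M hM => by
      rw [(Finset.mem_filter.mp hM).2]), Finset.sum_const, nsmul_eq_mul]
  rw [Polynomial.C_eq_natCast]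

def shfu (k : ℕ) (M : Finset (ℕ × ℕ)) : Finset (ℕ × ℕ) := M.image fun p => (p.1 + k, p.2 + k)

lemma mem_shfu {k : ℕ} {M : Finset (ℕ × ℕ)} {q : ℕ × ℕ} :
    q ∈ shfu k M ↔ ∃ p ∈ M, p.1 + k = q.1 ∧ p.2 + k = q.2 := by
  simp [shfu, Finset.mem_image, Prod.ext_iff]

lemma card_shfu (k : ℕ) (M : Finset (ℕ × ℕ)) : (shfu k M).card = M.card :=
  Finset.card_image_of_injective _ (by intro p q h; simp only [Prod.ext_iff] at h ⊢
                                       constructor <;> omega)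

lemma isCan_shfu {n lam r k : ℕ} {M : Finset (ℕ × ℕ)} (h : IsCanSecStr n lam r M) :
    IsCanSecStr (n + k) lam r (shfu k M) := by
  obtain ⟨h1, h2, h3, h4⟩ := h
  refine ⟨?_, ?_, ?_, ?_⟩
  · intro q hq; obtain ⟨p, hp, e1, e2⟩ := mem_shfu.mp hq
    have := h1 p hp; omega
  · intro q hq q' hq' hne
    obtain ⟨p, hp, e1, e2⟩ := mem_shfu.mp hq
    obtain ⟨p', hp', e1', e2'⟩ := mem_shfu.mp hq'
    have hpp : p ≠ p' := by
      rintro rfl; exact hne (by rw [Prod.ext_iff]; omega)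
    have := h2 p hp p' hp' hpp; omega
  · intro q hq q' hq'
    obtain ⟨p, hp, e1, e2⟩ := mem_shfu.mp hq
    obtain ⟨p', hp', e1', e2'⟩ := mem_shfu.mp hq'
    have := h3 p hp p' hp'; omega
  · intro q hq hnot t ht
    obtain ⟨p, hp, e1, e2⟩ := mem_shfu.mp hq
    have hb := h1 p hp
    have hpn : (p.1 - 1, p.2 + 1) ∉ M := by
      intro hmem
      exact hnot (mem_shfu.mpr ⟨_, hmem, by dsimp only; omega, by dsimp only; omega⟩)
    have hin := h4 p hp hpn t ht
    have hbt := h1 _ hin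
    dsimp only at hbt
    exact mem_shfu.mpr ⟨_, hin, by dsimp only; omega, by dsimp only; omega⟩

lemma isCan_of_shfu {n lam r k : ℕ} {M : Finset (ℕ × ℕ)} (hlo : ∀ p ∈ M, 1 ≤ p.1)
    (h : IsCanSecStr (n + k) lam r (shfu k M)) : IsCanSecStr n lam r M := by
  obtain ⟨h1, h2, h3, h4⟩ := h
  have hmem : ∀ p ∈ M, (p.1 + k, p.2 + k) ∈ shfu k M := fun p hp =>
    mem_shfu.mpr ⟨p, hp, rfl, rfl⟩
  refine ⟨?_, ?_, ?_, ?_⟩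
  · intro p hp
    have := h1 _ (hmem p hp); dsimp only at this
    have := hlo p hp; omega
  · intro p hp q hq hne
    have := h2 _ (hmem p hp) _ (hmem q hq) (by
      intro hcon; apply hne; rw [Prod.ext_iff] at hcon ⊢; dsimp only at hcon; omega)
    dsimp only at this; omega
  · intro p hp q hq
    have := h3 _ (hmem p hp) _ (hmem q hq); dsimp only at this; omega
  · intro p hp hnot t ht
    have hbp := h1 _ (hmem p hp); dsimp only at hbp
    have h1p := hlo p hp
    have hnot' : (p.1 + k - 1, p.2 + k + 1) ∉ shfu k M := by
      intro hmem'
      obtain ⟨q, hq, e1, e2⟩ := mem_shfu.mp hmem'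
      apply hnot
      have : q = (p.1 - 1, p.2 + 1) := by rw [Prod.ext_iff]; dsimp only at e1 e2 ⊢; omega
      rwa [this] at hq
    have := h4 _ (hmem p hp) hnot' t ht
    dsimp only at this
    obtain ⟨q, hq, e1, e2⟩ := mem_shfu.mp this
    have hbq := h1 _ (hmem q hq); dsimp only at hbq
    have hq1 := hlo q hq
    have : q = (p.1 + t, p.2 - t) := by rw [Prod.ext_iff]; dsimp only; omega
    rwa [this] at hq

lemma exists_shfu {k : ℕ} {M : Finset (ℕ × ℕ)} (h : ∀ p ∈ M, k < p.1 ∧ k < p.2) :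
    ∃ M', M = shfu k M' ∧ ∀ p ∈ M', 1 ≤ p.1 := by
  refine ⟨M.image (fun p => (p.1 - k, p.2 - k)), ?_, ?_⟩
  · rw [shfu, Finset.image_image]
    nth_rewrite 1 [show M = M.image id from (Finset.image_id).symm]
    apply Finset.image_congr
    intro p hp
    have := h p hp
    simp only [Function.comp_apply, id_eq, Prod.ext_iff]
    constructor <;> omega
  · intro p hp
    simp only [Finset.mem_image] at hp
    obtain ⟨q, hq, rfl⟩ := hp
    have := h q hq; dsimp only; omega

lemma isCan_shrink {n n' lam r : ℕ} {M : Finset (ℕ × ℕ)} (h : IsCanSecStr n' lam r M)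
    (hb : ∀ p ∈ M, p.2 ≤ n) : IsCanSecStr n lam r M :=
  ⟨fun p hp => ⟨(h.1 p hp).1, (h.1 p hp).2.1, hb p hp⟩, h.2.1, h.2.2.1, h.2.2.2⟩

lemma isCan_empty (n lam r : ℕ) : IsCanSecStr n lam r ∅ := by
  refine ⟨?_, ?_, ?_, ?_⟩ <;> intro p hp <;> simp at hp

lemma SS_zero (lam r : ℕ) : SS lam r 0 = {∅} := by
  ext M
  simp only [mem_SS, Finset.mem_singleton]
  constructor
  · intro h
    apply Finset.eq_empty_of_forall_notMem
    intro p hp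
    have := h.1 p hp; omega
  · rintro rfl; exact isCan_empty _ _ _

lemma CC_small (lam r n : ℕ) (hn : n ≤ lam) : CCF lam r n = ∅ := by
  apply Finset.eq_empty_of_forall_notMem
  intro M hM
  rw [CCF, mem_filter, mem_SS] at hM
  have := hM.1.1 _ hM.2; omega

lemma CC_small' (lam r m : ℕ) (hr : 1 ≤ r) (hm : m + 2 ≤ 2*r + lam) : CCF lam r m = ∅ := by
  apply Finset.eq_empty_of_forall_notMem
  intro M hM
  rw [CCF, mem_filter, mem_SS] at hM
  obtain ⟨⟨h1, h2, h3, h4⟩, hmem⟩ := hM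
  have htop : ((1:ℕ) - 1, m + 1) ∉ M := by
    intro hc; have := h1 _ hc; dsimp only at this; omega
  have hstk := h4 _ hmem htop (r - 1) (by omega)
  have := h1 _ hstk
  dsimp only at this
  omega

lemma Tw_zero (lam r : ℕ) : Tw lam r 0 = 1 := by
  rw [Tw, SS_zero]; simp

lemma Uw_zero (lam r : ℕ) : Uw lam r 0 = 0 := by
  rw [Uw, CC_small lam r 0 (by omega)]; simp

lemma K4 (lam r : ℕ) (hlam : 1 ≤ lam) (hr : 1 ≤ r) (m : ℕ) (hm : m + 2 ≤ 2*r + lam) :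
    Uw lam r m = 0 := by
  rw [Uw, CC_small' lam r m hr hm]; simp


def Cgf (lam r : ℕ) : PowerSeries (Polynomial ℚ) := PowerSeries.mk fun n => Uw lam r n
def Pser (lam : ℕ) : PowerSeries (Polynomial ℚ) := ∑ i ∈ Finset.range (lam - 1), PowerSeries.X ^ i

lemma coeff_Cgf (lam r n : ℕ) : (PowerSeries.coeff n) (Cgf lam r) = Uw lam r n :=
  PowerSeries.coeff_mk _ _

section K2sec
variable {lam r n : ℕ} {M : Finset (ℕ × ℕ)}

lemma mem_CCF : M ∈ CCF lam r n ↔ IsCanSecStr n lam r M ∧ (1, n) ∈ M := by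
  simp [CCF, Finset.mem_filter, mem_SS]

lemma unshift_shfu (k : ℕ) (M : Finset (ℕ × ℕ)) :
    (shfu k M).image (fun p => (p.1 - k, p.2 - k)) = M := by
  rw [shfu, Finset.image_image]
  nth_rewrite 2 [show M = M.image id from (Finset.image_id).symm]
  apply Finset.image_congr
  intro p _
  simp only [Function.comp_apply, id_eq, Prod.ext_iff]
  constructor <;> omega

lemma top_notmem {h1 : ∀ p ∈ M, 1 ≤ p.1 ∧ p.1 + lam ≤ p.2 ∧ p.2 ≤ n} :
    ((1:ℕ) - 1, n + 1) ∉ M := by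
  intro hc; have := h1 _ hc; dsimp only at this; omega

lemma wrap_CCF (hr : 1 ≤ r) (h : M ∈ CCF lam r n) :
    insert (1, n+2) (shfu 1 M) ∈ CCF lam r (n+2) ∧
    (1+r, n+2-r) ∈ insert (1, n+2) (shfu 1 M) ∧
    (insert (1, n+2) (shfu 1 M)).card = M.card + 1 := by
  rw [mem_CCF] at h
  obtain ⟨⟨h1, h2, h3, h4⟩, h1n⟩ := h
  have hnl : 1 + lam ≤ n ∧ n ≤ n := by
    have := h1 _ h1n; dsimp only at this; exact this.2
  have hW : ∀ q : ℕ × ℕ, q ∈ insert (1, n+2) (shfu 1 M) ↔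
      q = (1, n+2) ∨ ∃ p ∈ M, p.1 + 1 = q.1 ∧ p.2 + 1 = q.2 := by
    intro q; simp [Finset.mem_insert, mem_shfu]
  have hstkM : ∀ u < r, (1 + u, n - u) ∈ M := by
    have := h4 (1, n) h1n (by dsimp only; exact top_notmem (h1 := h1))
    dsimp only at this; exact this
  have hcan : IsCanSecStr (n+2) lam r (insert (1, n+2) (shfu 1 M)) := by
    refine ⟨?_, ?_, ?_, ?_⟩
    · intro q hq
      rcases (hW q).mp hq with rfl | ⟨p, hp, e1, e2⟩
      · dsimp only; omega
      · have := h1 p hp; omega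
    · intro q hq q' hq' hne
      rcases (hW q).mp hq with rfl | ⟨p, hp, e1, e2⟩ <;>
        rcases (hW q').mp hq' with h' | ⟨p', hp', e1', e2'⟩
      · exact absurd h'.symm hne
      · have := h1 p' hp'; dsimp only; omega
      · subst h'; have := h1 p hp; dsimp only; omega
      · have hpp : p ≠ p' := by
          rintro rfl; exact hne (by rw [Prod.ext_iff]; omega)
        have := h2 p hp p' hp' hpp; omega
    · intro q hq q' hq'
      rcases (hW q).mp hq with rfl | ⟨p, hp, e1, e2⟩ <;>
        rcases (hW q').mp hq' with h' | ⟨p', hp', e1', e2'⟩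
      · subst h'; dsimp only; omega
      · have := h1 p' hp'; dsimp only; omega
      · subst h'; have := h1 p hp; dsimp only; omega
      · have := h3 p hp p' hp'; have hb := h1 p hp; have hb' := h1 p' hp'; omega
    · intro q hq hnot t ht
      rcases (hW q).mp hq with rfl | ⟨p, hp, e1, e2⟩
      · dsimp only
        rcases Nat.eq_zero_or_pos t with rfl | htpos
        · apply Finset.mem_insert_self
        · have hm := hstkM (t-1) (by omega)
          have hbm := h1 _ hm; dsimp only at hbm
          refine (hW _).mpr (Or.inr ⟨_, hm, by dsimp only; omega, by dsimp only; omega⟩)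
      · have hpn : (p.1 - 1, p.2 + 1) ∉ M := by
          intro hc
          have hbc := h1 _ hc; dsimp only at hbc
          exact hnot ((hW _).mpr (Or.inr ⟨_, hc, by dsimp only; omega, by dsimp only; omega⟩))
        have hin := h4 p hp hpn t ht
        have hbt := h1 _ hin; dsimp only at hbt
        have hbp := h1 p hp
        exact (hW _).mpr (Or.inr ⟨_, hin, by dsimp only; omega, by dsimp only; omega⟩)
  have hmemstk : (1+r, n+2-r) ∈ insert (1, n+2) (shfu 1 M) := by
    have hm := hstkM (r-1) (by omega)
    have hbm := h1 _ hm; dsimp only at hbm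
    exact (hW _).mpr (Or.inr ⟨_, hm, by dsimp only; omega, by dsimp only; omega⟩)
  have hnotmem : (1, n+2) ∉ shfu 1 M := by
    intro hc; obtain ⟨p, hp, e1, e2⟩ := mem_shfu.mp hc
    have := h1 p hp; dsimp only at e1 e2; omega
  refine ⟨mem_CCF.mpr ⟨hcan, Finset.mem_insert_self _ _⟩, hmemstk, ?_⟩
  rw [Finset.card_insert_of_notMem hnotmem, card_shfu]
end K2sec

lemma unwrap_CCF {lam r n : ℕ} {M : Finset (ℕ × ℕ)} (hr : 1 ≤ r)
    (h : M ∈ CCF lam r (n+2)) (hs : (1+r, n+2-r) ∈ M) :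
    (M.erase (1, n+2)).image (fun p => (p.1-1, p.2-1)) ∈ CCF lam r n ∧
    insert (1, n+2) (shfu 1 ((M.erase (1, n+2)).image (fun p => (p.1-1, p.2-1)))) = M := by
  rw [mem_CCF] at h
  obtain ⟨⟨h1, h2, h3, h4⟩, htop⟩ := h
  set M' := (M.erase (1, n+2)).image (fun p => (p.1-1, p.2-1)) with hM'
  have hnb := h1 _ hs
  dsimp only at hnb
  have hE : ∀ q ∈ M.erase (1, n+2), 2 ≤ q.1 ∧ q.1 + lam ≤ q.2 ∧ q.2 ≤ n+1 := by
    intro q hq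
    obtain ⟨hne, hqM⟩ := Finset.mem_erase.mp hq
    have hb := h1 q hqM
    have hd := h2 q hqM (1, n+2) htop hne
    dsimp only at hd
    omega
  have hmem' : ∀ p : ℕ × ℕ, p ∈ M' ↔ (p.1 + 1, p.2 + 1) ∈ M.erase (1, n+2) := by
    intro p
    rw [hM']
    simp only [Finset.mem_image]
    constructor
    · rintro ⟨q, hq, rfl⟩
      have hb := hE q hq
      have heq : (q.1 - 1 + 1, q.2 - 1 + 1) = q := by rw [Prod.ext_iff]; dsimp only; omega
      dsimp only
      rw [heq]; exact hq
    · intro hq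
      exact ⟨_, hq, by rw [Prod.ext_iff]; dsimp only; omega⟩
  have hstkM : ∀ u < r, (1 + u, n + 2 - u) ∈ M := by
    have := h4 (1, n+2) htop (by
      dsimp only
      intro hc; have := h1 _ hc; dsimp only at this; omega)
    dsimp only at this; exact this
  have hcan : IsCanSecStr n lam r M' := by
    refine ⟨?_, ?_, ?_, ?_⟩
    · intro p hp
      have := hE _ ((hmem' p).mp hp); dsimp only at this; omega
    · intro p hp p' hp' hne
      have hq := (hmem' p).mp hp
      have hq' := (hmem' p').mp hp'
      have hqq' : (p.1+1, p.2+1) ≠ (p'.1+1, p'.2+1) := by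
        intro hc; apply hne; rw [Prod.ext_iff] at hc ⊢; dsimp only at hc; omega
      have := h2 _ (Finset.mem_of_mem_erase hq) _ (Finset.mem_of_mem_erase hq') hqq'
      dsimp only at this; omega
    · intro p hp p' hp'
      have hq := (hmem' p).mp hp
      have hq' := (hmem' p').mp hp'
      have := h3 _ (Finset.mem_of_mem_erase hq) _ (Finset.mem_of_mem_erase hq')
      dsimp only at this; omega
    · rintro ⟨a, b⟩ hp hnot t ht
      have hq := (hmem' _).mp hp
      have hqM := Finset.mem_of_mem_erase hq
      have hbq := hE _ hq
      dsimp only at hq hqM hbq hnot ⊢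
      rcases eq_or_ne a 1 with rfl | ha1
      · rcases eq_or_ne b n with he | hb2
        · rw [he] at hq hqM hbq hnot ⊢
          -- inner arc (2, n+1), top of M stack continues
          have hx : (1 + (t+1), n + 2 - (t+1)) ∈ M := by
            rcases eq_or_ne (t+1) r with he | hne2
            · rw [he]; exact hs
            · exact hstkM (t+1) (by omega)
          have heq : ((1+t) + 1, (n-t) + 1) = (1 + (t+1), n + 2 - (t+1)) := by
            rw [Prod.ext_iff]; dsimp only; omega
          refine (hmem' _).mpr ?_
          dsimp only
          rw [heq]
          refine Finset.mem_erase.mpr ⟨?_, hx⟩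
          rw [Ne, Prod.ext_iff]; dsimp only; omega
        · -- arc (2, b+1) with b ≠ n
          have houter : ((2:ℕ) - 1, (b+1) + 1) ∉ M := by
            intro hc
            rcases eq_or_ne ((1:ℕ), b+2) (1, n+2) with he | hne2
            · rw [Prod.ext_iff] at he; dsimp only at he; omega
            · have := h2 _ hc _ htop hne2; dsimp only at this; omega
          have hstk := h4 (2, b+1) hqM houter t ht
          dsimp only at hstk
          have hbs := h1 _ hstk; dsimp only at hbs
          refine (hmem' _).mpr ?_
          dsimp only
          have heq : ((1+t) + 1, (b-t) + 1) = (2 + t, b + 1 - t) := by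
            rw [Prod.ext_iff]; dsimp only; omega
          rw [heq]
          refine Finset.mem_erase.mpr ⟨?_, hstk⟩
          rw [Ne, Prod.ext_iff]; dsimp only; omega
      · -- a ≥ 2
        have ha2 : 2 ≤ a := by omega
        have houter : ((a+1) - 1, (b+1) + 1) ∉ M := by
          intro hc
          apply hnot
          refine (hmem' _).mpr ?_
          dsimp only
          have heq : ((a-1) + 1, (b+1) + 1) = (a + 1 - 1, b + 1 + 1) := by
            rw [Prod.ext_iff]; dsimp only; omega
          rw [heq]
          refine Finset.mem_erase.mpr ⟨?_, by convert hc using 2 <;> omega⟩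
          rw [Ne, Prod.ext_iff]; dsimp only; omega
        have hstk := h4 (a+1, b+1) hqM houter t ht
        dsimp only at hstk
        have hbs := h1 _ hstk; dsimp only at hbs
        refine (hmem' _).mpr ?_
        dsimp only
        have heq : ((a+t) + 1, (b-t) + 1) = (a + 1 + t, b + 1 - t) := by
          rw [Prod.ext_iff]; dsimp only; omega
        rw [heq]
        refine Finset.mem_erase.mpr ⟨?_, hstk⟩
        rw [Ne, Prod.ext_iff]; dsimp only; omega
  have h1n' : (1, n) ∈ M' := by
    refine (hmem' _).mpr ?_
    dsimp only
    have hx : (1 + 1, n + 2 - 1) ∈ M := by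
      rcases eq_or_ne r 1 with rfl | hr2
      · exact hs
      · exact hstkM 1 (by omega)
    have heq : ((1:ℕ) + 1, n + 1) = (1 + 1, n + 2 - 1) := by
      rw [Prod.ext_iff]; dsimp only; omega
    rw [heq]
    refine Finset.mem_erase.mpr ⟨?_, hx⟩
    rw [Ne, Prod.ext_iff]; dsimp only; omega
  have hWM : insert (1, n+2) (shfu 1 M') = M := by
    ext q
    simp only [Finset.mem_insert, mem_shfu]
    constructor
    · rintro (rfl | ⟨p, hp, e1, e2⟩)
      · exact htop
      · have hq := (hmem' p).mp hp
        have hqM := Finset.mem_of_mem_erase hq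
        have heq : q = (p.1+1, p.2+1) := by rw [Prod.ext_iff]; omega
        rw [heq]; exact hqM
    · intro hqM
      rcases eq_or_ne q (1, n+2) with rfl | hne
      · left; rfl
      · right
        have hq : q ∈ M.erase (1, n+2) := Finset.mem_erase.mpr ⟨hne, hqM⟩
        have hb := hE q hq
        refine ⟨(q.1 - 1, q.2 - 1), ?_, by dsimp only; omega, by dsimp only; omega⟩
        rw [hmem']
        have heq : (q.1 - 1 + 1, q.2 - 1 + 1) = q := by
          rw [Prod.ext_iff]; dsimp only; omega
        dsimp only
        rw [heq]; exact hq
  exact ⟨mem_CCF.mpr ⟨hcan, h1n'⟩, hWM⟩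


def jOf (M : Finset (ℕ × ℕ)) : ℕ := M.sup (fun p => if p.1 = 1 then p.2 else 0)

lemma jOf_eq {lam r N j : ℕ} {M : Finset (ℕ × ℕ)} (hM : IsCanSecStr N lam r M)
    (hj : (1, j) ∈ M) : jOf M = j := by
  obtain ⟨h1, h2, _, _⟩ := hM
  apply le_antisymm
  · apply Finset.sup_le
    intro p hp
    by_cases hp1 : p.1 = 1
    · rcases eq_or_ne p (1, j) with rfl | hne
      · simp
      · exact absurd hp1 (h2 p hp (1,j) hj hne).1
    · simp [hp1]
  · have := Finset.le_sup (f := fun p : ℕ×ℕ => if p.1 = 1 then p.2 else 0) hj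
    simpa [jOf] using this

lemma merge_SS {lam r j m : ℕ} {M₁ M₂ : Finset (ℕ × ℕ)} (hlam : 1 ≤ lam)
    (h₁ : M₁ ∈ CCF lam r j) (h₂ : M₂ ∈ SS lam r m) :
    M₁ ∪ shfu j M₂ ∈ SS lam r (j+m) ∧ (1, j) ∈ M₁ ∪ shfu j M₂ ∧
    (M₁ ∪ shfu j M₂).card = M₁.card + M₂.card := by
  rw [mem_CCF] at h₁
  obtain ⟨⟨a1, a2, a3, a4⟩, h1j⟩ := h₁
  rw [mem_SS] at h₂
  obtain ⟨b1, b2, b3, b4⟩ := h₂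
  have hW : ∀ q : ℕ × ℕ, q ∈ M₁ ∪ shfu j M₂ ↔
      q ∈ M₁ ∨ ∃ p ∈ M₂, p.1 + j = q.1 ∧ p.2 + j = q.2 := by
    intro q; simp [Finset.mem_union, mem_shfu]
  have hcan : IsCanSecStr (j+m) lam r (M₁ ∪ shfu j M₂) := by
    refine ⟨?_, ?_, ?_, ?_⟩
    · intro q hq
      rcases (hW q).mp hq with hq1 | ⟨p, hp, e1, e2⟩
      · have := a1 q hq1; omega
      · have := b1 p hp; omega
    · intro q hq q' hq' hne
      rcases (hW q).mp hq with hq1 | ⟨p, hp, e1, e2⟩ <;>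
        rcases (hW q').mp hq' with hq1' | ⟨p', hp', e1', e2'⟩
      · exact a2 q hq1 q' hq1' hne
      · have := a1 q hq1; have := b1 p' hp'; omega
      · have := a1 q' hq1'; have := b1 p hp; omega
      · have hpp : p ≠ p' := by rintro rfl; exact hne (by rw [Prod.ext_iff]; omega)
        have := b2 p hp p' hp' hpp; omega
    · intro q hq q' hq'
      rcases (hW q).mp hq with hq1 | ⟨p, hp, e1, e2⟩ <;>
        rcases (hW q').mp hq' with hq1' | ⟨p', hp', e1', e2'⟩
      · exact a3 q hq1 q' hq1'
      · have := a1 q hq1; have := b1 p' hp'; omega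
      · have := a1 q' hq1'; have := b1 p hp; omega
      · have := b3 p hp p' hp'; have := b1 p hp; have := b1 p' hp'; omega
    · intro q hq hnot t ht
      rcases (hW q).mp hq with hq1 | ⟨p, hp, e1, e2⟩
      · have hnot1 : (q.1 - 1, q.2 + 1) ∉ M₁ := fun hc => hnot ((hW _).mpr (Or.inl hc))
        exact (hW _).mpr (Or.inl (a4 q hq1 hnot1 t ht))
      · have hbp := b1 p hp
        have hpn : (p.1 - 1, p.2 + 1) ∉ M₂ := by
          intro hc
          have hbc := b1 _ hc; dsimp only at hbc
          exact hnot ((hW _).mpr (Or.inr ⟨_, hc, by dsimp only; omega, by dsimp only; omega⟩))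
        have hin := b4 p hp hpn t ht
        have hbt := b1 _ hin; dsimp only at hbt
        exact (hW _).mpr (Or.inr ⟨_, hin, by dsimp only; omega, by dsimp only; omega⟩)
  have hdisj : Disjoint M₁ (shfu j M₂) := by
    rw [Finset.disjoint_left]
    intro q hq hq'
    obtain ⟨p, hp, f1, f2⟩ := mem_shfu.mp hq'
    have := a1 q hq; have := b1 p hp; omega
  exact ⟨mem_SS.mpr hcan, Finset.mem_union_left _ h1j,
    by rw [Finset.card_union_of_disjoint hdisj, card_shfu]⟩

lemma split_SS {lam r N j : ℕ} {M : Finset (ℕ × ℕ)} (hlam : 1 ≤ lam)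
    (hM : M ∈ SS lam r N) (hj : (1, j) ∈ M) :
    M.filter (fun p => p.2 ≤ j) ∈ CCF lam r j ∧
    (M.filter (fun p => ¬ p.2 ≤ j)).image (fun p => (p.1 - j, p.2 - j)) ∈ SS lam r (N - j) ∧
    (M.filter (fun p => p.2 ≤ j)) ∪
      shfu j ((M.filter (fun p => ¬ p.2 ≤ j)).image (fun p => (p.1 - j, p.2 - j))) = M ∧
    1 + lam ≤ j ∧ j ≤ N := by
  rw [mem_SS] at hM
  obtain ⟨h1, h2, h3, h4⟩ := hM
  have hbj := h1 _ hj
  dsimp only at hbj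
  have hhi : ∀ p ∈ M.filter (fun p => ¬ p.2 ≤ j), j < p.1 := by
    intro p hp
    rw [Finset.mem_filter] at hp
    obtain ⟨hpM, hp2⟩ := hp
    have hb := h1 p hpM
    have hne : p ≠ (1, j) := by
      intro hc; rw [hc] at hp2; dsimp only at hp2; omega
    have hd := h2 p hpM (1,j) hj hne
    dsimp only at hd
    have hx := h3 (1,j) hj p hpM
    dsimp only at hx
    omega
  have hM₁ : M.filter (fun p => p.2 ≤ j) ∈ CCF lam r j := by
    rw [mem_CCF]
    refine ⟨⟨?_, ?_, ?_, ?_⟩, Finset.mem_filter.mpr ⟨hj, by dsimp only; omega⟩⟩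
    · intro p hp
      rw [Finset.mem_filter] at hp
      have := h1 p hp.1
      have := hp.2
      omega
    · intro p hp q hq hne
      exact h2 p (Finset.mem_of_mem_filter p hp) q (Finset.mem_of_mem_filter q hq) hne
    · intro p hp q hq
      exact h3 p (Finset.mem_of_mem_filter p hp) q (Finset.mem_of_mem_filter q hq)
    · intro p hp hnot t ht
      rw [Finset.mem_filter] at hp
      obtain ⟨hpM, hp2⟩ := hp
      have hb := h1 p hpM
      have houter : (p.1 - 1, p.2 + 1) ∉ M := by
        intro hc
        have h2j : ¬ (p.2 + 1 ≤ j) := by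
          intro hle
          exact hnot (Finset.mem_filter.mpr ⟨hc, by dsimp only; omega⟩)
        -- so p.2 = j and (p.1 - 1, j + 1) ∈ M
        have hbp2 : p.2 = j := by omega
        have hbc := h1 _ hc
        dsimp only at hbc
        -- p.1 ≥ 2 since 1 ≤ p.1 - 1
        have hne2 : (p.1 - 1, p.2 + 1) ≠ (1, j) := by
          rw [Ne, Prod.ext_iff]; dsimp only; omega
        have hd := h2 _ hc (1,j) hj hne2
        dsimp only at hd
        have hx := h3 (1,j) hj _ hc
        dsimp only at hx
        omega
      have hin := h4 p hpM houter t ht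
      have hbt := h1 _ hin
      dsimp only at hbt
      refine Finset.mem_filter.mpr ⟨hin, by dsimp only; omega⟩
  have hM₂can : IsCanSecStr N lam r (M.filter (fun p => ¬ p.2 ≤ j)) := by
    refine ⟨?_, ?_, ?_, ?_⟩
    · intro p hp; exact h1 p (Finset.mem_of_mem_filter p hp)
    · intro p hp q hq hne
      exact h2 p (Finset.mem_of_mem_filter p hp) q (Finset.mem_of_mem_filter q hq) hne
    · intro p hp q hq
      exact h3 p (Finset.mem_of_mem_filter p hp) q (Finset.mem_of_mem_filter q hq)
    · intro p hp hnot t ht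
      have hpj := hhi p hp
      rw [Finset.mem_filter] at hp
      obtain ⟨hpM, hp2⟩ := hp
      have hb := h1 p hpM
      have houter : (p.1 - 1, p.2 + 1) ∉ M := by
        intro hc
        exact hnot (Finset.mem_filter.mpr ⟨hc, by dsimp only at hp2 ⊢; omega⟩)
      have hin := h4 p hpM houter t ht
      have hbt := h1 _ hin
      dsimp only at hbt
      refine Finset.mem_filter.mpr ⟨hin, by dsimp only; omega⟩
  obtain ⟨M', hM'eq, hM'lo⟩ := exists_shfu (k := j) (M := M.filter (fun p => ¬ p.2 ≤ j)) (by
    intro p hp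
    have h5 := hhi p hp
    rw [Finset.mem_filter] at hp
    exact ⟨h5, by omega⟩)
  have hM'img : (M.filter (fun p => ¬ p.2 ≤ j)).image (fun p => (p.1 - j, p.2 - j)) = M' := by
    rw [hM'eq, unshift_shfu]
  rw [hM'img]
  have hM'can : IsCanSecStr (N - j) lam r M' := by
    apply isCan_of_shfu hM'lo (k := j)
    rw [← hM'eq]
    have : N - j + j = N := by omega
    rw [this]
    exact hM₂can
  refine ⟨hM₁, mem_SS.mpr hM'can, ?_, by omega, by omega⟩
  rw [← hM'eq]
  exact Finset.filter_union_filter_not_eq _ M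

lemma K1 (lam r : ℕ) (hlam : 1 ≤ lam) (hr : 1 ≤ r) (n : ℕ) :
    Tw lam r (n+1) = Tw lam r n + ∑ j ∈ Finset.range (n+2), Uw lam r j * Tw lam r (n+1-j) := by
  have hsplit := Finset.sum_filter_add_sum_filter_not (SS lam r (n+1))
    (fun M => ∃ p ∈ M, p.1 = 1) (fun M => (Polynomial.X : Polynomial ℚ) ^ M.card)
  have hNotP : ∑ M ∈ (SS lam r (n+1)).filter (fun M => ¬ ∃ p ∈ M, p.1 = 1),
      (Polynomial.X : Polynomial ℚ) ^ M.card = Tw lam r n := by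
    rw [Tw]
    refine Finset.sum_nbij' (i := fun M => M.image (fun p => (p.1 - 1, p.2 - 1)))
      (j := fun M => shfu 1 M) ?_ ?_ ?_ ?_ ?_
    · intro M hM
      rw [Finset.mem_filter] at hM
      obtain ⟨hSS, hnP⟩ := hM
      push_neg at hnP
      have hlo : ∀ p ∈ M, 1 < p.1 ∧ 1 < p.2 := by
        intro p hp
        have hb := (mem_SS.mp hSS).1 p hp
        have := hnP p hp
        omega
      obtain ⟨M', hM'eq, hM'lo⟩ := exists_shfu hlo
      have hM'img : M.image (fun p => (p.1 - 1, p.2 - 1)) = M' := by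
        rw [hM'eq, unshift_shfu]
      show M.image (fun p => (p.1 - 1, p.2 - 1)) ∈ SS lam r n
      rw [hM'img]
      apply mem_SS.mpr
      apply isCan_of_shfu hM'lo (k := 1)
      rw [← hM'eq]
      exact mem_SS.mp hSS
    · intro M hM
      rw [Finset.mem_filter]
      constructor
      · exact mem_SS.mpr (isCan_shfu (mem_SS.mp hM))
      · rintro ⟨q, hq, hq1⟩
        obtain ⟨p, hp, e1, e2⟩ := mem_shfu.mp hq
        have := (mem_SS.mp hM).1 p hp
        omega
    · intro M hM
      rw [Finset.mem_filter] at hM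
      obtain ⟨hSS, hnP⟩ := hM
      push_neg at hnP
      have hlo : ∀ p ∈ M, 1 < p.1 ∧ 1 < p.2 := by
        intro p hp
        have hb := (mem_SS.mp hSS).1 p hp
        have := hnP p hp
        omega
      obtain ⟨M', hM'eq, hM'lo⟩ := exists_shfu hlo
      have hM'img : M.image (fun p => (p.1 - 1, p.2 - 1)) = M' := by
        rw [hM'eq, unshift_shfu]
      show shfu 1 (M.image (fun p => (p.1 - 1, p.2 - 1))) = M
      rw [hM'img, ← hM'eq]
    · intro M _
      show (shfu 1 M).image (fun p => (p.1 - 1, p.2 - 1)) = M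
      rw [unshift_shfu]
    · intro M hM
      rw [Finset.mem_filter] at hM
      obtain ⟨hSS, hnP⟩ := hM
      congr 1
      refine (Finset.card_image_of_injOn ?_).symm
      intro p hp q hq hpq
      rw [Prod.ext_iff] at hpq
      dsimp only at hpq
      have hbp := (mem_SS.mp hSS).1 p hp
      have hbq := (mem_SS.mp hSS).1 q hq
      rw [Prod.ext_iff]
      omega
  have hP : ∑ M ∈ (SS lam r (n+1)).filter (fun M => ∃ p ∈ M, p.1 = 1),
      (Polynomial.X : Polynomial ℚ) ^ M.card
      = ∑ j ∈ Finset.range (n+2), Uw lam r j * Tw lam r (n+1-j) := by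
    have hc : ∀ j ∈ Finset.range (n+2), Uw lam r j * Tw lam r (n+1-j)
        = ∑ x ∈ CCF lam r j ×ˢ SS lam r (n+1-j),
            (Polynomial.X : Polynomial ℚ) ^ x.1.card * Polynomial.X ^ x.2.card := by
      intro j _
      rw [Uw, Tw, Finset.sum_mul_sum, Finset.sum_product]
    rw [Finset.sum_congr rfl hc, Finset.sum_sigma']
    symm
    refine Finset.sum_nbij' (i := fun x => x.2.1 ∪ shfu x.1 x.2.2)
      (j := fun M => ⟨jOf M, (M.filter (fun p => p.2 ≤ jOf M),
        (M.filter (fun p => ¬ p.2 ≤ jOf M)).image (fun p => (p.1 - jOf M, p.2 - jOf M)))⟩)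
      ?_ ?_ ?_ ?_ ?_
    · rintro ⟨j, M₁, M₂⟩ hx
      rw [Finset.mem_sigma, Finset.mem_product] at hx
      dsimp only at hx
      obtain ⟨hjr, hM₁, hM₂⟩ := hx
      rw [Finset.mem_range] at hjr
      have hmg := merge_SS hlam hM₁ hM₂
      have hboard : j + (n+1-j) = n+1 := by omega
      rw [hboard] at hmg
      dsimp only
      rw [Finset.mem_filter]
      exact ⟨hmg.1, (1, j), hmg.2.1, rfl⟩
    · intro M hM
      rw [Finset.mem_filter] at hM
      obtain ⟨hSS, p, hpM, hp1⟩ := hM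
      have hpj : (1, p.2) ∈ M := by
        have hpe : p = (1, p.2) := by rw [Prod.ext_iff]; exact ⟨hp1, rfl⟩
        rwa [← hpe]
      have hjof : jOf M = p.2 := jOf_eq (mem_SS.mp hSS) hpj
      have hsp := split_SS hlam hSS hpj
      have hb := (mem_SS.mp hSS).1 _ hpj
      dsimp only at hb
      rw [Finset.mem_sigma, Finset.mem_product]
      dsimp only
      rw [hjof]
      refine ⟨Finset.mem_range.mpr (by omega), hsp.1, hsp.2.1⟩
    · rintro ⟨j, M₁, M₂⟩ hx
      rw [Finset.mem_sigma, Finset.mem_product] at hx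
      dsimp only at hx
      obtain ⟨hjr, hM₁, hM₂⟩ := hx
      rw [Finset.mem_range] at hjr
      have hmg := merge_SS hlam hM₁ hM₂
      have hboard : j + (n+1-j) = n+1 := by omega
      rw [hboard] at hmg
      have hjof : jOf (M₁ ∪ shfu j M₂) = j := jOf_eq (mem_SS.mp hmg.1) hmg.2.1
      have hb₁ : ∀ q ∈ M₁, q.2 ≤ j := fun q hq => ((mem_CCF.mp hM₁).1.1 q hq).2.2
      have hb₂ : ∀ q ∈ shfu j M₂, ¬ q.2 ≤ j := by
        intro q hq
        obtain ⟨p, hp, e1, e2⟩ := mem_shfu.mp hq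
        have := (mem_SS.mp hM₂).1 p hp
        omega
      have hfilt1 : (M₁ ∪ shfu j M₂).filter (fun p => p.2 ≤ j) = M₁ := by
        ext q
        rw [Finset.mem_filter, Finset.mem_union]
        constructor
        · rintro ⟨hq | hq, hq2⟩
          · exact hq
          · exact absurd hq2 (hb₂ q hq)
        · intro hq
          exact ⟨Or.inl hq, hb₁ q hq⟩
      have hfilt2 : (M₁ ∪ shfu j M₂).filter (fun p => ¬ p.2 ≤ j) = shfu j M₂ := by
        ext q
        rw [Finset.mem_filter, Finset.mem_union]
        constructor
        · rintro ⟨hq | hq, hq2⟩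
          · exact absurd (hb₁ q hq) hq2
          · exact hq
        · intro hq
          exact ⟨Or.inr hq, hb₂ q hq⟩
      dsimp only
      rw [hjof, hfilt1, hfilt2, unshift_shfu]
    · intro M hM
      rw [Finset.mem_filter] at hM
      obtain ⟨hSS, p, hpM, hp1⟩ := hM
      have hpj : (1, p.2) ∈ M := by
        have hpe : p = (1, p.2) := by rw [Prod.ext_iff]; exact ⟨hp1, rfl⟩
        rwa [← hpe]
      have hjof : jOf M = p.2 := jOf_eq (mem_SS.mp hSS) hpj
      have hsp := split_SS hlam hSS hpj
      dsimp only
      rw [hjof]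
      exact hsp.2.2.1
    · rintro ⟨j, M₁, M₂⟩ hx
      rw [Finset.mem_sigma, Finset.mem_product] at hx
      dsimp only at hx
      obtain ⟨hjr, hM₁, hM₂⟩ := hx
      have hmg := merge_SS hlam hM₁ hM₂
      dsimp only
      rw [hmg.2.2, pow_add]
  rw [Tw, ← hsplit, hNotP, hP]
  ring

lemma K2 (lam r : ℕ) (hlam : 1 ≤ lam) (hr : 1 ≤ r) (n : ℕ) :
    Uw lam r (n+2) = Polynomial.X * Uw lam r n + Vw lam r (n+2) := by
  rw [Uw, Vw, EEF, Uw]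
  rw [← Finset.sum_filter_add_sum_filter_not (CCF lam r (n+2)) (fun M => (1+r, n+2-r) ∈ M)]
  congr 1
  rw [Finset.mul_sum]
  symm
  refine Finset.sum_nbij' (i := fun M' => insert (1, n+2) (shfu 1 M'))
    (j := fun M => (M.erase (1, n+2)).image (fun p => (p.1-1, p.2-1))) ?_ ?_ ?_ ?_ ?_
  · intro M' hM'
    have hw := wrap_CCF hr hM'
    exact Finset.mem_filter.mpr ⟨hw.1, hw.2.1⟩
  · intro M hM
    rw [Finset.mem_filter] at hM
    exact (unwrap_CCF hr hM.1 hM.2).1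
  · intro M' hM'
    have hnotmem : (1, n+2) ∉ shfu 1 M' := by
      intro hc
      obtain ⟨p, hp, e1, e2⟩ := mem_shfu.mp hc
      have := (mem_CCF.mp hM').1.1 p hp
      dsimp only at e1 e2
      omega
    show Finset.image _ ((insert (1, n + 2) (shfu 1 M')).erase (1, n+2)) = M'
    rw [Finset.erase_insert hnotmem, unshift_shfu]
  · intro M hM
    rw [Finset.mem_filter] at hM
    exact (unwrap_CCF hr hM.1 hM.2).2
  · intro M' hM'
    rw [(wrap_CCF hr hM').2.2, pow_succ]
    ring

def stk (r N : ℕ) : Finset (ℕ × ℕ) := (Finset.range r).image (fun t => (1+t, N-t))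

lemma mem_stk {r N : ℕ} {q : ℕ × ℕ} :
    q ∈ stk r N ↔ ∃ t < r, 1 + t = q.1 ∧ N - t = q.2 := by
  simp [stk, Finset.mem_image, Prod.ext_iff]

lemma card_stk (r N : ℕ) : (stk r N).card = r := by
  rw [stk, Finset.card_image_of_injOn, Finset.card_range]
  intro t _ t' _ h
  rw [Prod.ext_iff] at h; dsimp only at h; omega

lemma SS_small {lam r n : ℕ} (hn : n ≤ lam) : SS lam r n = {∅} := by
  ext M
  simp only [mem_SS, Finset.mem_singleton]
  constructor
  · intro h
    apply Finset.eq_empty_of_forall_notMem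
    intro p hp
    have := h.1 p hp; omega
  · rintro rfl; exact isCan_empty _ _ _

lemma stackwrap {lam r n : ℕ} {M : Finset (ℕ × ℕ)} (hlam : 1 ≤ lam) (hr : 1 ≤ r)
    (hbig : lam ≤ n + 1) (hM : M ∈ SS lam r n) (hns : (1, n) ∉ M) :
    (stk r (n+2*r) ∪ shfu r M) ∈ EEF lam r (n+2*r) ∧
    (stk r (n+2*r) ∪ shfu r M).card = M.card + r := by
  rw [mem_SS] at hM
  obtain ⟨h1, h2, h3, h4⟩ := hM
  set N := n + 2*r with hN
  have hW : ∀ q : ℕ × ℕ, q ∈ stk r N ∪ shfu r M ↔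
      (∃ t < r, 1 + t = q.1 ∧ N - t = q.2) ∨ ∃ p ∈ M, p.1 + r = q.1 ∧ p.2 + r = q.2 := by
    intro q; simp [Finset.mem_union, mem_stk, mem_shfu]
  have hcan : IsCanSecStr N lam r (stk r N ∪ shfu r M) := by
    refine ⟨?_, ?_, ?_, ?_⟩
    · intro q hq
      rcases (hW q).mp hq with ⟨t, ht, e1, e2⟩ | ⟨p, hp, e1, e2⟩
      · omega
      · have := h1 p hp; omega
    · intro q hq q' hq' hne
      rcases (hW q).mp hq with ⟨t, ht, e1, e2⟩ | ⟨p, hp, e1, e2⟩ <;>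
        rcases (hW q').mp hq' with ⟨t', ht', e1', e2'⟩ | ⟨p', hp', e1', e2'⟩
      · have htt : t ≠ t' := by rintro rfl; exact hne (by rw [Prod.ext_iff]; omega)
        omega
      · have := h1 p' hp'; omega
      · have := h1 p hp; omega
      · have hpp : p ≠ p' := by rintro rfl; exact hne (by rw [Prod.ext_iff]; omega)
        have := h2 p hp p' hp' hpp; omega
    · intro q hq q' hq'
      rcases (hW q).mp hq with ⟨t, ht, e1, e2⟩ | ⟨p, hp, e1, e2⟩ <;>
        rcases (hW q').mp hq' with ⟨t', ht', e1', e2'⟩ | ⟨p', hp', e1', e2'⟩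
      · omega
      · have := h1 p' hp'; omega
      · have := h1 p hp; omega
      · have := h3 p hp p' hp'; have := h1 p hp; have := h1 p' hp'; omega
    · intro q hq hnot t ht
      rcases (hW q).mp hq with ⟨u, hu, e1, e2⟩ | ⟨p, hp, e1, e2⟩
      · rcases Nat.eq_zero_or_pos u with rfl | hupos
        · refine (hW _).mpr (Or.inl ⟨t, ht, by omega, by omega⟩)
        · exact absurd ((hW _).mpr (Or.inl ⟨u - 1, by omega, by omega, by omega⟩)) hnot
      · have hpn : (p.1 - 1, p.2 + 1) ∉ M := by
          intro hc
          have hbc := h1 _ hc; dsimp only at hbc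
          exact hnot ((hW _).mpr (Or.inr ⟨_, hc, by dsimp only; omega, by dsimp only; omega⟩))
        have hin := h4 p hp hpn t ht
        have hbt := h1 _ hin; dsimp only at hbt
        have hbp := h1 p hp
        exact (hW _).mpr (Or.inr ⟨_, hin, by dsimp only; omega, by dsimp only; omega⟩)
  have htop : (1, N) ∈ stk r N ∪ shfu r M :=
    (hW _).mpr (Or.inl ⟨0, by omega, by omega, by omega⟩)
  have hnr : (1 + r, N - r) ∉ stk r N ∪ shfu r M := by
    intro hc
    rcases (hW _).mp hc with ⟨t, ht, e1, e2⟩ | ⟨p, hp, e1, e2⟩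
    · omega
    · have hb := h1 p hp
      apply hns
      have : p = (1, n) := by rw [Prod.ext_iff]; dsimp only at e1 e2 ⊢; omega
      rwa [this] at hp
  have hdisj : Disjoint (stk r N) (shfu r M) := by
    rw [Finset.disjoint_left]
    intro q hq hq'
    obtain ⟨t, ht, e1, e2⟩ := mem_stk.mp hq
    obtain ⟨p, hp, f1, f2⟩ := mem_shfu.mp hq'
    have := h1 p hp; omega
  constructor
  · rw [EEF, Finset.mem_filter, mem_CCF]
    exact ⟨⟨hcan, htop⟩, hnr⟩
  · rw [Finset.card_union_of_disjoint hdisj, card_stk, card_shfu]; omega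

lemma stackunwrap {lam r n : ℕ} {M : Finset (ℕ × ℕ)} (hlam : 1 ≤ lam) (hr : 1 ≤ r)
    (hM : M ∈ EEF lam r (n+2*r)) :
    ((M.filter (fun p => r < p.1)).image (fun p => (p.1-r, p.2-r))) ∈ SS lam r n ∧
    (1, n) ∉ ((M.filter (fun p => r < p.1)).image (fun p => (p.1-r, p.2-r))) ∧
    stk r (n+2*r) ∪ shfu r ((M.filter (fun p => r < p.1)).image (fun p => (p.1-r, p.2-r))) = M := by
  rw [EEF, Finset.mem_filter, mem_CCF] at hM
  obtain ⟨⟨⟨h1, h2, h3, h4⟩, htop⟩, hnr⟩ := hM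
  set N := n + 2*r with hN
  have hstkM : ∀ u < r, (1 + u, N - u) ∈ M := by
    have := h4 (1, N) htop (by
      dsimp only
      intro hc; have := h1 _ hc; dsimp only at this; omega)
    dsimp only at this; exact this
  have aux : ∀ t, t ≤ r → ∀ q ∈ M, (∀ u, u < t → q ≠ (1+u, N-u)) → t < q.1 ∧ q.2 + t ≤ N := by
    intro t
    induction t with
    | zero => intro _ q hq _; have := h1 q hq; omega
    | succ t ih =>
      intro htr q hq hne
      have hIH := ih (by omega) q hq (fun u hu => hne u (by omega))
      have hs := hstkM t (by omega)
      have hd := h2 q hq _ hs (hne t (by omega))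
      dsimp only at hd
      omega
  have hclaim : ∀ q ∈ M, ¬ (r < q.1) → ∃ t < r, q = (1+t, N-t) := by
    intro q hq hq1
    by_contra hcon
    push_neg at hcon
    have := aux r le_rfl q hq (fun u hu => hcon u hu)
    omega
  -- the two filters
  have hfilt : M.filter (fun p => ¬ r < p.1) = stk r N := by
    ext q
    rw [Finset.mem_filter, mem_stk]
    constructor
    · rintro ⟨hq, hq1⟩
      obtain ⟨t, ht, heq⟩ := hclaim q hq hq1
      exact ⟨t, ht, by rw [heq], by rw [heq]⟩
    · rintro ⟨t, ht, e1, e2⟩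
      have hm := hstkM t ht
      have : (1+t, N-t) = q := by rw [Prod.ext_iff]; dsimp only; omega
      rw [this] at hm
      refine ⟨hm, by omega⟩
  have hM2can : IsCanSecStr N lam r (M.filter (fun p => r < p.1)) := by
    refine ⟨?_, ?_, ?_, ?_⟩
    · intro p hp; exact h1 p (Finset.mem_of_mem_filter p hp)
    · intro p hp q hq hne
      exact h2 p (Finset.mem_of_mem_filter p hp) q (Finset.mem_of_mem_filter q hq) hne
    · intro p hp q hq
      exact h3 p (Finset.mem_of_mem_filter p hp) q (Finset.mem_of_mem_filter q hq)
    · intro q hq hnot t ht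
      rw [Finset.mem_filter] at hq
      obtain ⟨hqM, hq1⟩ := hq
      have houter : (q.1 - 1, q.2 + 1) ∉ M := by
        intro hc
        rcases Nat.lt_or_ge r (q.1 - 1) with hgt | hle
        · exact hnot (Finset.mem_filter.mpr ⟨hc, by dsimp only; omega⟩)
        · -- q.1 = r + 1 and (r, q.2+1) is a stack arc, forcing q = (1+r, N-r) ∉ M
          obtain ⟨u, hu, heq⟩ := hclaim _ hc (by dsimp only; omega)
          rw [Prod.ext_iff] at heq; dsimp only at heq
          have hqb := h1 q hqM
          have : q = (1 + r, N - r) := by rw [Prod.ext_iff]; omega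
          rw [this] at hqM
          exact hnr hqM
      have hin := h4 q hqM houter t ht
      have hb := h1 _ hin; dsimp only at hb
      refine Finset.mem_filter.mpr ⟨hin, by dsimp only; omega⟩
  obtain ⟨M', hM'eq, hM'lo⟩ := exists_shfu (k := r) (M := M.filter (fun p => r < p.1)) (by
    intro p hp
    rw [Finset.mem_filter] at hp
    have := h1 p hp.1
    exact ⟨hp.2, by omega⟩)
  have hM'img : (M.filter (fun p => r < p.1)).image (fun p => (p.1-r, p.2-r)) = M' := by
    rw [hM'eq, unshift_shfu]
  have hM2b : ∀ q ∈ M.filter (fun p => r < p.1), q.2 + r ≤ N := by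
    intro q hq
    rw [Finset.mem_filter] at hq
    have := aux r le_rfl q hq.1 (fun u hu hqe => by
      rw [hqe] at hq
      exact absurd hq.2 (by dsimp only; omega))
    omega
  have hM'can : IsCanSecStr n lam r M' := by
    have h0 : IsCanSecStr ((n+r) + r) lam r (shfu r M') := by
      rw [← hM'eq]
      have : (n+r)+r = N := by omega
      rw [this]
      exact hM2can
    have h0' := isCan_of_shfu hM'lo h0
    apply isCan_shrink h0'
    intro p hp
    have : (p.1 + r, p.2 + r) ∈ M.filter (fun p => r < p.1) := by
      rw [hM'eq]; exact mem_shfu.mpr ⟨p, hp, rfl, rfl⟩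
    have := hM2b _ this
    dsimp only at this
    omega
  have hns : (1, n) ∉ M' := by
    intro hc
    apply hnr
    have : ((1:ℕ) + r, n + r) ∈ shfu r M' := mem_shfu.mpr ⟨_, hc, rfl, rfl⟩
    rw [← hM'eq] at this
    have h5 := Finset.mem_of_mem_filter _ this
    have : (1 + r, n + r) = ((1:ℕ) + r, N - r) := by rw [Prod.ext_iff]; dsimp only; omega
    rwa [this] at h5
  rw [hM'img]
  refine ⟨mem_SS.mpr hM'can, hns, ?_⟩
  rw [← hM'eq, ← hfilt]
  rw [Finset.union_comm]
  exact Finset.filter_union_filter_not_eq _ M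

lemma K3 (lam r : ℕ) (hlam : 1 ≤ lam) (hr : 1 ≤ r) (n : ℕ) :
    Vw lam r (n+2*r) = Polynomial.X ^ r *
      (Tw lam r n - Uw lam r n - (if n + 2 ≤ lam then 1 else 0)) := by
  rcases le_or_gt (n+2) lam with hsmall | hbig
  · rw [if_pos hsmall]
    have hE : EEF lam r (n+2*r) = ∅ := by
      rw [EEF, CC_small' lam r (n+2*r) hr (by omega)]
      rfl
    rw [Vw, hE, Finset.sum_empty, Tw, SS_small (by omega : n ≤ lam), Uw,
      CC_small lam r n (by omega), Finset.sum_empty, Finset.sum_singleton,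
      Finset.card_empty, pow_zero]
    ring
  · rw [if_neg (by omega)]
    have key := Finset.sum_filter_add_sum_filter_not (SS lam r n) (fun M => (1,n) ∈ M)
      (fun M => (Polynomial.X : Polynomial ℚ) ^ M.card)
    have hTw : Tw lam r n = Uw lam r n
        + ∑ M ∈ (SS lam r n).filter (fun M => (1,n) ∉ M), Polynomial.X ^ M.card := by
      rw [Tw, Uw, ← key]
      rfl
    rw [hTw, show Uw lam r n
        + (∑ M ∈ (SS lam r n).filter (fun M => (1,n) ∉ M), (Polynomial.X:Polynomial ℚ) ^ M.card)
        - Uw lam r n - 0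
        = ∑ M ∈ (SS lam r n).filter (fun M => (1,n) ∉ M), Polynomial.X ^ M.card by ring,
      Finset.mul_sum, Vw]
    symm
    refine Finset.sum_nbij' (i := fun M => stk r (n+2*r) ∪ shfu r M)
      (j := fun M => (M.filter (fun p => r < p.1)).image (fun p => (p.1-r, p.2-r))) ?_ ?_ ?_ ?_ ?_
    · intro M hM
      rw [Finset.mem_filter] at hM
      exact (stackwrap hlam hr (by omega) hM.1 hM.2).1
    · intro M hM
      have h := stackunwrap hlam hr (M := M) hM
      exact Finset.mem_filter.mpr ⟨h.1, h.2.1⟩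
    · intro M hM
      rw [Finset.mem_filter] at hM
      have hb1 := (mem_SS.mp hM.1).1
      show ((stk r (n+2*r) ∪ shfu r M).filter (fun p => r < p.1)).image (fun p => (p.1-r, p.2-r)) = M
      have hfu : (stk r (n+2*r) ∪ shfu r M).filter (fun p => r < p.1) = shfu r M := by
        rw [Finset.filter_union]
        have e1 : (stk r (n+2*r)).filter (fun p => r < p.1) = ∅ := by
          apply Finset.filter_false_of_mem
          intro q hq
          obtain ⟨t, ht, f1, f2⟩ := mem_stk.mp hq
          omega
        have e2 : (shfu r M).filter (fun p => r < p.1) = shfu r M := by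
          apply Finset.filter_true_of_mem
          intro q hq
          obtain ⟨p, hp, f1, f2⟩ := mem_shfu.mp hq
          have := hb1 p hp
          omega
        rw [e1, e2, Finset.empty_union]
      rw [hfu, unshift_shfu]
    · intro M hM
      exact (stackunwrap hlam hr (M := M) hM).2.2
    · intro M hM
      rw [Finset.mem_filter] at hM
      rw [(stackwrap hlam hr (by omega) hM.1 hM.2).2, pow_add]
      ring

lemma coeff_xxy_pow_mul (k m : ℕ) (f : PowerSeries (Polynomial ℚ)) :
    (PowerSeries.coeff m) (xxy ^ k * f) =
      if 2*k ≤ m then Polynomial.X ^ k * (PowerSeries.coeff (m - 2*k)) f else 0 := by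
  have : xxy ^ k * f = (PowerSeries.C (Polynomial.X ^ k)) * f * PowerSeries.X ^ (2*k) := by
    rw [xxy, mul_pow, ← pow_mul, map_pow]; ring
  rw [this, PowerSeries.coeff_mul_X_pow', PowerSeries.coeff_C_mul]

lemma coeff_Pser (lam m : ℕ) :
    (PowerSeries.coeff m) (Pser lam) = if m + 2 ≤ lam then 1 else 0 := by
  rw [Pser, map_sum]
  simp only [PowerSeries.coeff_X_pow]
  rw [Finset.sum_ite_eq (Finset.range (lam - 1)) m (fun _ => (1 : Polynomial ℚ))]
  simp only [Finset.mem_range]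
  split <;> split <;> first | rfl | omega

lemma I1 (lam r : ℕ) (hlam : 1 ≤ lam) (hr : 1 ≤ r) :
    Sgf lam r = 1 + PowerSeries.X * Sgf lam r + Cgf lam r * Sgf lam r := by
  refine PowerSeries.ext fun n => ?_
  cases n with
  | zero =>
    have hC : PowerSeries.constantCoeff (Cgf lam r) = 0 := by
      rw [← PowerSeries.coeff_zero_eq_constantCoeff, coeff_Cgf, Uw_zero]
    simp [PowerSeries.coeff_mul, Finset.Nat.antidiagonal_zero, coeff_Sgf, coeff_Cgf, Tw_zero,
      Uw_zero, hC]
  | succ n =>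
    rw [map_add, map_add, PowerSeries.coeff_succ_X_mul, PowerSeries.coeff_mul,
      Finset.Nat.sum_antidiagonal_eq_sum_range_succ_mk]
    simp only [coeff_Cgf, coeff_Sgf]
    rw [K1 lam r hlam hr n, PowerSeries.coeff_one]
    simp only [Nat.succ_ne_zero, if_false]
    ring

lemma I2 (lam r : ℕ) (hlam : 1 ≤ lam) (hr : 1 ≤ r) :
    Cgf lam r + xxy ^ r * Cgf lam r + xxy ^ r * Pser lam
      = xxy * Cgf lam r + xxy ^ r * Sgf lam r := by
  refine PowerSeries.ext fun m => ?_
  rw [show xxy * Cgf lam r = xxy ^ 1 * Cgf lam r by rw [pow_one]]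
  rw [map_add, map_add, map_add, coeff_xxy_pow_mul, coeff_xxy_pow_mul,
    coeff_xxy_pow_mul, coeff_xxy_pow_mul, coeff_Cgf, coeff_Cgf, coeff_Cgf, coeff_Sgf,
    coeff_Pser]
  rcases lt_or_ge m 2 with hm | hm
  · have h2r : ¬ (2*r ≤ m) := by omega
    have h21 : ¬ (2*1 ≤ m) := by omega
    simp only [if_neg h2r, if_neg h21]
    rw [K4 lam r hlam hr m (by omega)]
    ring
  · rcases lt_or_ge m (2*r) with hm2 | hm2
    · have h21 : (2*1 ≤ m) := by omega
      simp only [if_neg (show ¬ 2*r ≤ m by omega), if_pos h21]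
      rw [K4 lam r hlam hr m (by omega), K4 lam r hlam hr (m - 2*1) (by omega)]
      try ring
    · have h21 : (2*1 ≤ m) := by omega
      simp only [if_pos hm2, if_pos h21]
      have hK2 : Uw lam r m = Polynomial.X * Uw lam r (m - 2) + Vw lam r m := by
        have h2 := K2 lam r hlam hr (m - 2)
        rw [show m - 2 + 2 = m by omega] at h2
        exact h2
      have hK3 : Vw lam r m = Polynomial.X ^ r *
          (Tw lam r (m - 2*r) - Uw lam r (m - 2*r) - (if (m - 2*r) + 2 ≤ lam then 1 else 0)) := by
        have h3 := K3 lam r hlam hr (m - 2*r)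
        rw [show m - 2*r + 2*r = m by omega] at h3
        exact h3
      rw [hK2, hK3, show m - 2*1 = m - 2 from rfl]
      ring

end

/-- The generating function of `r`-canonical secondary structures with minimum arc-length `λ`
satisfies `(x²y)^r·S(x,y)² − B(x,y)·S(x,y) + A(x,y) = 0`. -/
theorem Sgf_functional_equation (lam r : ℕ) (hlam : 1 ≤ lam) (hr : 1 ≤ r) :
    xxy ^ r * (Sgf lam r) ^ 2 - Bgf lam r * Sgf lam r + Agf r = 0 := by
  have h1 := I1 lam r hlam hr
  have h2 := I2 lam r hlam hr
  rw [Bgf, Agf]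
  rw [show (∑ i ∈ Finset.range (lam - 1), PowerSeries.X ^ i : PowerSeries (Polynomial ℚ)) = Pser lam from rfl]
  linear_combination (-(1 - xxy + xxy ^ r : PowerSeries (Polynomial ℚ))) * h1 - Sgf lam r * h2
end
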